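/- arXiv:1912.01388 — 7 statements merged into one kernel-verified Lean document; each statement's English description precedes it below -/
import Mathlib

section
/- Let X be a real-valued random variable and U a random variable uniformly distributed on [0,1] and independent of X. Then the distributional transform T_X(X,U) is uniformly distributed on [0,1], i.e., the pushforward of the law of (X,U) under the map (x,u) ↦ P(X < x) + u·P(X = x) is the uniform distribution (Lebesgue measure restricted to [0,1]). -/
open MeasureTheory ProbabilityTheory Set Filter

/-- The distributional transform kernel `T_X(x,u) = P(X < x) + u * P(X = x)`. -/
noncomputable def distTransform {Ω : Type*} [MeasurableSpace Ω] (P : Measure Ω)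
    (X : Ω → ℝ) (x u : ℝ) : ℝ :=
  (P {ω | X ω < x}).toReal + u * (P {ω | X ω = x}).toReal

open scoped ENNReal Topology

namespace DTAux

noncomputable def nu : Measure ℝ := volume.restrict (Icc (0:ℝ) 1)

lemma nu_Iic (c : ℝ) : nu (Iic c) = ENNReal.ofReal (min c 1) := by
  rw [nu, Measure.restrict_apply measurableSet_Iic]
  have h : Iic c ∩ Icc (0:ℝ) 1 = Icc 0 (min c 1) := by
    ext x
    simp only [mem_inter_iff, mem_Iic, mem_Icc, le_min_iff]
    tauto
  rw [h, Real.volume_Icc, sub_zero]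

instance : IsProbabilityMeasure nu :=
  ⟨by rw [nu, Measure.restrict_apply_univ, Real.volume_Icc]; norm_num⟩

variable (μ : Measure ℝ)

/-- `F` is the cdf. -/
noncomputable def F (x : ℝ) : ℝ := (μ (Iic x)).toReal
/-- `Fm` is the left limit of the cdf. -/
noncomputable def Fm (x : ℝ) : ℝ := (μ (Iio x)).toReal
/-- `pt x` is the mass of the atom at `x`. -/
noncomputable def pt (x : ℝ) : ℝ := (μ ({x} : Set ℝ)).toReal

variable [IsProbabilityMeasure μ]

lemma F_eq_cdf (x : ℝ) : F μ x = cdf μ x := (cdf_eq_real μ x).symm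

lemma F_mono : Monotone (F μ) := fun a b hab =>
  ENNReal.toReal_mono (measure_ne_top _ _) (measure_mono (Iic_subset_Iic.mpr hab))

lemma Fm_mono : Monotone (Fm μ) := fun a b hab =>
  ENNReal.toReal_mono (measure_ne_top _ _) (measure_mono (Iio_subset_Iio hab))

lemma Fm_nonneg (x : ℝ) : 0 ≤ Fm μ x := ENNReal.toReal_nonneg
lemma pt_nonneg (x : ℝ) : 0 ≤ pt μ x := ENNReal.toReal_nonneg

lemma F_eq_add (x : ℝ) : F μ x = Fm μ x + pt μ x := by
  have h : μ (Iic x) = μ (Iio x) + μ {x} := by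
    rw [← Iio_union_right, measure_union (by simp) (measurableSet_singleton x)]
  rw [F, h, ENNReal.toReal_add (measure_ne_top _ _) (measure_ne_top _ _)]; rfl

lemma Fm_le_F (x : ℝ) : Fm μ x ≤ F μ x := by
  rw [F_eq_add]; linarith [pt_nonneg μ x]

lemma F_le_one (x : ℝ) : F μ x ≤ 1 := by rw [F_eq_cdf]; exact cdf_le_one μ x

lemma measurable_Fm : Measurable (Fm μ) := (Fm_mono μ).measurable

lemma measurable_pt : Measurable (pt μ) := by
  have h : pt μ = fun x => F μ x - Fm μ x := by
    funext x; rw [F_eq_add]; ring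
  rw [h]
  exact ((F_mono μ).measurable).sub (measurable_Fm μ)

lemma ofReal_F (x : ℝ) : ENNReal.ofReal (F μ x) = μ (Iic x) :=
  ENNReal.ofReal_toReal (measure_ne_top _ _)
lemma ofReal_Fm (x : ℝ) : ENNReal.ofReal (Fm μ x) = μ (Iio x) :=
  ENNReal.ofReal_toReal (measure_ne_top _ _)
lemma ofReal_pt (x : ℝ) : ENNReal.ofReal (pt μ x) = μ {x} :=
  ENNReal.ofReal_toReal (measure_ne_top _ _)

/-- The slice function: the `nu`-measure of `{u | Fm x + u * pt x ≤ t}`. -/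
noncomputable def sl (t x : ℝ) : ℝ≥0∞ :=
  if pt μ x = 0 then (if Fm μ x ≤ t then 1 else 0)
  else ENNReal.ofReal (min ((t - Fm μ x) / pt μ x) 1)

lemma slice_eq (t x : ℝ) : nu {u : ℝ | Fm μ x + u * pt μ x ≤ t} = sl μ t x := by
  by_cases hp : pt μ x = 0
  · rw [sl, if_pos hp]
    by_cases hf : Fm μ x ≤ t
    · have h : {u : ℝ | Fm μ x + u * pt μ x ≤ t} = univ := by
        ext u; simp [hp, hf]
      rw [h, if_pos hf, measure_univ]
    · have h : {u : ℝ | Fm μ x + u * pt μ x ≤ t} = ∅ := by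
        ext u; simp [hp, hf]
      rw [h, if_neg hf, measure_empty]
  · have hp' : 0 < pt μ x := lt_of_le_of_ne (pt_nonneg μ x) (Ne.symm hp)
    have h : {u : ℝ | Fm μ x + u * pt μ x ≤ t} = Iic ((t - Fm μ x) / pt μ x) := by
      ext u
      simp only [mem_setOf_eq, mem_Iic, le_div_iff₀ hp']
      constructor <;> intro h <;> linarith
    rw [h, nu_Iic, sl, if_neg hp]


variable {μ}

section Core

variable [IsProbabilityMeasure μ] {t : ℝ} (ht0 : 0 < t) (ht1 : t < 1)

lemma core (ht0 : 0 < t) (ht1 : t < 1) :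
    ∫⁻ x, sl μ t x ∂μ = ENNReal.ofReal t := by
  classical
  set S : Set ℝ := {x | t ≤ F μ x} with hSdef
  -- S is nonempty
  have hS_ne : S.Nonempty := by
    have h := (tendsto_cdf_atTop μ).eventually (eventually_ge_nhds ht1)
    obtain ⟨x, hx⟩ := h.exists
    exact ⟨x, by rwa [hSdef, mem_setOf_eq, F_eq_cdf]⟩
  -- S is bounded below
  obtain ⟨x₀, hx₀⟩ : ∃ x₀, F μ x₀ < t := by
    have h := (tendsto_cdf_atBot μ).eventually (eventually_lt_nhds ht0)
    obtain ⟨x, hx⟩ := h.exists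
    exact ⟨x, by rwa [F_eq_cdf]⟩
  have hbdd : BddBelow S := by
    refine ⟨x₀, fun a ha => ?_⟩
    by_contra hlt
    push_neg at hlt
    exact absurd (ha.trans (F_mono μ hlt.le)) (not_le.mpr hx₀)
  set q : ℝ := sInf S with hq
  have hq_mem_like : ∀ y, q < y → t ≤ F μ y := by
    intro y hy
    obtain ⟨a, haS, hay⟩ := exists_lt_of_csInf_lt hS_ne hy
    exact le_trans haS (F_mono μ hay.le)
  have hFq : t ≤ F μ q := by
    have hc : Tendsto (cdf μ) (𝓝[>] q) (𝓝 (cdf μ q)) :=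
      ((cdf μ).right_continuous q).mono_left (nhdsWithin_mono q Ioi_subset_Ici_self)
    have hev : ∀ᶠ y in 𝓝[>] q, t ≤ cdf μ y := by
      filter_upwards [self_mem_nhdsWithin] with y hy
      rw [← F_eq_cdf]; exact hq_mem_like y hy
    rw [F_eq_cdf]
    exact ge_of_tendsto hc hev
  have hq_lt : ∀ x, x < q → F μ x < t := by
    intro x hx
    by_contra h
    push_neg at h
    exact absurd (csInf_le hbdd h) (not_le.mpr hx)
  have hFmq : Fm μ q ≤ t := by
    have hU : Iio q = ⋃ n : ℕ, Iic (q - 1 / (n + 1)) := by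
      ext x
      simp only [mem_Iio, mem_iUnion, mem_Iic]
      constructor
      · intro hx
        obtain ⟨n, hn⟩ := exists_nat_one_div_lt (sub_pos.mpr hx)
        exact ⟨n, by push_cast at hn ⊢; linarith⟩
      · rintro ⟨n, hn⟩
        have h1 : 0 < 1 / ((n : ℝ) + 1) := by positivity
        linarith
    have hmono : Monotone fun n : ℕ => Iic (q - 1 / ((n : ℝ) + 1)) := by
      intro m n hmn
      refine Iic_subset_Iic.mpr (sub_le_sub_left ?_ q)
      have h1 : (0:ℝ) < m + 1 := by positivity
      exact one_div_le_one_div_of_le h1 (by exact_mod_cast Nat.succ_le_succ hmn)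
    have hle : μ (Iio q) ≤ ENNReal.ofReal t := by
      rw [hU, hmono.directed_le.measure_iUnion]
      refine iSup_le fun n => ?_
      have hlt : q - 1 / ((n : ℝ) + 1) < q := by
        have h1 : 0 < 1 / ((n : ℝ) + 1) := by positivity
        linarith
      rw [← ofReal_F]
      exact ENNReal.ofReal_le_ofReal (hq_lt _ hlt).le
    have := ENNReal.toReal_mono ENNReal.ofReal_ne_top hle
    rwa [ENNReal.toReal_ofReal ht0.le] at this
  have hFm_gt : ∀ x, q < x → t ≤ Fm μ x := by
    intro x hx
    obtain ⟨y, hqy, hyx⟩ := exists_between hx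
    refine le_trans (hq_mem_like y hqy) ?_
    exact ENNReal.toReal_mono (measure_ne_top _ _)
      (measure_mono fun z hz => lt_of_le_of_lt hz hyx)
  -- split the integral
  have h2 : μ = μ.restrict (Iio q) + μ.restrict {q} + μ.restrict (Ioi q) := by
    have h1 : μ.restrict (Iic q) = μ.restrict (Iio q) + μ.restrict {q} := by
      rw [← Measure.restrict_union (by simp) (measurableSet_singleton q), Iio_union_right]
    rw [← h1, ← Measure.restrict_union (Iic_disjoint_Ioi le_rfl) measurableSet_Ioi,
      Iic_union_Ioi, Measure.restrict_univ]
  have hsplit : ∫⁻ x, sl μ t x ∂μ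
      = (∫⁻ x in Iio q, sl μ t x ∂μ) + (∫⁻ x in {q}, sl μ t x ∂μ)
        + (∫⁻ x in Ioi q, sl μ t x ∂μ) := by
    calc ∫⁻ x, sl μ t x ∂μ
        = ∫⁻ x, sl μ t x ∂(μ.restrict (Iio q) + μ.restrict {q} + μ.restrict (Ioi q)) := by
          rw [← h2]
      _ = _ := by rw [lintegral_add_measure, lintegral_add_measure]
  -- piece 1
  have hpiece1 : ∫⁻ x in Iio q, sl μ t x ∂μ = ENNReal.ofReal (Fm μ q) := by
    have hone : ∀ᵐ x ∂μ.restrict (Iio q), sl μ t x = 1 := by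
      rw [ae_restrict_iff' measurableSet_Iio]
      refine ae_of_all _ fun x hx => ?_
      have hFx : F μ x < t := hq_lt x hx
      by_cases hp : pt μ x = 0
      · have : Fm μ x ≤ t := le_trans (Fm_le_F μ x) hFx.le
        rw [sl, if_pos hp, if_pos this]
      · have hp' : 0 < pt μ x := lt_of_le_of_ne (pt_nonneg μ x) (Ne.symm hp)
        have h1 : (1:ℝ) ≤ (t - Fm μ x) / pt μ x := by
          rw [le_div_iff₀ hp']
          have := F_eq_add μ x
          linarith
        rw [sl, if_neg hp, min_eq_right h1, ENNReal.ofReal_one]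
    rw [lintegral_congr_ae hone, lintegral_one, Measure.restrict_apply_univ, ← ofReal_Fm]
  -- piece 2
  have hpiece2 : ∫⁻ x in {q}, sl μ t x ∂μ = ENNReal.ofReal (t - Fm μ q) := by
    rw [lintegral_singleton]
    by_cases hp : pt μ q = 0
    · have hμq : μ {q} = 0 := by
        have h := hp
        rw [pt, ENNReal.toReal_eq_zero_iff] at h
        exact h.resolve_right (measure_ne_top _ _)
      have ht' : t - Fm μ q = 0 := by
        have hF := F_eq_add μ q
        rw [hp, add_zero] at hF
        have : t ≤ Fm μ q := hF ▸ hFq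
        linarith [hFmq]
      rw [hμq, mul_zero, ht', ENNReal.ofReal_zero]
    · have hp' : 0 < pt μ q := lt_of_le_of_ne (pt_nonneg μ q) (Ne.symm hp)
      have hle : (t - Fm μ q) / pt μ q ≤ 1 := by
        rw [div_le_one hp']
        have := F_eq_add μ q
        linarith [hFq]
      have hge : 0 ≤ (t - Fm μ q) / pt μ q := div_nonneg (by linarith) hp'.le
      rw [sl, if_neg hp, min_eq_left hle, ← ofReal_pt,
        ← ENNReal.ofReal_mul hge, div_mul_cancel₀ _ hp'.ne']
  -- piece 3
  have hpiece3 : ∫⁻ x in Ioi q, sl μ t x ∂μ = 0 := by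
    set B : Set ℝ := {x | q < x ∧ pt μ x = 0 ∧ Fm μ x ≤ t} with hBdef
    have hB : μ B = 0 := by
      rcases eq_empty_or_nonempty B with hBe | hBne
      · rw [hBe]; exact measure_empty
      have hBval : ∀ x ∈ B, μ (Iic x) = ENNReal.ofReal t ∧ μ (Iio x) = ENNReal.ofReal t := by
        intro x hx
        obtain ⟨hqx, hpx, hFmx⟩ := hx
        have hFmx' : Fm μ x = t := le_antisymm hFmx (hFm_gt x hqx)
        have hFx : F μ x = t := by rw [F_eq_add, hpx, add_zero, hFmx']
        constructor
        · rw [← ofReal_F, hFx]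
        · rw [← ofReal_Fm, hFmx']
      have hbddB : BddAbove B := by
        obtain ⟨M, hM⟩ := eventually_atTop.mp
          ((tendsto_cdf_atTop μ).eventually (eventually_gt_nhds ht1))
        refine ⟨M, fun x hx => ?_⟩
        by_contra hlt
        push_neg at hlt
        have h1 : t < cdf μ x := hM x hlt.le
        rw [← F_eq_cdf] at h1
        obtain ⟨hqx, hpx, hFmx⟩ := hx
        rw [F_eq_add, hpx, add_zero] at h1
        linarith
      set b : ℝ := sSup B with hb
      have hIicq : μ (Iic q) = ENNReal.ofReal t := by
        obtain ⟨x₁, hx₁⟩ := hBne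
        refine le_antisymm ?_ ?_
        · rw [← (hBval x₁ hx₁).1]
          exact measure_mono (Iic_subset_Iic.mpr hx₁.1.le)
        · rw [← ofReal_F]
          exact ENNReal.ofReal_le_ofReal hFq
      have hIoc : ∀ x ∈ B, μ (Ioc q x) = 0 := by
        intro x hx
        rw [← Iic_sdiff_Iic, measure_diff (Iic_subset_Iic.mpr hx.1.le)
          nullMeasurableSet_Iic (measure_ne_top _ _), (hBval x hx).1, hIicq, tsub_self]
      have hIoc' : ∀ c, c < b → μ (Ioc q c) = 0 := by
        intro c hc
        obtain ⟨x, hxB, hcx⟩ := exists_lt_of_lt_csSup hBne hc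
        exact measure_mono_null (Ioc_subset_Ioc_right hcx.le) (hIoc x hxB)
      have hIoo : μ (Ioo q b) = 0 := by
        have hsub : Ioo q b ⊆ ⋃ n : ℕ, Ioc q (b - 1 / (n + 1)) := by
          intro y hy
          obtain ⟨n, hn⟩ := exists_nat_one_div_lt (sub_pos.mpr hy.2)
          refine mem_iUnion.mpr ⟨n, hy.1, ?_⟩
          push_cast at hn ⊢
          linarith
        refine le_antisymm (le_trans (measure_mono hsub) ?_) (zero_le)
        refine le_trans (measure_iUnion_le _) ?_
        have hz : ∀ n : ℕ, μ (Ioc q (b - 1 / (n + 1))) = 0 := by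
          intro n
          refine hIoc' _ ?_
          have h1 : 0 < 1 / ((n : ℝ) + 1) := by positivity
          linarith
        simp only [hz, tsum_zero, le_refl]
      by_cases hbB : b ∈ B
      · have hsub : B ⊆ Ioo q b ∪ {b} := by
          intro x hx
          rcases lt_or_eq_of_le (le_csSup hbddB hx) with h | h
          · exact Or.inl ⟨hx.1, h⟩
          · exact Or.inr h
        have hμb : μ {b} = 0 := by
          have h := hbB.2.1
          rw [pt, ENNReal.toReal_eq_zero_iff] at h
          exact h.resolve_right (measure_ne_top _ _)
        refine le_antisymm (le_trans (measure_mono hsub) ?_) (zero_le)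
        refine le_trans (measure_union_le _ _) ?_
        rw [hIoo, hμb, add_zero]
      · have hsub : B ⊆ Ioo q b := by
          intro x hx
          rcases lt_or_eq_of_le (le_csSup hbddB hx) with h | h
          · exact ⟨hx.1, h⟩
          · rw [h] at hx; exact absurd hx hbB
        exact measure_mono_null hsub hIoo
    have hzero : ∀ᵐ x ∂μ.restrict (Ioi q), sl μ t x = 0 := by
      rw [ae_restrict_iff' measurableSet_Ioi]
      filter_upwards [measure_eq_zero_iff_ae_notMem.mp hB] with x hxB hxq
      by_cases hp : pt μ x = 0
      · have hFmx : ¬ Fm μ x ≤ t := fun h => hxB ⟨hxq, hp, h⟩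
        rw [sl, if_pos hp, if_neg hFmx]
      · have hp' : 0 < pt μ x := lt_of_le_of_ne (pt_nonneg μ x) (Ne.symm hp)
        have h1 : (t - Fm μ x) / pt μ x ≤ 0 :=
          div_nonpos_iff.mpr (Or.inr ⟨sub_nonpos.mpr (hFm_gt x hxq), hp'.le⟩)
        rw [sl, if_neg hp, ENNReal.ofReal_eq_zero]
        exact le_trans (min_le_left _ _) h1
    rw [lintegral_congr_ae hzero, lintegral_zero]
  rw [hsplit, hpiece1, hpiece2, hpiece3, add_zero,
    ← ENNReal.ofReal_add (Fm_nonneg μ q) (by linarith), add_sub_cancel]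

end Core


variable (μ) [IsProbabilityMeasure μ]

lemma measurable_g : Measurable fun p : ℝ × ℝ => Fm μ p.1 + p.2 * pt μ p.1 :=
  ((measurable_Fm μ).comp measurable_fst).add
    (measurable_snd.mul ((measurable_pt μ).comp measurable_fst))

lemma prod_meas (t : ℝ) :
    (μ.prod nu) {p : ℝ × ℝ | Fm μ p.1 + p.2 * pt μ p.1 ≤ t}
      = ENNReal.ofReal (min t 1) := by
  have hSm : MeasurableSet {p : ℝ × ℝ | Fm μ p.1 + p.2 * pt μ p.1 ≤ t} :=
    measurableSet_le (measurable_g μ) measurable_const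
  have hint : (μ.prod nu) {p : ℝ × ℝ | Fm μ p.1 + p.2 * pt μ p.1 ≤ t}
      = ∫⁻ x, sl μ t x ∂μ := by
    rw [Measure.prod_apply hSm]
    exact lintegral_congr fun x => slice_eq μ t x
  rcases le_or_gt t 0 with ht | ht
  · have hmin : min t 1 = t := min_eq_left (by linarith)
    rw [hmin, ENNReal.ofReal_eq_zero.mpr ht]
    have hub : ∀ n : ℕ, (μ.prod nu) {p : ℝ × ℝ | Fm μ p.1 + p.2 * pt μ p.1 ≤ t}
        ≤ ENNReal.ofReal (1 / (n + 2)) := by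
      intro n
      have h0 : (0:ℝ) < 1 / (n + 2) := by positivity
      have h1 : (1:ℝ) / (n + 2) < 1 := by
        rw [div_lt_one (by positivity)]
        have : (0:ℝ) ≤ n := Nat.cast_nonneg n
        linarith
      have hsub : {p : ℝ × ℝ | Fm μ p.1 + p.2 * pt μ p.1 ≤ t}
          ⊆ {p : ℝ × ℝ | Fm μ p.1 + p.2 * pt μ p.1 ≤ 1 / (n + 2)} :=
        fun p hp => le_trans hp (ht.trans h0.le)
      have hSm' : MeasurableSet {p : ℝ × ℝ | Fm μ p.1 + p.2 * pt μ p.1 ≤ 1 / ((n:ℝ) + 2)} :=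
        measurableSet_le (measurable_g μ) measurable_const
      calc (μ.prod nu) {p : ℝ × ℝ | Fm μ p.1 + p.2 * pt μ p.1 ≤ t}
          ≤ (μ.prod nu) {p : ℝ × ℝ | Fm μ p.1 + p.2 * pt μ p.1 ≤ 1 / (n + 2)} :=
            measure_mono hsub
        _ = ∫⁻ x, sl μ (1 / (n + 2)) x ∂μ := by
            rw [Measure.prod_apply hSm']
            exact lintegral_congr fun x => slice_eq μ _ x
        _ = ENNReal.ofReal (1 / (n + 2)) := core h0 h1
    have hreal : Tendsto (fun n : ℕ => 1 / ((n:ℝ) + 2)) atTop (𝓝 0) := by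
      have h := tendsto_inv_atTop_zero.comp
        (tendsto_atTop_add_const_right atTop (2:ℝ) tendsto_natCast_atTop_atTop)
      simpa [Function.comp_def, one_div] using h
    have htend : Tendsto (fun n : ℕ => ENNReal.ofReal (1 / ((n:ℝ) + 2))) atTop (𝓝 0) := by
      rw [← ENNReal.ofReal_zero]
      exact ENNReal.tendsto_ofReal hreal
    exact le_antisymm (ge_of_tendsto' htend hub) (zero_le)
  rcases lt_or_ge t 1 with ht1 | ht1
  · rw [hint, core ht ht1, min_eq_left ht1.le]
  · rw [hint, min_eq_right ht1]
    have hone : ∀ x, sl μ t x = 1 := by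
      intro x
      have hFx : F μ x ≤ t := le_trans (F_le_one μ x) ht1
      by_cases hp : pt μ x = 0
      · rw [sl, if_pos hp, if_pos (le_trans (Fm_le_F μ x) hFx)]
      · have hp' : 0 < pt μ x := lt_of_le_of_ne (pt_nonneg μ x) (Ne.symm hp)
        have h1 : (1:ℝ) ≤ (t - Fm μ x) / pt μ x := by
          rw [le_div_iff₀ hp']
          have := F_eq_add μ x
          linarith
        rw [sl, if_neg hp, min_eq_right h1, ENNReal.ofReal_one]
    simp only [hone, lintegral_one, measure_univ, ENNReal.ofReal_one]

end DTAux

/-- If `U` is uniformly distributed on `[0,1]` and independent of `X`,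
then the distributional transform `T_X(X,U)` is uniformly distributed on `[0,1]`. -/
theorem distTransform_uniform {Ω : Type*} [MeasurableSpace Ω]
    (P : Measure Ω) [IsProbabilityMeasure P] (X U : Ω → ℝ)
    (hX : Measurable X) (hU : Measurable U)
    (hUunif : Measure.map U P = volume.restrict (Icc (0:ℝ) 1))
    (hXU : IndepFun X U P) :
    Measure.map (fun ω => distTransform P X (X ω) (U ω)) P
      = volume.restrict (Icc (0:ℝ) 1) := by
  set μ : Measure ℝ := Measure.map X P with hμ
  have : IsProbabilityMeasure μ := Measure.isProbabilityMeasure_map hX.aemeasurable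
  have hev : ∀ ω, distTransform P X (X ω) (U ω)
      = DTAux.Fm μ (X ω) + U ω * DTAux.pt μ (X ω) := by
    intro ω
    have h1 : P {ω' | X ω' < X ω} = μ (Iio (X ω)) := by
      rw [hμ, Measure.map_apply hX measurableSet_Iio]; rfl
    have h2 : P {ω' | X ω' = X ω} = μ ({X ω} : Set ℝ) := by
      rw [hμ, Measure.map_apply hX (measurableSet_singleton _)]; rfl
    rw [distTransform, h1, h2]; rfl
  have hVeq : (fun ω => distTransform P X (X ω) (U ω))
      = (fun p : ℝ × ℝ => DTAux.Fm μ p.1 + p.2 * DTAux.pt μ p.1) ∘ (fun ω => (X ω, U ω)) := by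
    funext ω; exact hev ω
  rw [hVeq, ← Measure.map_map (DTAux.measurable_g μ) (hX.prodMk hU),
    (indepFun_iff_map_prod_eq_prod_map_map hX.aemeasurable hU.aemeasurable).mp hXU,
    hUunif, ← hμ]
  have : IsProbabilityMeasure (μ.prod DTAux.nu) := by infer_instance
  have : IsProbabilityMeasure
      ((μ.prod DTAux.nu).map fun p : ℝ × ℝ => DTAux.Fm μ p.1 + p.2 * DTAux.pt μ p.1) :=
    Measure.isProbabilityMeasure_map (DTAux.measurable_g μ).aemeasurable
  rw [show volume.restrict (Icc (0:ℝ) 1) = DTAux.nu from rfl]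
  refine Measure.ext_of_Iic _ _ fun a => ?_
  rw [Measure.map_apply (DTAux.measurable_g μ) measurableSet_Iic]
  have h1 : (fun p : ℝ × ℝ => DTAux.Fm μ p.1 + p.2 * DTAux.pt μ p.1) ⁻¹' Iic a
      = {p : ℝ × ℝ | DTAux.Fm μ p.1 + p.2 * DTAux.pt μ p.1 ≤ a} := rfl
  rw [h1, DTAux.prod_meas μ a, ← DTAux.nu_Iic a]
end

section
/- Let X be a real-valued random variable with distribution function F_X(x) := P(X ≤ x), and let U be uniformly distributed on [0,1] and independent of X. Then X = F_X^{-1}(T_X(X,U)) almost surely, where F_X^{-1}(p) := inf{x ∈ ℝ : F_X(x) ≥ p} is the generalized inverse (quantile function) of F_X. -/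
open MeasureTheory ProbabilityTheory Set Filter

/-- Auxiliary: for any measure on `ℝ`, the set of points `x > q` such that
`μ (Ioc q x) = 0` is a `μ`-null set. -/
lemma null_flat_aux (μ : Measure ℝ) (q : ℝ) :
    μ {x : ℝ | q < x ∧ μ (Set.Ioc q x) = 0} = 0 := by
  set A : Set ℝ := {x : ℝ | q < x ∧ μ (Set.Ioc q x) = 0} with hA
  rcases A.eq_empty_or_nonempty with h | hne
  · simp [h]
  by_cases hbdd : BddAbove A
  · obtain ⟨u, hmono, hlim, hmem⟩ := exists_seq_tendsto_sSup hne hbdd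
    by_cases hs : sSup A ∈ A
    · have hsub : A ⊆ Set.Ioc q (sSup A) := fun x hx => ⟨hx.1, le_csSup hbdd hx⟩
      exact measure_mono_null hsub hs.2
    · have hsub : A ⊆ ⋃ n, Set.Ioc q (u n) := by
        intro x hx
        have hxs : x < sSup A := lt_of_le_of_ne (le_csSup hbdd hx) (fun h => hs (h ▸ hx))
        obtain ⟨n, hn⟩ := (hlim.eventually (eventually_gt_nhds hxs)).exists
        exact Set.mem_iUnion.2 ⟨n, hx.1, hn.le⟩
      exact measure_mono_null hsub (measure_iUnion_null fun n => (hmem n).2)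
  · have hall : ∀ n : ℕ, ∃ a ∈ A, (n : ℝ) < a := by
      intro n
      obtain ⟨a, haA, ha⟩ := not_bddAbove_iff.1 hbdd n
      exact ⟨a, haA, ha⟩
    choose f hfA hfn using hall
    have hsub : A ⊆ ⋃ n, Set.Ioc q (f n) := by
      intro x hx
      obtain ⟨n, hn⟩ := exists_nat_ge x
      exact Set.mem_iUnion.2 ⟨n, hx.1, hn.trans (hfn n).le⟩
    exact measure_mono_null hsub (measure_iUnion_null fun n => (hfA n).2)

/-- With `F_X(x) = P(X ≤ x)` and `F_X⁻¹(p) = inf {x | F_X(x) ≥ p}`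
(the generalized inverse), if `U` is uniform on `[0,1]` and independent of `X`
then `X = F_X⁻¹(T_X(X,U))` almost surely. -/
theorem distTransform_quantile_inverse {Ω : Type*} [MeasurableSpace Ω]
    (P : Measure Ω) [IsProbabilityMeasure P] (X U : Ω → ℝ)
    (hX : Measurable X) (hU : Measurable U)
    (hUunif : Measure.map U P = volume.restrict (Icc (0:ℝ) 1))
    (hXU : IndepFun X U P) :
    ∀ᵐ ω ∂P, X ω =
      sInf {x : ℝ | distTransform P X (X ω) (U ω) ≤ (P {ω' | X ω' ≤ x}).toReal} := by
  set μ : Measure ℝ := Measure.map X P with hμ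
  -- the "flat" bad set
  set B : Set ℝ := ⋃ q : ℚ, {x : ℝ | (q : ℝ) < x ∧ μ (Set.Ioc (q : ℝ) x) = 0} with hB
  have hBnull : μ B = 0 := measure_iUnion_null fun q => null_flat_aux μ q
  have hXB : ∀ᵐ ω ∂P, X ω ∉ B := by
    rw [ae_iff]
    have : {ω | ¬ X ω ∉ B} = X ⁻¹' B := by ext ω; simp
    rw [this]
    exact le_antisymm ((Measure.le_map_apply hX.aemeasurable B).trans_eq hBnull) zero_le
  have hU01 : ∀ᵐ ω ∂P, U ω ∈ Set.Ioc (0 : ℝ) 1 := by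
    rw [ae_iff]
    have h1 : {ω | ¬ U ω ∈ Set.Ioc (0 : ℝ) 1} = U ⁻¹' (Set.Ioc (0:ℝ) 1)ᶜ := by ext ω; simp
    rw [h1, ← Measure.map_apply hU measurableSet_Ioc.compl, hUunif,
      Measure.restrict_apply measurableSet_Ioc.compl]
    have h2 : (Set.Ioc (0:ℝ) 1)ᶜ ∩ Set.Icc (0:ℝ) 1 = {0} := by
      ext x
      simp only [Set.mem_inter_iff, Set.mem_compl_iff, Set.mem_Ioc, Set.mem_Icc,
        Set.mem_singleton_iff, not_and, not_le]
      constructor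
      · rintro ⟨h, h0, h1⟩
        rcases lt_or_eq_of_le h0 with h0' | h0'
        · exact absurd (h h0') (not_lt.2 h1)
        · exact h0'.symm
      · rintro rfl; exact ⟨fun h => absurd h (lt_irrefl 0), le_refl 0, zero_le_one⟩
    rw [h2]
    simp
  filter_upwards [hXB, hU01] with ω hxB hu
  set x := X ω with hx
  set u := U ω with huω
  -- basic quantities
  have hIic : ∀ t : ℝ, μ (Set.Iic t) = P {ω' | X ω' ≤ t} := by
    intro t
    rw [hμ, Measure.map_apply hX measurableSet_Iic]
    rfl
  have hfin : ∀ s : Set Ω, P s ≠ ⊤ := fun s => measure_ne_top P s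
  have hsplit : P {ω' | X ω' < x} + P {ω' | X ω' = x} = P {ω' | X ω' ≤ x} := by
    have hun : {ω' | X ω' ≤ x} = {ω' | X ω' < x} ∪ {ω' | X ω' = x} := by
      ext ω'; simp [Set.mem_union, le_iff_lt_or_eq]
    have hdisj : Disjoint {ω' | X ω' < x} {ω' | X ω' = x} :=
      Set.disjoint_left.2 fun ω' h1 h2 => absurd h2 (ne_of_lt h1)
    have hms : MeasurableSet {ω' | X ω' = x} := hX (measurableSet_singleton x)
    rw [hun, measure_union hdisj hms]
  -- key: F y < T for all y < x
  set T := distTransform P X x u with hT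
  have hTle : T ≤ (P {ω' | X ω' ≤ x}).toReal := by
    rw [hT, distTransform, ← hsplit, ENNReal.toReal_add (hfin _) (hfin _)]
    gcongr
    exact mul_le_of_le_one_left ENNReal.toReal_nonneg hu.2
  have hlt : ∀ y : ℝ, y < x → (P {ω' | X ω' ≤ y}).toReal < T := by
    intro y hy
    have hFy : P {ω' | X ω' ≤ y} ≤ P {ω' | X ω' < x} :=
      measure_mono fun ω' h => lt_of_le_of_lt h hy
    by_cases hm : P {ω' | X ω' = x} = 0
    · -- no atom at x; use that x is not in the flat set B
      obtain ⟨q, hyq, hqx⟩ := exists_rat_btwn hy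
      have hq : μ (Set.Ioc (q : ℝ) x) ≠ 0 := by
        intro h0
        exact hxB (Set.mem_iUnion.2 ⟨q, hqx, h0⟩)
      have hsplit2 : μ (Set.Iic (q : ℝ)) + μ (Set.Ioc (q : ℝ) x) = μ (Set.Iic x) := by
        have hdisj : Disjoint (Set.Iic (q : ℝ)) (Set.Ioc (q : ℝ) x) :=
          Set.disjoint_left.2 fun t h1 h2 => absurd h2.1 (not_lt.2 h1)
        rw [← measure_union hdisj measurableSet_Ioc, Set.Iic_union_Ioc_eq_Iic hqx.le]
      have hlt2 : μ (Set.Iic (q : ℝ)) < μ (Set.Iic x) := by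
        rw [← hsplit2]
        exact ENNReal.lt_add_right (by rw [hμ]; exact (Measure.map_apply hX measurableSet_Iic ▸ hfin _)) hq
      have hle3 : P {ω' | X ω' ≤ y} ≤ μ (Set.Iic (q : ℝ)) := by
        rw [hIic]
        exact measure_mono fun ω' h => le_trans h hyq.le
      have : P {ω' | X ω' ≤ y} < P {ω' | X ω' ≤ x} := by
        rw [← hIic x]
        exact lt_of_le_of_lt hle3 hlt2
      have hstrict : (P {ω' | X ω' ≤ y}).toReal < (P {ω' | X ω' ≤ x}).toReal :=
        (ENNReal.toReal_lt_toReal (hfin _) (hfin _)).2 this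
      calc (P {ω' | X ω' ≤ y}).toReal < (P {ω' | X ω' ≤ x}).toReal := hstrict
        _ = T := by
          rw [hT, distTransform, ← hsplit, hm, add_zero]
          simp [hm]
    · -- atom at x: strict inequality from u > 0
      have hmpos : 0 < (P {ω' | X ω' = x}).toReal :=
        ENNReal.toReal_pos hm (hfin _)
      have h1 : (P {ω' | X ω' ≤ y}).toReal ≤ (P {ω' | X ω' < x}).toReal :=
        (ENNReal.toReal_le_toReal (hfin _) (hfin _)).2 hFy
      calc (P {ω' | X ω' ≤ y}).toReal ≤ (P {ω' | X ω' < x}).toReal := h1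
        _ < T := by
          rw [hT, distTransform]
          exact lt_add_of_pos_right _ (mul_pos hu.1 hmpos)
  -- conclude sInf = x
  have hmemS : x ∈ {y : ℝ | T ≤ (P {ω' | X ω' ≤ y}).toReal} := hTle
  have hlb : ∀ y ∈ {y : ℝ | T ≤ (P {ω' | X ω' ≤ y}).toReal}, x ≤ y := by
    intro y hyS
    by_contra h
    exact absurd hyS (not_le.2 (hlt y (not_le.1 h)))
  exact le_antisymm (le_csInf ⟨x, hmemS⟩ hlb) (csInf_le ⟨x, hlb⟩ hmemS)
end

section
/- Let X_1,…,X_n be real-valued random variables on a common probability space and let U_1,…,U_n be i.i.d. uniform on [0,1], independent of (X_1,…,X_n). Define C(v_1,…,v_n) := P(T_{X_1}(X_1,U_1) ≤ v_1, …, T_{X_n}(X_n,U_n) ≤ v_n), the joint distribution function of the distributional transforms. Then C is a copula for (X_1,…,X_n), i.e., for all x_1,…,x_n ∈ ℝ: P(X_1 ≤ x_1, …, X_n ≤ x_n) = C(F_{X_1}(x_1), …, F_{X_n}(x_n)), where F_{X_i}(x) := P(X_i ≤ x). In other words, X_1,…,X_n and their distributional transforms have the same copula. -/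
open MeasureTheory ProbabilityTheory Set Filter

-- sub-lemma 1: flat-spot set is null
lemma null_flat {Ω : Type*} [MeasurableSpace Ω] (P : Measure Ω) [IsFiniteMeasure P]
    (X : Ω → ℝ) (x : ℝ) :
    P {ω | x < X ω ∧ P {ω' | x < X ω' ∧ X ω' ≤ X ω} = 0} = 0 := by
  by_cases h : ∃ m, x < m ∧ P {ω' | x < X ω' ∧ X ω' ≤ m} = 0 ∧
      ∀ z, x < z → P {ω' | x < X ω' ∧ X ω' ≤ z} = 0 → z ≤ m
  · obtain ⟨m, hxm, hgm, hmax⟩ := h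
    refine measure_mono_null ?_ hgm
    rintro ω ⟨h1, h2⟩
    exact ⟨h1, hmax _ h1 h2⟩
  · push_neg at h
    have hsub : {ω | x < X ω ∧ P {ω' | x < X ω' ∧ X ω' ≤ X ω} = 0} ⊆
        ⋃ q : ℚ, {ω | (x < X ω ∧ X ω ≤ (q:ℝ)) ∧ P {ω' | x < X ω' ∧ X ω' ≤ (q:ℝ)} = 0} := by
      rintro ω ⟨h1, h2⟩
      obtain ⟨z, hz1, hz2, hz3⟩ := h _ h1 h2
      obtain ⟨q, hq1, hq2⟩ := exists_rat_btwn hz3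
      refine mem_iUnion.2 ⟨q, ⟨⟨h1, hq1.le⟩, ?_⟩⟩
      refine le_antisymm (le_trans (measure_mono ?_) hz2.le) zero_le
      rintro ω' ⟨a, b⟩; exact ⟨a, b.trans hq2.le⟩
    refine measure_mono_null hsub (measure_iUnion_null fun q => ?_)
    by_cases hq : P {ω' | x < X ω' ∧ X ω' ≤ (q:ℝ)} = 0
    · exact measure_mono_null (fun ω hw => hw.1) hq
    · convert measure_empty
      · ext ω; simp only [mem_setOf_eq, mem_empty_iff_false, iff_false]
        rintro ⟨_, h2⟩; exact hq h2
      · infer_instance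

lemma null_U_gt {Ω : Type*} [MeasurableSpace Ω] (P : Measure Ω)
    {U : Ω → ℝ} (hU : Measurable U)
    (hUunif : Measure.map U P = volume.restrict (Icc (0:ℝ) 1)) :
    P {ω | 1 < U ω} = 0 := by
  have : {ω | 1 < U ω} = U ⁻¹' (Ioi 1) := rfl
  rw [this, ← Measure.map_apply hU measurableSet_Ioi, hUunif,
    Measure.restrict_apply measurableSet_Ioi]
  have : Ioi (1:ℝ) ∩ Icc 0 1 = ∅ := by
    ext y; simp only [mem_inter_iff, mem_Ioi, mem_Icc, mem_empty_iff_false, iff_false]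
    rintro ⟨a, _, c⟩; linarith
  rw [this, measure_empty]

lemma null_U_le {Ω : Type*} [MeasurableSpace Ω] (P : Measure Ω)
    {U : Ω → ℝ} (hU : Measurable U)
    (hUunif : Measure.map U P = volume.restrict (Icc (0:ℝ) 1)) :
    P {ω | U ω ≤ 0} = 0 := by
  have : {ω | U ω ≤ 0} = U ⁻¹' (Iic 0) := rfl
  rw [this, ← Measure.map_apply hU measurableSet_Iic, hUunif,
    Measure.restrict_apply measurableSet_Iic]
  have : Iic (0:ℝ) ∩ Icc 0 1 = {0} := by
    ext y; simp only [mem_inter_iff, mem_Iic, mem_Icc, mem_singleton_iff]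
    constructor
    · rintro ⟨a, b, _⟩; linarith
    · rintro rfl; norm_num
  rw [this, Real.volume_singleton]

lemma cdf_split {Ω : Type*} [MeasurableSpace Ω] (P : Measure Ω)
    {X : Ω → ℝ} (hX : Measurable X) (y : ℝ) :
    P {ω | X ω < y} + P {ω | X ω = y} = P {ω | X ω ≤ y} := by
  have hset : {ω | X ω ≤ y} = {ω | X ω < y} ∪ {ω | X ω = y} := by
    ext ω; simp [le_iff_lt_or_eq]
  rw [hset]
  exact (measure_union (Set.disjoint_left.mpr fun ω h1 h2 => absurd h2 (ne_of_lt h1))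
    (hX (measurableSet_singleton y))).symm

lemma cdf_split2 {Ω : Type*} [MeasurableSpace Ω] (P : Measure Ω)
    {X : Ω → ℝ} (hX : Measurable X) {a y : ℝ} (hay : a ≤ y) :
    P {ω | X ω ≤ a} + P {ω | a < X ω ∧ X ω ≤ y} = P {ω | X ω ≤ y} := by
  have hm : MeasurableSet {ω | a < X ω ∧ X ω ≤ y} := hX measurableSet_Ioc
  have hset : {ω | X ω ≤ y} = {ω | X ω ≤ a} ∪ {ω | a < X ω ∧ X ω ≤ y} := by
    ext ω
    simp only [mem_union, mem_setOf_eq]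
    constructor
    · intro h
      rcases le_or_gt (X ω) a with h' | h'
      · exact Or.inl h'
      · exact Or.inr ⟨h', h⟩
    · rintro (h | h)
      · exact h.trans hay
      · exact h.2
  rw [hset]
  exact (measure_union (Set.disjoint_left.mpr fun ω h1 h2 => absurd h1 (not_le.mpr h2.1)) hm).symm


/-- `X_1,…,X_n` and their distributional transforms have the same copula:
the joint distribution function `C` of the distributional transforms
`T_{X_i}(X_i,U_i)` satisfies
`P(X_1 ≤ x_1, …, X_n ≤ x_n) = C(F_{X_1}(x_1), …, F_{X_n}(x_n))` for all `x_i`. -/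
theorem distTransform_same_copula {Ω : Type*} [MeasurableSpace Ω]
    (P : Measure Ω) [IsProbabilityMeasure P] {n : ℕ}
    (X U : Fin n → Ω → ℝ)
    (hX : ∀ i, Measurable (X i)) (hU : ∀ i, Measurable (U i))
    (hUunif : ∀ i, Measure.map (U i) P = volume.restrict (Icc (0:ℝ) 1))
    (hUindep : iIndepFun U P)
    (hXU : IndepFun (fun ω i => X i ω) (fun ω i => U i ω) P) :
    ∀ x : Fin n → ℝ,
      (P {ω | ∀ i, X i ω ≤ x i}).toReal =
        (P {ω | ∀ i, distTransform P (X i) (X i ω) (U i ω)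
              ≤ (P {ω' | X i ω' ≤ x i}).toReal}).toReal := by
  intro x
  have key : ({ω | ∀ i, X i ω ≤ x i} : Set Ω) =ᵐ[P]
      {ω | ∀ i, distTransform P (X i) (X i ω) (U i ω)
            ≤ (P {ω' | X i ω' ≤ x i}).toReal} := by
    rw [Filter.eventuallyEq_set]
    have h1 : ∀ᵐ ω ∂P, ∀ i, U i ω ≤ 1 := by
      rw [ae_all_iff]; intro i
      rw [ae_iff]
      simpa [not_le] using null_U_gt P (hU i) (hUunif i)
    have h2 : ∀ᵐ ω ∂P, ∀ i, 0 < U i ω := by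
      rw [ae_all_iff]; intro i
      rw [ae_iff]
      simpa [not_lt] using null_U_le P (hU i) (hUunif i)
    have h3 : ∀ᵐ ω ∂P, ∀ i,
        ¬(x i < X i ω ∧ P {ω' | x i < X i ω' ∧ X i ω' ≤ X i ω} = 0) := by
      rw [ae_all_iff]; intro i
      exact measure_eq_zero_iff_ae_notMem.mp (null_flat P (X i) (x i))
    filter_upwards [h1, h2, h3] with ω hω1 hω2 hω3
    constructor
    · intro hA i
      show (P {ω' | X i ω' < X i ω}).toReal + U i ω * (P {ω' | X i ω' = X i ω}).toReal
          ≤ (P {ω' | X i ω' ≤ x i}).toReal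
      have hsum : (P {ω' | X i ω' < X i ω}).toReal + (P {ω' | X i ω' = X i ω}).toReal
          = (P {ω' | X i ω' ≤ X i ω}).toReal := by
        rw [← ENNReal.toReal_add (measure_ne_top P _) (measure_ne_top P _),
          cdf_split P (hX i) (X i ω)]
      have hmono : (P {ω' | X i ω' ≤ X i ω}).toReal ≤ (P {ω' | X i ω' ≤ x i}).toReal :=
        ENNReal.toReal_mono (measure_ne_top P _)
          (measure_mono fun ω' h => le_trans h (hA i))
      have hp : (0:ℝ) ≤ (P {ω' | X i ω' = X i ω}).toReal := ENNReal.toReal_nonneg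
      nlinarith [hω1 i]
    · intro hC i
      by_contra hlt
      push_neg at hlt
      refine hω3 i ⟨hlt, ?_⟩
      have hTi : (P {ω' | X i ω' < X i ω}).toReal
          + U i ω * (P {ω' | X i ω' = X i ω}).toReal
          ≤ (P {ω' | X i ω' ≤ x i}).toReal := hC i
      have haF : (P {ω' | X i ω' ≤ x i}).toReal ≤ (P {ω' | X i ω' < X i ω}).toReal :=
        ENNReal.toReal_mono (measure_ne_top P _)
          (measure_mono fun ω' h => lt_of_le_of_lt h hlt)
      have hu := hω2 i
      have hp : (0:ℝ) ≤ (P {ω' | X i ω' = X i ω}).toReal := ENNReal.toReal_nonneg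
      have hp0 : (P {ω' | X i ω' = X i ω}).toReal = 0 := by nlinarith
      have haeq : (P {ω' | X i ω' < X i ω}).toReal = (P {ω' | X i ω' ≤ x i}).toReal := by
        nlinarith
      have hp0' : P {ω' | X i ω' = X i ω} = 0 :=
        ((ENNReal.toReal_eq_zero_iff _).mp hp0).resolve_right (measure_ne_top P _)
      have ha' : P {ω' | X i ω' < X i ω} = P {ω' | X i ω' ≤ x i} :=
        (ENNReal.toReal_eq_toReal_iff' (measure_ne_top P _) (measure_ne_top P _)).mp haeq
      have hley : P {ω' | X i ω' ≤ X i ω} = P {ω' | X i ω' ≤ x i} := by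
        rw [← cdf_split P (hX i) (X i ω), hp0', ha', add_zero]
      have := cdf_split2 P (hX i) (y := X i ω) hlt.le
      rw [hley] at this
      have h0 : P {ω' | X i ω' ≤ x i} + P {ω' | x i < X i ω' ∧ X i ω' ≤ X i ω}
          = P {ω' | X i ω' ≤ x i} + 0 := by rw [add_zero]; exact this
      exact (ENNReal.add_right_inj (measure_ne_top P _)).mp h0
  exact congrArg ENNReal.toReal (measure_congr key)
end

section
/- Let X = (X_1,…,X_n) where each X_i = (X_{i,1},…,X_{i,d_i}) is an ℝ^{d_i}-valued random variable, and let U_{i,k} (1 ≤ i ≤ n, 1 ≤ k ≤ d_i) be i.i.d. uniform on [0,1] random variables independent of X. Then the random vectors X_1,…,X_n are independent if and only if their componentwise distributional transforms T_{X_1}(X_1,U_1),…,T_{X_n}(X_n,U_n) are independent. -/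
open MeasureTheory ProbabilityTheory Set Filter Topology

section Aux

variable {Ω : Type*} [MeasurableSpace Ω]

lemma aux_pair_indep {μ : Measure Ω} [IsProbabilityMeasure μ]
    {ι : Type*} {β γ : ι → Type*} [mβ : ∀ i, MeasurableSpace (β i)]
    [mγ : ∀ i, MeasurableSpace (γ i)]
    {f : ∀ i, Ω → β i} {g : ∀ i, Ω → γ i}
    (hf : ∀ i, Measurable (f i)) (hg : ∀ i, Measurable (g i))
    (hfi : iIndepFun f μ) (hgi : iIndepFun g μ)
    (hfg : IndepFun (fun ω i => f i ω) (fun ω i => g i ω) μ) :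
    iIndepFun (fun i ω => (f i ω, g i ω)) μ := by
  classical
  rw [iIndepFun_iff_iIndep]
  set π : ι → Set (Set Ω) := fun i =>
    {s | ∃ A B, MeasurableSet A ∧ MeasurableSet B ∧ s = f i ⁻¹' A ∩ g i ⁻¹' B} with hπ
  have hgen : ∀ i, MeasurableSpace.comap (fun ω => (f i ω, g i ω)) ((mβ i).prod (mγ i))
      = MeasurableSpace.generateFrom (π i) := by
    intro i
    have hpp : ((mβ i).prod (mγ i) : MeasurableSpace (β i × γ i)) = Prod.instMeasurableSpace := rfl
    rw [hpp, ← @generateFrom_prod (β i) (γ i) (mβ i) (mγ i), MeasurableSpace.comap_generateFrom]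
    congr 1
    ext s
    constructor
    · rintro ⟨-, ⟨A, hA, B, hB, rfl⟩, rfl⟩
      exact ⟨A, B, hA, hB, by ext ω; simp⟩
    · rintro ⟨A, B, hA, hB, rfl⟩
      exact ⟨A ×ˢ B, ⟨A, hA, B, hB, rfl⟩, by ext ω; simp⟩
  have hle : ∀ i, MeasurableSpace.comap (fun ω => (f i ω, g i ω)) ((mβ i).prod (mγ i))
      ≤ ‹MeasurableSpace Ω› := fun i => measurable_iff_comap_le.mp ((hf i).prodMk (hg i))
  refine iIndepSets.iIndep hle π ?_ hgen ?_
  · intro i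
    rintro s ⟨A, B, hA, hB, rfl⟩ t ⟨A', B', hA', hB', rfl⟩ -
    exact ⟨A ∩ A', B ∩ B', hA.inter hA', hB.inter hB', by ext ω; simp; tauto⟩
  · rw [iIndepSets_iff]
    intro S sets hsets
    have h' : ∀ i ∈ S, ∃ A B, MeasurableSet A ∧ MeasurableSet B ∧
        sets i = f i ⁻¹' A ∩ g i ⁻¹' B := hsets
    choose! A B hA hB hAB using h'
    have hsetsF : (⋂ i ∈ S, f i ⁻¹' A i) = (fun ω i => f i ω) ⁻¹' Set.pi (↑S) A := by
      ext ω; simp [Set.mem_pi]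
    have hsetsG : (⋂ i ∈ S, g i ⁻¹' B i) = (fun ω i => g i ω) ⁻¹' Set.pi (↑S) B := by
      ext ω; simp [Set.mem_pi]
    have hsplit : (⋂ i ∈ S, sets i) = (⋂ i ∈ S, f i ⁻¹' A i) ∩ ⋂ i ∈ S, g i ⁻¹' B i := by
      ext ω
      simp only [Set.mem_iInter, Set.mem_inter_iff]
      constructor
      · intro h
        constructor <;> intro i hi <;>
          · have := h i hi; rw [hAB i hi] at this
            first | exact this.1 | exact this.2
      · intro h i hi; rw [hAB i hi]; exact ⟨h.1 i hi, h.2 i hi⟩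
    have hPiA : MeasurableSet (Set.pi (↑S) A) :=
      MeasurableSet.pi S.countable_toSet (fun i hi => hA i hi)
    have hPiB : MeasurableSet (Set.pi (↑S) B) :=
      MeasurableSet.pi S.countable_toSet (fun i hi => hB i hi)
    calc μ (⋂ i ∈ S, sets i)
        = μ (((fun ω i => f i ω) ⁻¹' Set.pi (↑S) A) ∩ ((fun ω i => g i ω) ⁻¹' Set.pi (↑S) B)) := by
          rw [hsplit, hsetsF, hsetsG]
      _ = μ ((fun ω i => f i ω) ⁻¹' Set.pi (↑S) A) * μ ((fun ω i => g i ω) ⁻¹' Set.pi (↑S) B) :=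
          hfg.measure_inter_preimage_eq_mul _ _ hPiA hPiB
      _ = (∏ i ∈ S, μ (f i ⁻¹' A i)) * ∏ i ∈ S, μ (g i ⁻¹' B i) := by
          rw [← hsetsF, ← hsetsG, (iIndepFun_iff_measure_inter_preimage_eq_mul.mp hfi) S hA,
            (iIndepFun_iff_measure_inter_preimage_eq_mul.mp hgi) S hB]
      _ = ∏ i ∈ S, (μ (f i ⁻¹' A i) * μ (g i ⁻¹' B i)) := Finset.prod_mul_distrib.symm
      _ = ∏ i ∈ S, μ (sets i) := by
          refine Finset.prod_congr rfl (fun i hi => ?_)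
          rw [hAB i hi]
          exact ((hfg.comp (measurable_pi_apply i) (measurable_pi_apply i)).measure_inter_preimage_eq_mul
            (A i) (B i) (hA i hi) (hB i hi)).symm

lemma aux_group_indep {μ : Measure Ω} [IsProbabilityMeasure μ] {n : ℕ} {d : Fin n → ℕ}
    (U : (i : Fin n) → Ω → (Fin (d i) → ℝ)) (hU : ∀ i, Measurable (U i))
    (hUcomp : iIndepFun
      (fun (p : Σ i : Fin n, Fin (d i)) ω => U p.1 ω p.2) μ) :
    iIndepFun U μ := by
  classical
  rw [iIndepFun_iff_iIndep]
  set π : Fin n → Set (Set Ω) := fun i =>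
    {s | ∃ A : Fin (d i) → Set ℝ, (∀ k, MeasurableSet (A k)) ∧
      s = ⋂ k, (fun ω => U i ω k) ⁻¹' A k} with hπ
  have hgen : ∀ i, MeasurableSpace.comap (U i) inferInstance
      = MeasurableSpace.generateFrom (π i) := by
    intro i
    have hpp : (inferInstance : MeasurableSpace (Fin (d i) → ℝ)) = MeasurableSpace.pi := rfl
    rw [hpp, ← generateFrom_pi, MeasurableSpace.comap_generateFrom]
    congr 1
    ext s
    constructor
    · rintro ⟨-, ⟨A, hA, rfl⟩, rfl⟩
      exact ⟨A, fun k => hA k (Set.mem_univ k), by ext ω; simp [Set.mem_pi]⟩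
    · rintro ⟨A, hA, rfl⟩
      exact ⟨Set.pi Set.univ A, ⟨A, fun k _ => hA k, rfl⟩, by ext ω; simp [Set.mem_pi]⟩
  have hle : ∀ i, MeasurableSpace.comap (U i) inferInstance ≤ ‹MeasurableSpace Ω› :=
    fun i => measurable_iff_comap_le.mp (hU i)
  refine iIndepSets.iIndep hle π ?_ hgen ?_
  · intro i
    rintro s ⟨A, hA, rfl⟩ t ⟨A', hA', rfl⟩ -
    refine ⟨fun k => A k ∩ A' k, fun k => (hA k).inter (hA' k), ?_⟩
    ext ω
    simp only [Set.mem_inter_iff, Set.mem_iInter, Set.mem_preimage]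
    constructor
    · rintro ⟨h1, h2⟩ k; exact ⟨h1 k, h2 k⟩
    · intro h; exact ⟨fun k => (h k).1, fun k => (h k).2⟩
  · rw [iIndepSets_iff]
    intro S sets hsets
    have h' : ∀ i ∈ S, ∃ A : Fin (d i) → Set ℝ, (∀ k, MeasurableSet (A k)) ∧
        sets i = ⋂ k, (fun ω => U i ω k) ⁻¹' A k := hsets
    choose! A hA hAeq using h'
    have hcrit := iIndepFun_iff_measure_inter_preimage_eq_mul.mp hUcomp
    -- global sets over the sigma type
    set sets' : (p : Σ i : Fin n, Fin (d i)) → Set ℝ := fun p => A p.1 p.2 with hsets'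
    have key : ∀ (T : Finset (Fin n)), (∀ i ∈ T, i ∈ S) →
        μ (⋂ i ∈ T, sets i) = ∏ i ∈ T, μ (sets i) → True := fun _ _ _ => trivial
    have h1 : (⋂ i ∈ S, sets i)
        = ⋂ p ∈ S.sigma (fun i => (Finset.univ : Finset (Fin (d i)))),
            (fun ω => U p.1 ω p.2) ⁻¹' sets' p := by
      ext ω
      simp only [Set.mem_iInter, Finset.mem_sigma, Finset.mem_univ, and_true]
      constructor
      · rintro h ⟨i, k⟩ hi
        have := h i hi
        rw [hAeq i hi] at this
        simp only [Set.mem_iInter, Set.mem_preimage] at this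
        exact this k
      · intro h i hi
        rw [hAeq i hi]
        simp only [Set.mem_iInter, Set.mem_preimage]
        exact fun k => h ⟨i, k⟩ hi
    have hmeas : ∀ p ∈ S.sigma (fun i => (Finset.univ : Finset (Fin (d i)))),
        MeasurableSet (sets' p) := by
      rintro ⟨i, k⟩ hp
      rw [Finset.mem_sigma] at hp
      exact hA i hp.1 k
    have hone : ∀ i ∈ S, μ (sets i)
        = ∏ k : Fin (d i), μ ((fun ω => U i ω k) ⁻¹' A i k) := by
      intro i hi
      have hT := hcrit (({i} : Finset (Fin n)).sigma (fun j => (Finset.univ : Finset (Fin (d j)))))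
        (sets := sets') ?_
      · have h2 : (⋂ p ∈ ({i} : Finset (Fin n)).sigma
            (fun j => (Finset.univ : Finset (Fin (d j)))),
            (fun ω => U p.1 ω p.2) ⁻¹' sets' p) = sets i := by
          ext ω
          simp only [Set.mem_iInter, Finset.mem_sigma, Finset.mem_singleton, Finset.mem_univ,
            and_true]
          rw [hAeq i hi]
          simp only [Set.mem_iInter, Set.mem_preimage]
          constructor
          · intro h k; exact h ⟨i, k⟩ rfl
          · rintro h ⟨j, k⟩ hj; subst hj; exact h k
        rw [h2] at hT
        rw [hT, Finset.prod_sigma]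
        simp [hsets']
      · rintro ⟨j, k⟩ hp
        rw [Finset.mem_sigma, Finset.mem_singleton] at hp
        obtain ⟨hj, -⟩ := hp
        subst hj
        exact hA j hi k
    rw [h1, hcrit _ hmeas, Finset.prod_sigma]
    exact Finset.prod_congr rfl fun i hi => by
      simp only [hsets']
      exact (hone i hi).symm

noncomputable def qF (P : Measure Ω) (Y : Ω → ℝ) (x : ℝ) : ℝ := (P {ω | Y ω ≤ x}).toReal

noncomputable def quant (P : Measure Ω) (Y : Ω → ℝ) (t : ℝ) : ℝ := sInf {x | t ≤ qF P Y x}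

lemma qF_mono (P : Measure Ω) [IsProbabilityMeasure P] (Y : Ω → ℝ) : Monotone (qF P Y) :=
  fun x y hxy =>
    ENNReal.toReal_mono (measure_ne_top _ _) (measure_mono fun ω (h : Y ω ≤ x) => h.trans hxy)

lemma qF_eq_cdf (P : Measure Ω) [IsProbabilityMeasure P] {Y : Ω → ℝ} (hY : Measurable Y) :
    qF P Y = cdf (P.map Y) := by
  haveI : IsProbabilityMeasure (P.map Y) := Measure.isProbabilityMeasure_map hY.aemeasurable
  funext x
  rw [cdf_eq_real, measureReal_def, Measure.map_apply hY measurableSet_Iic]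
  rfl

lemma qF_nonneg (P : Measure Ω) (Y : Ω → ℝ) (x : ℝ) : 0 ≤ qF P Y x := ENNReal.toReal_nonneg

lemma qF_le_one (P : Measure Ω) [IsProbabilityMeasure P] (Y : Ω → ℝ) (x : ℝ) : qF P Y x ≤ 1 := by
  have h := prob_le_one (μ := P) (s := {ω | Y ω ≤ x})
  calc (P {ω | Y ω ≤ x}).toReal ≤ (1 : ENNReal).toReal :=
        ENNReal.toReal_mono ENNReal.one_ne_top h
    _ = 1 := by simp

lemma quant_le_iff {P : Measure Ω} [IsProbabilityMeasure P] {Y : Ω → ℝ} (hY : Measurable Y)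
    {t a : ℝ} (ht0 : 0 < t) (ht1 : t < 1) :
    quant P Y t ≤ a ↔ t ≤ qF P Y a := by
  haveI : IsProbabilityMeasure (P.map Y) := Measure.isProbabilityMeasure_map hY.aemeasurable
  have hcdf := qF_eq_cdf P hY
  have hmono : Monotone (qF P Y) := qF_mono P Y
  have hne : {x | t ≤ qF P Y x}.Nonempty := by
    have h := (tendsto_cdf_atTop (μ := P.map Y)).eventually_const_lt ht1
    rw [← hcdf] at h
    obtain ⟨x, hx⟩ := h.exists
    exact ⟨x, hx.le⟩
  have hbdd : BddBelow {x | t ≤ qF P Y x} := by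
    have h := (tendsto_cdf_atBot (μ := P.map Y)).eventually_lt_const ht0
    rw [← hcdf] at h
    obtain ⟨x₀, hx₀⟩ := h.exists
    exact ⟨x₀, fun x hx =>
      le_of_not_gt fun hlt => absurd hx (not_le.2 ((hmono hlt.le).trans_lt hx₀))⟩
  constructor
  · intro h
    have hq : t ≤ qF P Y (quant P Y t) := by
      have h1 : ∀ y, quant P Y t < y → t ≤ qF P Y y := by
        intro y hy
        obtain ⟨z, hz, hzy⟩ : ∃ z ∈ {x | t ≤ qF P Y x}, z < y := by
          by_contra hcon
          push_neg at hcon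
          exact absurd (le_csInf hne hcon) (not_le.2 hy)
        exact hz.trans (hmono hzy.le)
      have h2 : Tendsto (qF P Y) (𝓝[>] (quant P Y t)) (𝓝 (qF P Y (quant P Y t))) := by
        rw [hcdf]
        exact ((cdf (P.map Y)).right_continuous _).mono_left
          (nhdsWithin_mono _ Ioi_subset_Ici_self)
      exact ge_of_tendsto h2 (eventually_mem_nhdsWithin.mono fun y hy => h1 y hy)
    exact hq.trans (hmono h)
  · intro h
    exact csInf_le hbdd h

lemma quant_measurable {P : Measure Ω} [IsProbabilityMeasure P] {Y : Ω → ℝ} (hY : Measurable Y) :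
    Measurable (quant P Y) := by
  have h0 : ∀ t ≤ (0:ℝ), quant P Y t = 0 := by
    intro t ht
    have hu : {x | t ≤ qF P Y x} = Set.univ :=
      Set.eq_univ_of_forall fun x => le_trans ht (qF_nonneg P Y x)
    rw [quant, hu, Real.sInf_of_not_bddBelow]
    rintro ⟨c, hc⟩
    have h1 := hc (Set.mem_univ (c - 1))
    linarith
  have h1 : ∀ t > (1:ℝ), quant P Y t = 0 := by
    intro t ht
    have he : {x | t ≤ qF P Y x} = ∅ :=
      Set.eq_empty_iff_forall_notMem.2 fun x hx =>
        absurd (le_trans hx (qF_le_one P Y x)) (not_le.2 ht)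
    rw [quant, he, Real.sInf_empty]
  apply measurable_of_Iic
  intro a
  set Q : Set ℝ := quant P Y ⁻¹' Iic a with hQ
  have hsplit : Q = (Iic 0 ∩ Q) ∪ (Ioo 0 1 ∩ Q) ∪ ({1} ∩ Q) ∪ (Ioi 1 ∩ Q) := by
    have huniv : (Iic (0:ℝ)) ∪ (Ioo 0 1) ∪ {1} ∪ (Ioi 1) = Set.univ := by
      ext t
      simp only [Set.mem_union, Set.mem_Iic, Set.mem_Ioo, Set.mem_singleton_iff, Set.mem_Ioi,
        Set.mem_univ, iff_true]
      rcases le_or_gt t 0 with h | h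
      · exact Or.inl (Or.inl (Or.inl h))
      · rcases lt_trichotomy t 1 with h' | h' | h'
        · exact Or.inl (Or.inl (Or.inr ⟨h, h'⟩))
        · exact Or.inl (Or.inr h')
        · exact Or.inr h'
    rw [← Set.union_inter_distrib_right, ← Set.union_inter_distrib_right,
      ← Set.union_inter_distrib_right, huniv, Set.univ_inter]
  have p1 : MeasurableSet (Iic (0:ℝ) ∩ Q) := by
    by_cases h0a : (0:ℝ) ≤ a
    · have : Iic (0:ℝ) ∩ Q = Iic 0 :=
        Set.inter_eq_self_of_subset_left fun t ht => by
          simp only [hQ, Set.mem_preimage, Set.mem_Iic]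
          rw [h0 t ht]; exact h0a
      rw [this]; exact measurableSet_Iic
    · have : Iic (0:ℝ) ∩ Q = ∅ := by
        rw [Set.eq_empty_iff_forall_notMem]
        rintro t ⟨ht, htQ⟩
        simp only [hQ, Set.mem_preimage, Set.mem_Iic] at htQ
        rw [h0 t ht] at htQ
        exact h0a htQ
      rw [this]; exact MeasurableSet.empty
  have p4 : MeasurableSet (Ioi (1:ℝ) ∩ Q) := by
    by_cases h0a : (0:ℝ) ≤ a
    · have : Ioi (1:ℝ) ∩ Q = Ioi 1 :=
        Set.inter_eq_self_of_subset_left fun t ht => by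
          simp only [hQ, Set.mem_preimage, Set.mem_Iic]
          rw [h1 t ht]; exact h0a
      rw [this]; exact measurableSet_Ioi
    · have : Ioi (1:ℝ) ∩ Q = ∅ := by
        rw [Set.eq_empty_iff_forall_notMem]
        rintro t ⟨ht, htQ⟩
        simp only [hQ, Set.mem_preimage, Set.mem_Iic] at htQ
        rw [h1 t ht] at htQ
        exact h0a htQ
      rw [this]; exact MeasurableSet.empty
  have p2 : MeasurableSet (Ioo (0:ℝ) 1 ∩ Q) := by
    have : Ioo (0:ℝ) 1 ∩ Q = Ioo 0 1 ∩ Iic (qF P Y a) := by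
      ext t
      simp only [Set.mem_inter_iff, Set.mem_Ioo, hQ, Set.mem_preimage, Set.mem_Iic]
      constructor
      · rintro ⟨⟨h0t, h1t⟩, htQ⟩
        exact ⟨⟨h0t, h1t⟩, (quant_le_iff hY h0t h1t).mp htQ⟩
      · rintro ⟨⟨h0t, h1t⟩, htQ⟩
        exact ⟨⟨h0t, h1t⟩, (quant_le_iff hY h0t h1t).mpr htQ⟩
    rw [this]; exact measurableSet_Ioo.inter measurableSet_Iic
  have p3 : MeasurableSet (({1} : Set ℝ) ∩ Q) :=
    (Set.Countable.mono Set.inter_subset_left (Set.countable_singleton 1)).measurableSet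
  rw [hsplit]
  exact ((p1.union p2).union p3).union p4

lemma meas_le_split (P : Measure Ω) {Y : Ω → ℝ} (hY : Measurable Y) (x : ℝ) :
    P {ω | Y ω ≤ x} = P {ω | Y ω < x} + P {ω | Y ω = x} := by
  rw [← measure_union _ (show MeasurableSet {ω | Y ω = x} from hY (measurableSet_singleton x))]
  · congr 1
    ext ω
    simp only [Set.mem_union, Set.mem_setOf_eq]
    exact le_iff_lt_or_eq
  · rw [Set.disjoint_left]
    rintro ω (h1 : Y ω < x) (h2 : Y ω = x)
    exact absurd h2 (ne_of_lt h1)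

lemma quant_inv {P : Measure Ω} [IsProbabilityMeasure P] {Y W : Ω → ℝ}
    (hY : Measurable Y) (hW : Measurable W)
    (hWlaw : P.map W = volume.restrict (Icc (0:ℝ) 1)) :
    ∀ᵐ ω ∂P, quant P Y
      ((P {ω' | Y ω' < Y ω}).toReal + W ω * (P {ω' | Y ω' = Y ω}).toReal) = Y ω := by
  have hE1 : ∀ᵐ ω ∂P, W ω ∈ Ioc (0:ℝ) 1 := by
    rw [ae_iff]
    have he : {ω | ¬ W ω ∈ Ioc (0:ℝ) 1} = W ⁻¹' (Ioc (0:ℝ) 1)ᶜ := rfl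
    rw [he, ← Measure.map_apply hW measurableSet_Ioc.compl, hWlaw,
      Measure.restrict_apply measurableSet_Ioc.compl]
    have h2 : (Ioc (0:ℝ) 1)ᶜ ∩ Icc 0 1 = {(0:ℝ)} := by
      ext x
      simp only [Set.mem_inter_iff, Set.mem_compl_iff, Set.mem_Ioc, Set.mem_Icc,
        Set.mem_singleton_iff, not_and_or, not_lt, not_le]
      constructor
      · rintro ⟨h1 | h1, h2, h3⟩
        · linarith
        · linarith
      · rintro rfl
        exact ⟨Or.inl le_rfl, le_rfl, zero_le_one⟩
    rw [h2]
    exact Real.volume_singleton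
  have hE2 : ∀ᵐ ω ∂P, ∀ q : ℚ, (q:ℝ) < Y ω → P {ω' | Y ω' ∈ Ioc (q:ℝ) (Y ω)} ≠ 0 := by
    rw [ae_all_iff]
    intro q
    rw [ae_iff]
    have he : {ω | ¬((q:ℝ) < Y ω → P {ω' | Y ω' ∈ Ioc (q:ℝ) (Y ω)} ≠ 0)}
        = Y ⁻¹' {y | (q:ℝ) < y ∧ P {ω' | Y ω' ∈ Ioc (q:ℝ) y} = 0} := by
      ext ω
      simp only [Set.mem_setOf_eq, Set.mem_preimage, Classical.not_imp, not_not]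
    rw [he]
    set A : Set ℝ := {y | (q:ℝ) < y ∧ P {ω' | Y ω' ∈ Ioc (q:ℝ) y} = 0} with hA
    set C : ℚ → Set ℝ := fun r => if (q:ℝ) < (r:ℝ) ∧ P {ω' | Y ω' ∈ Ioc (q:ℝ) (r:ℝ)} = 0
        then Ioc (q:ℝ) (r:ℝ) else ∅ with hC
    set Mx : Set ℝ := {y | y ∈ A ∧ ∀ z ∈ A, z ≤ y} with hMx
    have hcov : A ⊆ (⋃ r : ℚ, C r) ∪ Mx := by
      intro z hz
      by_cases hex : ∃ y ∈ A, z < y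
      · obtain ⟨y, hyA, hzy⟩ := hex
        obtain ⟨r, hr1, hr2⟩ := exists_rat_btwn hzy
        refine Or.inl (Set.mem_iUnion.2 ⟨r, ?_⟩)
        have hmr : P {ω' | Y ω' ∈ Ioc (q:ℝ) (r:ℝ)} = 0 :=
          le_antisymm (le_trans (measure_mono fun ω hω => by
            simp only [Set.mem_setOf_eq, Set.mem_Ioc] at hω ⊢
            exact ⟨hω.1, hω.2.trans hr2.le⟩) hyA.2.le) zero_le
        have : C r = Ioc (q:ℝ) (r:ℝ) := by
          rw [hC]
          exact if_pos ⟨lt_trans hz.1 hr1, hmr⟩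
        rw [this]
        exact ⟨hz.1, hr1.le⟩
      · refine Or.inr ⟨hz, ?_⟩
        push_neg at hex
        exact hex
    refine measure_mono_null (Set.preimage_mono hcov) ?_
    rw [Set.preimage_union]
    refine measure_union_null ?_ ?_
    · rw [Set.preimage_iUnion]
      refine measure_iUnion_null fun r => ?_
      by_cases h : (q:ℝ) < (r:ℝ) ∧ P {ω' | Y ω' ∈ Ioc (q:ℝ) (r:ℝ)} = 0
      · simp only [hC, if_pos h]
        exact h.2
      · simp only [hC, if_neg h]
        simp
    · rcases Set.eq_empty_or_nonempty Mx with hMe | ⟨s, hs⟩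
      · rw [hMe]; simp
      · have hsub : Y ⁻¹' Mx ⊆ {ω | Y ω = s} := by
          intro ω hω
          exact le_antisymm (hs.2 (Y ω) hω.1) (hω.2 s hs.1)
        refine measure_mono_null hsub ?_
        refine measure_mono_null (fun ω (hω : Y ω = s) => ?_) hs.1.2
        refine (⟨?_, ?_⟩ : Y ω ∈ Ioc (q:ℝ) s)
        · rw [hω]; exact hs.1.1
        · rw [hω]
  filter_upwards [hE1, hE2] with ω hu hb
  set y := Y ω with hy
  set u := W ω with huu
  set t := (P {ω' | Y ω' < y}).toReal + u * (P {ω' | Y ω' = y}).toReal with hts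
  have hFy : qF P Y y = (P {ω' | Y ω' < y}).toReal + (P {ω' | Y ω' = y}).toReal := by
    rw [qF, meas_le_split P hY y, ENNReal.toReal_add (measure_ne_top _ _) (measure_ne_top _ _)]
  have htle : t ≤ qF P Y y := by
    rw [hFy, hts]
    have h := mul_le_of_le_one_left (ENNReal.toReal_nonneg :
      (0:ℝ) ≤ (P {ω' | Y ω' = y}).toReal) hu.2
    linarith
  have hlt : ∀ x, x < y → qF P Y x < t := by
    intro x hxy
    have hxle : qF P Y x ≤ (P {ω' | Y ω' < y}).toReal :=
      ENNReal.toReal_mono (measure_ne_top _ _)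
        (measure_mono fun ω' (h : Y ω' ≤ x) => lt_of_le_of_lt h hxy)
    by_cases hp : P {ω' | Y ω' = y} = 0
    · obtain ⟨r, hr1, hr2⟩ := exists_rat_btwn hxy
      have hq := hb r hr2
      have hsplit2 : P {ω' | Y ω' ≤ y} = P {ω' | Y ω' ≤ x} + P {ω' | Y ω' ∈ Ioc x y} := by
        rw [← measure_union _ (show MeasurableSet {ω' | Y ω' ∈ Ioc x y} from hY measurableSet_Ioc)]
        · congr 1
          ext ω'
          simp only [Set.mem_union, Set.mem_setOf_eq, Set.mem_Ioc]
          constructor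
          · intro h
            rcases le_or_gt (Y ω') x with h' | h'
            · exact Or.inl h'
            · exact Or.inr ⟨h', h⟩
          · rintro (h | h)
            · exact h.trans hxy.le
            · exact h.2
        · rw [Set.disjoint_left]
          rintro ω' (h1 : Y ω' ≤ x) h2
          exact absurd h2.1 (not_lt.2 h1)
      have hlt2 : P {ω' | Y ω' ≤ x} < P {ω' | Y ω' ≤ y} := by
        rw [hsplit2]
        refine ENNReal.lt_add_right (measure_ne_top _ _) ?_
        intro h0
        refine hq (measure_mono_null (fun ω' h' => ?_) h0)
        simp only [Set.mem_setOf_eq, Set.mem_Ioc] at h' ⊢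
        exact ⟨lt_trans hr1 h'.1, h'.2⟩
      have hstrict : qF P Y x < qF P Y y :=
        (ENNReal.toReal_lt_toReal (measure_ne_top _ _) (measure_ne_top _ _)).mpr hlt2
      have hteq : t = qF P Y y := by
        rw [hFy, hts, hp]
        simp
      rw [hteq]
      exact hstrict
    · have hppos : 0 < (P {ω' | Y ω' = y}).toReal := ENNReal.toReal_pos hp (measure_ne_top _ _)
      have hpos : 0 < u * (P {ω' | Y ω' = y}).toReal := mul_pos hu.1 hppos
      calc qF P Y x ≤ (P {ω' | Y ω' < y}).toReal := hxle
        _ < t := by rw [hts]; linarith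
  show sInf {x | t ≤ qF P Y x} = y
  apply le_antisymm
  · exact csInf_le ⟨y, fun x hx => le_of_not_gt fun hxy => absurd hx (not_le.2 (hlt x hxy))⟩ htle
  · exact le_csInf ⟨y, htle⟩ fun x hx => le_of_not_gt fun hxy => absurd hx (not_le.2 (hlt x hxy))

lemma meas_le_split' (P : Measure Ω) {Y : Ω → ℝ} (hY : Measurable Y) (x : ℝ) :
    P {ω | Y ω ≤ x} = P {ω | Y ω < x} + P {ω | Y ω = x} := by
  rw [← measure_union _ (show MeasurableSet {ω | Y ω = x} from hY (measurableSet_singleton x))]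
  · congr 1
    ext ω
    simp only [Set.mem_union, Set.mem_setOf_eq]
    exact le_iff_lt_or_eq
  · rw [Set.disjoint_left]
    rintro ω (h1 : Y ω < x) (h2 : Y ω = x)
    exact absurd h2 (ne_of_lt h1)

lemma aux_ae_indep {ι : Type*} [Countable ι] {β : ι → Type*} [m : ∀ i, MeasurableSpace (β i)]
    {f g : ∀ i, Ω → β i} {μ : Measure Ω}
    (h : iIndepFun f μ) (hfg : ∀ i, f i =ᵐ[μ] g i) : iIndepFun g μ := by
  rw [iIndepFun_iff_measure_inter_preimage_eq_mul] at h ⊢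
  intro S sets hmeas
  have hae : ∀ᵐ ω ∂μ, ∀ i, i ∈ S → f i ω = g i ω := by
    rw [ae_all_iff]
    intro i
    filter_upwards [hfg i] with ω h' _
    exact h'
  have e1 : (⋂ i ∈ S, g i ⁻¹' sets i : Set Ω) =ᵐ[μ] (⋂ i ∈ S, f i ⁻¹' sets i : Set Ω) := by
    rw [Filter.eventuallyEq_set]
    filter_upwards [hae] with ω hω
    simp only [Set.mem_iInter, Set.mem_preimage]
    constructor
    · intro h' i hi
      rw [hω i hi]
      exact h' i hi
    · intro h' i hi
      rw [← hω i hi]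
      exact h' i hi
  rw [measure_congr e1, h S hmeas]
  refine Finset.prod_congr rfl fun i hi => measure_congr ?_
  rw [Filter.eventuallyEq_set]
  filter_upwards [hfg i] with ω hω
  simp only [Set.mem_preimage]
  rw [hω]

lemma distTransform_measurable {P : Measure Ω} [IsProbabilityMeasure P] {Y : Ω → ℝ}
    (hY : Measurable Y) :
    Measurable (fun q : ℝ × ℝ => distTransform P Y q.1 q.2) := by
  have h1 : Monotone (fun x => (P {ω | Y ω < x}).toReal) := fun x y hxy =>
    ENNReal.toReal_mono (measure_ne_top _ _)
      (measure_mono fun ω (h : Y ω < x) => lt_of_lt_of_le h hxy)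
  have h2 : Monotone (qF P Y) := fun x y hxy =>
    ENNReal.toReal_mono (measure_ne_top _ _) (measure_mono fun ω (h : Y ω ≤ x) => h.trans hxy)
  have hp : (fun x => (P {ω | Y ω = x}).toReal)
      = fun x => qF P Y x - (P {ω | Y ω < x}).toReal := by
    funext x
    rw [qF, meas_le_split' P hY x,
      ENNReal.toReal_add (measure_ne_top _ _) (measure_ne_top _ _)]
    ring
  have hpm : Measurable (fun x => (P {ω | Y ω = x}).toReal) := by
    rw [hp]
    exact h2.measurable.sub h1.measurable
  exact (h1.measurable.comp measurable_fst).add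
    (measurable_snd.mul (hpm.comp measurable_fst))

end Aux

/-- The random vectors `X_1,…,X_n` are independent if and only if their
componentwise distributional transforms `T_{X_1}(X_1,U_1),…,T_{X_n}(X_n,U_n)` are
independent, where the `U_{i,k}` are i.i.d. uniform on `[0,1]` and independent of `X`. -/
theorem distTransform_indep_iff {Ω : Type*} [MeasurableSpace Ω]
    (P : Measure Ω) [IsProbabilityMeasure P] {n : ℕ} {d : Fin n → ℕ}
    (X U : (i : Fin n) → Ω → (Fin (d i) → ℝ))
    (hX : ∀ i, Measurable (X i)) (hU : ∀ i, Measurable (U i))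
    (hUunif : ∀ (i : Fin n) (k : Fin (d i)),
      Measure.map (fun ω => U i ω k) P = volume.restrict (Icc (0:ℝ) 1))
    (hUcomp : iIndepFun
      (fun (p : Σ i : Fin n, Fin (d i)) ω => U p.1 ω p.2) P)
    (hXU : IndepFun (fun ω i => X i ω) (fun ω i => U i ω) P) :
    iIndepFun X P ↔
      iIndepFun
        (fun (i : Fin n) (ω : Ω) (k : Fin (d i)) =>
          distTransform P (fun ω' => X i ω' k) (X i ω k) (U i ω k)) P := by
  have hYm : ∀ (i : Fin n) (k : Fin (d i)), Measurable (fun ω => X i ω k) :=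
    fun i k => (measurable_pi_apply k).comp (hX i)
  have hWm : ∀ (i : Fin n) (k : Fin (d i)), Measurable (fun ω => U i ω k) :=
    fun i k => (measurable_pi_apply k).comp (hU i)
  have hUg : iIndepFun U P := aux_group_indep U hU hUcomp
  constructor
  · intro hXi
    have hpair := aux_pair_indep hX hU hXi hUg hXU
    have hcomp := hpair.comp
      (fun i (q : (Fin (d i) → ℝ) × (Fin (d i) → ℝ)) (k : Fin (d i)) =>
        distTransform P (fun ω' => X i ω' k) (q.1 k) (q.2 k))
      (fun i => measurable_pi_lambda _ fun k => by
        have hmeas := (distTransform_measurable (P := P) (hYm i k)).comp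
          ((((measurable_pi_apply k).comp measurable_fst)).prodMk
            ((measurable_pi_apply k).comp measurable_snd) :
            Measurable (fun q : (Fin (d i) → ℝ) × (Fin (d i) → ℝ) => (q.1 k, q.2 k)))
        exact hmeas)
    exact hcomp
  · intro hT
    have hq : ∀ i, Measurable (fun (v : Fin (d i) → ℝ) (k : Fin (d i)) =>
        quant P (fun ω => X i ω k) (v k)) := fun i =>
      measurable_pi_lambda _ fun k => (quant_measurable (hYm i k)).comp (measurable_pi_apply k)
    have hcomp := hT.comp _ hq
    refine aux_ae_indep hcomp ?_
    intro i
    have hae : ∀ᵐ ω ∂P, ∀ k : Fin (d i),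
        quant P (fun ω' => X i ω' k)
          (distTransform P (fun ω' => X i ω' k) (X i ω k) (U i ω k)) = X i ω k := by
      rw [ae_all_iff]
      intro k
      exact quant_inv (hYm i k) (hWm i k) (hUunif i k)
    filter_upwards [hae] with ω hω
    funext k
    exact hω k
end

section
/- Fundamental theorem of the empirical distributional transform: Let X^{(k)}, k ∈ ℕ, be independent copies of a real-valued random variable X. Then lim_{N→∞} sup_{x∈ℝ, u∈[0,1]} |ᴺT(x,u;X^{(1)},…,X^{(N)}) − T_X(x,u)| = 0 almost surely, where T_X(x,u) := P(X < x) + u·P(X = x). -/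
open MeasureTheory ProbabilityTheory Set Filter

/-- The empirical distributional transform based on the first `N` samples of `xs`:
`ᴺT(x,u; x⁽¹⁾,…,x⁽ᴺ⁾) = (1/N) ∑_{k=1}^N [1_{(-∞,x)}(x⁽ᵏ⁾) + u · 1_{{x}}(x⁽ᵏ⁾)]`. -/
noncomputable def empDistTransform (N : ℕ) (xs : ℕ → ℝ) (x u : ℝ) : ℝ :=
  (N : ℝ)⁻¹ * ∑ k ∈ Finset.range N,
    ((if xs k < x then (1:ℝ) else 0) + u * (if xs k = x then (1:ℝ) else 0))

open Topology
open scoped ENNReal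

set_option linter.unusedVariables false
set_option linter.unusedSectionVars false

namespace EmpGC

section Emp



/-- empirical CDF (≤ version) -/
noncomputable def avgLe (N : ℕ) (xs : ℕ → ℝ) (x : ℝ) : ℝ :=
  (N : ℝ)⁻¹ * ∑ k ∈ Finset.range N, (if xs k ≤ x then (1:ℝ) else 0)

/-- empirical CDF (< version) -/
noncomputable def avgLt (N : ℕ) (xs : ℕ → ℝ) (x : ℝ) : ℝ :=
  (N : ℝ)⁻¹ * ∑ k ∈ Finset.range N, (if xs k < x then (1:ℝ) else 0)

lemma avg_aux_mono {N : ℕ} {p q : ℕ → Prop} [DecidablePred p] [DecidablePred q]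
    (h : ∀ k, p k → q k) :
    (N : ℝ)⁻¹ * ∑ k ∈ Finset.range N, (if p k then (1:ℝ) else 0) ≤
      (N : ℝ)⁻¹ * ∑ k ∈ Finset.range N, (if q k then (1:ℝ) else 0) := by
  apply mul_le_mul_of_nonneg_left _ (by positivity)
  apply Finset.sum_le_sum
  intro k _
  by_cases hp : p k
  · simp [hp, h k hp]
  · simp [hp]; positivity

lemma avg_aux_nonneg {N : ℕ} {p : ℕ → Prop} [DecidablePred p] :
    0 ≤ (N : ℝ)⁻¹ * ∑ k ∈ Finset.range N, (if p k then (1:ℝ) else 0) := by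
  apply mul_nonneg (by positivity)
  apply Finset.sum_nonneg
  intro k _; positivity

lemma avg_aux_le_one {N : ℕ} {p : ℕ → Prop} [DecidablePred p] :
    (N : ℝ)⁻¹ * ∑ k ∈ Finset.range N, (if p k then (1:ℝ) else 0) ≤ 1 := by
  rcases Nat.eq_zero_or_pos N with h | h
  · simp [h]
  have h1 : ∑ k ∈ Finset.range N, (if p k then (1:ℝ) else 0) ≤ N := by
    calc ∑ k ∈ Finset.range N, (if p k then (1:ℝ) else 0)
        ≤ ∑ k ∈ Finset.range N, (1:ℝ) := by
          apply Finset.sum_le_sum; intro k _; split <;> norm_num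
      _ = N := by simp
  calc (N : ℝ)⁻¹ * ∑ k ∈ Finset.range N, (if p k then (1:ℝ) else 0)
      ≤ (N : ℝ)⁻¹ * N := by
        apply mul_le_mul_of_nonneg_left h1 (by positivity)
    _ = 1 := by
        rw [inv_mul_cancel₀]
        exact_mod_cast h.ne'

lemma avgLe_nonneg {N xs x} : 0 ≤ avgLe N xs x := avg_aux_nonneg
lemma avgLe_le_one {N xs x} : avgLe N xs x ≤ 1 := avg_aux_le_one
lemma avgLt_nonneg {N xs x} : 0 ≤ avgLt N xs x := avg_aux_nonneg
lemma avgLt_le_one {N xs x} : avgLt N xs x ≤ 1 := avg_aux_le_one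

lemma avgLe_mono {N : ℕ} {xs : ℕ → ℝ} : Monotone (avgLe N xs) :=
  fun _ _ hxy => avg_aux_mono (fun k h => h.trans hxy)

lemma avgLe_le_avgLt {N : ℕ} {xs : ℕ → ℝ} {x y : ℝ} (hxy : x < y) :
    avgLe N xs x ≤ avgLt N xs y :=
  avg_aux_mono (fun k h => lt_of_le_of_lt h hxy)

lemma avgLt_le_avgLe {N : ℕ} {xs : ℕ → ℝ} {x : ℝ} :
    avgLt N xs x ≤ avgLe N xs x :=
  avg_aux_mono (fun k h => le_of_lt h)

/-- For each fixed sample and `x`, the `<`-empirical CDF at `x` equals the `≤`-empirical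
CDF slightly to the left. -/
lemma avgLt_eq_avgLe_sub {N : ℕ} {xs : ℕ → ℝ} {x : ℝ} {h : ℝ} (hh : 0 < h)
    (hgap : ∀ k < N, xs k < x → xs k ≤ x - h) :
    avgLt N xs x = avgLe N xs (x - h) := by
  unfold avgLt avgLe
  congr 1
  apply Finset.sum_congr rfl
  intro k hk
  rw [Finset.mem_range] at hk
  by_cases hlt : xs k < x
  · simp [hlt, hgap k hk hlt]
  · have : ¬ xs k ≤ x - h := by
      intro hc
      exact hlt (lt_of_le_of_lt hc (by linarith))
    simp [hlt, this]


end Emp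

section CDF

variable (μ : Measure ℝ) [IsProbabilityMeasure μ]



/-- the CDF of `μ` -/
noncomputable def cF (t : ℝ) : ℝ := (μ (Iic t)).toReal
/-- the left-continuous CDF of `μ` -/
noncomputable def cFm (t : ℝ) : ℝ := (μ (Iio t)).toReal

lemma cF_nonneg (t : ℝ) : 0 ≤ cF μ t := ENNReal.toReal_nonneg
lemma cFm_nonneg (t : ℝ) : 0 ≤ cFm μ t := ENNReal.toReal_nonneg

lemma toReal_le_one (s : Set ℝ) : (μ s).toReal ≤ 1 := by
  have h := prob_le_one (μ := μ) (s := s)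
  calc (μ s).toReal ≤ (1 : ℝ≥0∞).toReal := ENNReal.toReal_mono (by norm_num) h
    _ = 1 := by simp

lemma cF_le_one (t : ℝ) : cF μ t ≤ 1 := toReal_le_one μ _
lemma cFm_le_one (t : ℝ) : cFm μ t ≤ 1 := toReal_le_one μ _

lemma cF_mono : Monotone (cF μ) := by
  intro x y hxy
  exact ENNReal.toReal_mono (measure_ne_top μ _) (measure_mono (Iic_subset_Iic.2 hxy))

lemma cF_le_cFm {x y : ℝ} (hxy : x < y) : cF μ x ≤ cFm μ y :=
  ENNReal.toReal_mono (measure_ne_top μ _) (measure_mono (fun z hz => lt_of_le_of_lt hz hxy))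

lemma cFm_le_cF (x : ℝ) : cFm μ x ≤ cF μ x :=
  ENNReal.toReal_mono (measure_ne_top μ _) (measure_mono Iio_subset_Iic_self)

/-- Left-limit: `cF (t - 1/(n+1)) → cFm t`. -/
lemma tendsto_cF_left (t : ℝ) :
    Tendsto (fun n : ℕ => cF μ (t - ((n : ℝ) + 1)⁻¹)) atTop (𝓝 (cFm μ t)) := by
  have hU : ⋃ n : ℕ, Iic (t - ((n : ℝ) + 1)⁻¹) = Iio t := by
    ext z
    simp only [mem_iUnion, mem_Iic, mem_Iio]
    constructor
    · rintro ⟨n, hn⟩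
      have : (0:ℝ) < ((n:ℝ)+1)⁻¹ := by positivity
      linarith
    · intro hz
      obtain ⟨n, hn⟩ := exists_nat_one_div_lt (sub_pos.2 hz)
      refine ⟨n, ?_⟩
      rw [one_div] at hn
      linarith
  have hm : Monotone (fun n : ℕ => Iic (t - ((n : ℝ) + 1)⁻¹)) := by
    intro a b hab
    apply Iic_subset_Iic.2
    have : ((b:ℝ)+1)⁻¹ ≤ ((a:ℝ)+1)⁻¹ := by
      apply inv_anti₀ (by positivity)
      have hab' : (a:ℝ) ≤ b := Nat.cast_le.2 hab
      linarith
    linarith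
  have h1 := tendsto_measure_iUnion_atTop (μ := μ) hm
  rw [hU] at h1
  have h2 : Tendsto ENNReal.toReal (𝓝 (μ (Iio t))) (𝓝 (μ (Iio t)).toReal) :=
    ENNReal.tendsto_toReal (measure_ne_top μ _)
  exact h2.comp h1

/-- Right-continuity: `cF (t + 1/(n+1)) → cF t`. -/
lemma tendsto_cF_right (t : ℝ) :
    Tendsto (fun n : ℕ => cF μ (t + ((n : ℝ) + 1)⁻¹)) atTop (𝓝 (cF μ t)) := by
  have hU : ⋂ n : ℕ, Iic (t + ((n : ℝ) + 1)⁻¹) = Iic t := by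
    ext z
    simp only [mem_iInter, mem_Iic]
    constructor
    · intro h
      by_contra hz
      push_neg at hz
      obtain ⟨n, hn⟩ := exists_nat_one_div_lt (sub_pos.2 hz)
      rw [one_div] at hn
      have := h n
      linarith
    · intro hz n
      have : (0:ℝ) < ((n:ℝ)+1)⁻¹ := by positivity
      linarith
  have hm : Antitone (fun n : ℕ => Iic (t + ((n : ℝ) + 1)⁻¹)) := by
    intro a b hab
    apply Iic_subset_Iic.2
    have : ((b:ℝ)+1)⁻¹ ≤ ((a:ℝ)+1)⁻¹ := by
      apply inv_anti₀ (by positivity)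
      have hab' : (a:ℝ) ≤ b := Nat.cast_le.2 hab
      linarith
    linarith
  have h1 := tendsto_measure_iInter_atTop (μ := μ)
    (fun n => measurableSet_Iic.nullMeasurableSet) hm ⟨0, measure_ne_top μ _⟩
  rw [hU] at h1
  have h2 : Tendsto ENNReal.toReal (𝓝 (μ (Iic t))) (𝓝 (μ (Iic t)).toReal) :=
    ENNReal.tendsto_toReal (measure_ne_top μ _)
  exact h2.comp h1

/-- the quantile of `μ` at level `c` -/
noncomputable def quant (c : ℝ) : ℝ := sInf {x | c ≤ cF μ x}

lemma cF_set_nonempty {c : ℝ} (hc1 : c < 1) : {x | c ≤ cF μ x}.Nonempty := by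
  have h1 : Tendsto (fun x => μ (Iic x)) atTop (𝓝 (μ univ)) := tendsto_measure_Iic_atTop μ
  have h2 : Tendsto (cF μ) atTop (𝓝 1) := by
    have := (ENNReal.tendsto_toReal (measure_ne_top μ univ)).comp h1
    simp only [measure_univ, ENNReal.toReal_one] at this
    exact this
  obtain ⟨x, hx⟩ := (h2.eventually (eventually_ge_nhds hc1)).exists
  exact ⟨x, hx⟩

lemma cF_set_bddBelow {c : ℝ} (hc0 : 0 < c) : BddBelow {x | c ≤ cF μ x} := by
  have h1 := tendsto_measure_iInter_atBot (μ := μ)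
    (fun x : ℝ => measurableSet_Iic.nullMeasurableSet) monotone_Iic ⟨0, measure_ne_top μ _⟩
  have hI : ⋂ x : ℝ, Iic x = (∅ : Set ℝ) := by
    ext z; simp only [mem_iInter, mem_Iic, mem_empty_iff_false, iff_false, not_forall, not_le]
    exact ⟨z - 1, by linarith⟩
  rw [hI] at h1
  have h2 : Tendsto (cF μ) atBot (𝓝 0) := by
    have := (ENNReal.tendsto_toReal (by simp : μ (∅ : Set ℝ) ≠ ⊤)).comp h1
    simp only [measure_empty, ENNReal.toReal_zero] at this
    exact this
  obtain ⟨x₀, hx₀⟩ := (h2.eventually (eventually_lt_nhds hc0)).exists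
  refine ⟨x₀, fun y hy => ?_⟩
  by_contra hcon
  push_neg at hcon
  have : cF μ y ≤ cF μ x₀ := cF_mono μ (le_of_lt hcon)
  have : c ≤ cF μ x₀ := le_trans hy this
  linarith

lemma quant_spec {c : ℝ} (hc0 : 0 < c) (hc1 : c < 1) :
    c ≤ cF μ (quant μ c) ∧ cFm μ (quant μ c) ≤ c := by
  have hne := cF_set_nonempty μ hc1
  have hbdd := cF_set_bddBelow μ hc0
  constructor
  · apply ge_of_tendsto (tendsto_cF_right μ (quant μ c))
    apply Eventually.of_forall
    intro n
    have hlt : sInf {x | c ≤ cF μ x} < quant μ c + ((n:ℝ)+1)⁻¹ := by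
      have : (0:ℝ) < ((n:ℝ)+1)⁻¹ := by positivity
      unfold quant; linarith
    obtain ⟨s, hs, hslt⟩ := (csInf_lt_iff hbdd hne).1 hlt
    exact le_trans hs (cF_mono μ (le_of_lt hslt))
  · apply le_of_tendsto (tendsto_cF_left μ (quant μ c))
    apply Eventually.of_forall
    intro n
    by_contra hcon
    push_neg at hcon
    have hmem : quant μ c - ((n:ℝ)+1)⁻¹ ∈ {x | c ≤ cF μ x} := le_of_lt hcon
    have := csInf_le hbdd hmem
    have hpos : (0:ℝ) < ((n:ℝ)+1)⁻¹ := by positivity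
    unfold quant at this
    linarith

lemma quant_mono {c d : ℝ} (hc0 : 0 < c) (hd1 : d < 1) (hcd : c ≤ d) :
    quant μ c ≤ quant μ d := by
  apply csInf_le_csInf (cF_set_bddBelow μ hc0) (cF_set_nonempty μ hd1)
  intro x hx
  exact le_trans hcd hx


end CDF


/-- Deterministic core of the Glivenko–Cantelli theorem: closeness at the quantile grid
points implies uniform closeness. -/
lemma det_bound (F Fm G Gm : ℝ → ℝ) (t : ℕ → ℝ) (m : ℕ) (hm : 1 ≤ m) (δ : ℝ) (hδ : 0 ≤ δ)
    (hF0 : ∀ x, 0 ≤ F x) (hF1 : ∀ x, F x ≤ 1) (hG0 : ∀ x, 0 ≤ G x) (hG1 : ∀ x, G x ≤ 1)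
    (hFmono : Monotone F) (hGmono : Monotone G)
    (hFFm : ∀ x y, x < y → F x ≤ Fm y) (hGGm : ∀ x y, x < y → G x ≤ Gm y)
    (hquant1 : ∀ i, 1 ≤ i → i < m → (i : ℝ)/m ≤ F (t i))
    (hquant2 : ∀ i, 1 ≤ i → i < m → Fm (t i) ≤ (i : ℝ)/m)
    (hclose : ∀ i, 1 ≤ i → i < m → |G (t i) - F (t i)| ≤ δ ∧ |Gm (t i) - Fm (t i)| ≤ δ)
    (x : ℝ) : |G x - F x| ≤ 1/m + δ := by
  classical
  set s : Finset ℕ := (Finset.range m).filter (fun i => i = 0 ∨ t i ≤ x) with hs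
  have h0s : 0 ∈ s := by
    simp [hs, Finset.mem_filter, Finset.mem_range]
    omega
  have hsne : s.Nonempty := ⟨0, h0s⟩
  set i := s.max' hsne with hi
  have himem : i ∈ s := Finset.max'_mem s hsne
  have him : i < m := (Finset.mem_filter.1 himem).1 |> Finset.mem_range.1
  have hit : i = 0 ∨ t i ≤ x := (Finset.mem_filter.1 himem).2
  have hmax : ∀ j, j < m → (j = 0 ∨ t j ≤ x) → j ≤ i := by
    intro j hj hjp
    exact Finset.le_max' s j (Finset.mem_filter.2 ⟨Finset.mem_range.2 hj, hjp⟩)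
  have hmpos : (0:ℝ) < m := by exact_mod_cast hm
  have c1 : (i : ℝ)/m ≤ F x := by
    rcases Nat.eq_zero_or_pos i with h0 | hi1
    · rw [h0]
      simpa using hF0 x
    · rcases hit with h0 | hti
      · omega
      · exact le_trans (hquant1 i hi1 him) (hFmono hti)
  have c2 : F x ≤ ((i : ℝ)+1)/m := by
    by_cases hip : i + 1 < m
    · have hxlt : x < t (i+1) := by
        by_contra hcon
        push_neg at hcon
        have := hmax (i+1) hip (Or.inr hcon)
        omega
      calc F x ≤ Fm (t (i+1)) := hFFm x _ hxlt
        _ ≤ ((i:ℝ)+1)/m := by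
            have := hquant2 (i+1) (by omega) hip
            push_cast at this ⊢
            linarith
    · have heq : i + 1 = m := by omega
      have heq' : ((i:ℝ)+1) = m := by exact_mod_cast heq
      rw [heq', div_self hmpos.ne']
      exact hF1 x
  have c3 : (i : ℝ)/m - δ ≤ G x := by
    rcases Nat.eq_zero_or_pos i with h0 | hi1
    · rw [h0]
      have := hG0 x
      simp only [Nat.cast_zero, zero_div]
      linarith
    · rcases hit with h0 | hti
      · omega
      · have h1 := (hclose i hi1 him).1
        have h2 := hquant1 i hi1 him
        have h3 := hGmono hti
        have := abs_le.1 h1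
        linarith
  have c4 : G x ≤ ((i : ℝ)+1)/m + δ := by
    by_cases hip : i + 1 < m
    · have hxlt : x < t (i+1) := by
        by_contra hcon
        push_neg at hcon
        have := hmax (i+1) hip (Or.inr hcon)
        omega
      have h1 := (hclose (i+1) (by omega) hip).2
      have h2 := hquant2 (i+1) (by omega) hip
      have h3 := hGGm x _ hxlt
      have := abs_le.1 h1
      push_cast at h2 ⊢
      linarith
    · have heq : i + 1 = m := by omega
      have heq' : ((i:ℝ)+1) = m := by exact_mod_cast heq
      rw [heq', div_self hmpos.ne']
      have := hG1 x
      linarith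
  rw [abs_le]
  constructor
  · have : ((i:ℝ)+1)/m - (i:ℝ)/m = 1/m := by field_simp; ring
    nlinarith [c1, c4]
  · have : ((i:ℝ)+1)/m - (i:ℝ)/m = 1/m := by field_simp; ring
    nlinarith [c2, c3]



lemma slln_indicator {Ω : Type*} [MeasurableSpace Ω] (P : Measure Ω) [IsProbabilityMeasure P]
    (X₀ : Ω → ℝ) (X : ℕ → Ω → ℝ) (hX₀ : Measurable X₀) (hX : ∀ k, Measurable (X k))
    (hindep : iIndepFun X P)
    (hident : ∀ k, IdentDistrib (X k) X₀ P P)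
    (s : Set ℝ) [DecidablePred (· ∈ s)] (hs : MeasurableSet s) :
    ∀ᵐ ω ∂P, Tendsto
      (fun N : ℕ => (N:ℝ)⁻¹ * ∑ k ∈ Finset.range N, (if X k ω ∈ s then (1:ℝ) else 0))
      atTop (𝓝 (P {ω | X₀ ω ∈ s}).toReal) := by
  set f : ℝ → ℝ := s.indicator (fun _ => (1:ℝ)) with hf_def
  have hf : Measurable f := measurable_const.indicator hs
  set Y : ℕ → Ω → ℝ := fun i ω => f (X i ω) with hY_def
  have hYind : ∀ i ω, Y i ω = (if X i ω ∈ s then (1:ℝ) else 0) := by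
    intro i ω
    simp [hY_def, hf_def, Set.indicator_apply]
  have hint : Integrable (Y 0) P := by
    have : Y 0 = (X 0 ⁻¹' s).indicator (fun _ => (1:ℝ)) := by
      ext ω
      by_cases h : X 0 ω ∈ s <;> simp [hYind, h, Set.indicator_apply, Set.mem_preimage]
    rw [this]
    exact (integrable_const (1:ℝ)).indicator ((hX 0) hs)
  have hindep' : Pairwise (Function.onFun (IndepFun · · P) Y) := by
    intro i j hij
    exact (hindep.indepFun hij).comp hf hf
  have hident' : ∀ i, IdentDistrib (Y i) (Y 0) P P := by
    intro i
    exact ((hident i).trans (hident 0).symm).comp hf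
  have hmean : P[Y 0] = (P {ω | X₀ ω ∈ s}).toReal := by
    have h1 : Y 0 = (X 0 ⁻¹' s).indicator (fun _ => (1:ℝ)) := by
      ext ω
      by_cases h : X 0 ω ∈ s <;> simp [hYind, h, Set.indicator_apply, Set.mem_preimage]
    rw [h1, integral_indicator_const (1:ℝ) ((hX 0) hs)]
    have h2 : P (X 0 ⁻¹' s) = P (X₀ ⁻¹' s) := (hident 0).measure_mem_eq hs
    rw [measureReal_def, h2]
    simp [Set.preimage]
  have := strong_law_ae_real Y hint hindep' hident'
  filter_upwards [this] with ω hω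
  rw [hmean] at hω
  have heq : (fun N : ℕ => (N:ℝ)⁻¹ * ∑ k ∈ Finset.range N, (if X k ω ∈ s then (1:ℝ) else 0))
      = (fun N : ℕ => (∑ i ∈ Finset.range N, Y i ω) / N) := by
    funext N
    rw [div_eq_inv_mul]
    congr 1
    exact Finset.sum_congr rfl (fun k _ => (hYind k ω).symm)
  rw [heq]
  exact hω

/-- algebraic identity for the empirical distributional transform -/
lemma emp_eq (N : ℕ) (xs : ℕ → ℝ) (x u : ℝ) :
    empDistTransform N xs x u = avgLt N xs x + u * (avgLe N xs x - avgLt N xs x) := by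
  unfold empDistTransform avgLe avgLt
  have h1 : ∀ k, (if xs k = x then (1:ℝ) else 0)
      = (if xs k ≤ x then (1:ℝ) else 0) - (if xs k < x then (1:ℝ) else 0) := by
    intro k
    rcases lt_trichotomy (xs k) x with h | h | h
    · simp [h, ne_of_lt h, le_of_lt h]
    · simp [h]
    · simp [not_lt_of_gt h, not_le_of_gt h, ne_of_gt h]
  have h2 : ∑ k ∈ Finset.range N,
      ((if xs k < x then (1:ℝ) else 0) + u * (if xs k = x then (1:ℝ) else 0))
      = (∑ k ∈ Finset.range N, (if xs k < x then (1:ℝ) else 0))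
        + u * ((∑ k ∈ Finset.range N, (if xs k ≤ x then (1:ℝ) else 0))
          - (∑ k ∈ Finset.range N, (if xs k < x then (1:ℝ) else 0))) := by
    rw [Finset.sum_add_distrib, ← Finset.sum_sub_distrib, ← Finset.mul_sum]
    congr 1
    congr 1
    exact Finset.sum_congr rfl (fun k _ => by rw [h1 k])
  rw [h2]
  ring

/-- algebraic identity for the distributional transform -/
lemma dist_eq {Ω : Type*} [MeasurableSpace Ω] (P : Measure Ω) [IsProbabilityMeasure P]
    (X₀ : Ω → ℝ) (hX₀ : Measurable X₀) (x u : ℝ) :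
    distTransform P X₀ x u
      = cFm (P.map X₀) x + u * (cF (P.map X₀) x - cFm (P.map X₀) x) := by
  set μ := P.map X₀ with hμ
  have hio : P {ω | X₀ ω < x} = μ (Iio x) := by
    rw [hμ, Measure.map_apply hX₀ measurableSet_Iio]; rfl
  have hsing : P {ω | X₀ ω = x} = μ {x} := by
    rw [hμ, Measure.map_apply hX₀ (measurableSet_singleton x)]; rfl
  have hsum : μ (Iic x) = μ (Iio x) + μ {x} := by
    rw [← Set.Iio_union_right, measure_union (by simp) (measurableSet_singleton x)]
  have htr : (μ (Iic x)).toReal = (μ (Iio x)).toReal + (μ {x}).toReal := by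
    rw [hsum, ENNReal.toReal_add (measure_ne_top μ _) (measure_ne_top μ _)]
  unfold distTransform cF cFm
  rw [hio, hsing]
  have : (μ {x}).toReal = (μ (Iic x)).toReal - (μ (Iio x)).toReal := by linarith
  rw [this]


end EmpGC

/-- Fundamental theorem of the empirical distributional transform:
for i.i.d. copies `X⁽ᵏ⁾` of `X`, almost surely
`sup_{x ∈ ℝ, u ∈ [0,1]} |ᴺT(x,u;X⁽¹⁾,…,X⁽ᴺ⁾) − T_X(x,u)| → 0` as `N → ∞`. -/
theorem empDistTransform_tendsto_uniformly {Ω : Type*} [MeasurableSpace Ω]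
    (P : Measure Ω) [IsProbabilityMeasure P]
    (X₀ : Ω → ℝ) (X : ℕ → Ω → ℝ)
    (hX₀ : Measurable X₀) (hX : ∀ k, Measurable (X k))
    (hindep : iIndepFun X P)
    (hident : ∀ k, IdentDistrib (X k) X₀ P P) :
    ∀ᵐ ω ∂P, Tendsto (fun N =>
        ⨆ x : ℝ, ⨆ u : Icc (0:ℝ) 1,
          |empDistTransform N (fun k => X k ω) x (u : ℝ) - distTransform P X₀ x (u : ℝ)|)
      atTop (nhds 0) := by
  classical
  set μ := P.map X₀ with hμ
  haveI : IsProbabilityMeasure μ := Measure.isProbabilityMeasure_map hX₀.aemeasurable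
  -- step 1: pointwise SLLN for the empirical CDFs
  have sllnLe : ∀ t : ℝ, ∀ᵐ ω ∂P,
      Tendsto (fun N => EmpGC.avgLe N (fun k => X k ω) t) atTop (𝓝 (EmpGC.cF μ t)) := by
    intro t
    have h := EmpGC.slln_indicator P X₀ X hX₀ hX hindep hident (Iic t) measurableSet_Iic
    have hset : (P {ω | X₀ ω ∈ Iic t}).toReal = EmpGC.cF μ t := by
      unfold EmpGC.cF
      rw [hμ, Measure.map_apply hX₀ measurableSet_Iic]
      rfl
    rw [hset] at h
    filter_upwards [h] with ω hω
    have heq : (fun N : ℕ => (N:ℝ)⁻¹ * ∑ k ∈ Finset.range N,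
          (if X k ω ∈ Iic t then (1:ℝ) else 0))
        = fun N => EmpGC.avgLe N (fun k => X k ω) t := by
      funext N
      unfold EmpGC.avgLe
      congr 1
    rwa [heq] at hω
  have sllnLt : ∀ t : ℝ, ∀ᵐ ω ∂P,
      Tendsto (fun N => EmpGC.avgLt N (fun k => X k ω) t) atTop (𝓝 (EmpGC.cFm μ t)) := by
    intro t
    have h := EmpGC.slln_indicator P X₀ X hX₀ hX hindep hident (Iio t) measurableSet_Iio
    have hset : (P {ω | X₀ ω ∈ Iio t}).toReal = EmpGC.cFm μ t := by
      unfold EmpGC.cFm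
      rw [hμ, Measure.map_apply hX₀ measurableSet_Iio]
      rfl
    rw [hset] at h
    filter_upwards [h] with ω hω
    have heq : (fun N : ℕ => (N:ℝ)⁻¹ * ∑ k ∈ Finset.range N,
          (if X k ω ∈ Iio t then (1:ℝ) else 0))
        = fun N => EmpGC.avgLt N (fun k => X k ω) t := by
      funext N
      unfold EmpGC.avgLt
      congr 1
    rwa [heq] at hω
  -- step 2: the a.e. good event (convergence on the quantile grids)
  set q : ℕ → ℕ → ℝ := fun m i => EmpGC.quant μ ((i:ℝ)/m) with hqdef
  have hae : ∀ᵐ ω ∂P, ∀ m : ℕ, ∀ i : ℕ,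
      Tendsto (fun N => EmpGC.avgLe N (fun k => X k ω) (q m i)) atTop (𝓝 (EmpGC.cF μ (q m i)))
      ∧ Tendsto (fun N => EmpGC.avgLt N (fun k => X k ω) (q m i)) atTop
          (𝓝 (EmpGC.cFm μ (q m i))) := by
    rw [ae_all_iff]
    intro m
    rw [ae_all_iff]
    intro i
    exact (sllnLe (q m i)).and (sllnLt (q m i))
  filter_upwards [hae] with ω hω
  set xs : ℕ → ℝ := fun k => X k ω with hxs
  -- notation
  set KS : ℕ → ℝ := fun N => ⨆ y : ℝ, |EmpGC.avgLe N xs y - EmpGC.cF μ y| with hKSdef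
  have hbdd : ∀ N, BddAbove (range fun y : ℝ => |EmpGC.avgLe N xs y - EmpGC.cF μ y|) := by
    intro N
    refine ⟨1, ?_⟩
    rintro v ⟨y, rfl⟩
    have h1 := EmpGC.avgLe_nonneg (N := N) (xs := xs) (x := y)
    have h2 := EmpGC.avgLe_le_one (N := N) (xs := xs) (x := y)
    have h3 := EmpGC.cF_nonneg μ y
    have h4 := EmpGC.cF_le_one μ y
    rw [abs_le]
    constructor <;> linarith
  have hKSabs : ∀ N y, |EmpGC.avgLe N xs y - EmpGC.cF μ y| ≤ KS N :=
    fun N y => le_ciSup (hbdd N) y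
  have hKSnn : ∀ N, 0 ≤ KS N := fun N => Real.iSup_nonneg (fun y => abs_nonneg _)
  -- step 3: the `<`-empirical CDF deviation is controlled by KS
  have hleft : ∀ N x, |EmpGC.avgLt N xs x - EmpGC.cFm μ x| ≤ KS N := by
    intro N x
    apply le_of_forall_pos_le_add
    intro ε hε
    obtain ⟨n, hn⟩ := ((EmpGC.tendsto_cF_left μ x).eventually
      (eventually_gt_nhds (show EmpGC.cFm μ x - ε < EmpGC.cFm μ x by linarith))).exists
    set s : Finset ℕ := (Finset.range N).filter (fun k => xs k < x) with hsdef
    set d : ℝ := if hs : s.Nonempty then s.inf' hs (fun k => x - xs k) else 1 with hddef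
    have hdpos : 0 < d := by
      rw [hddef]
      split_ifs with hs
      · rw [Finset.lt_inf'_iff]
        intro k hk
        have := (Finset.mem_filter.1 hk).2
        linarith
      · norm_num
    set h : ℝ := min ((n:ℝ)+1)⁻¹ d with hhdef
    have hhpos : 0 < h := lt_min (by positivity) hdpos
    have hgap : ∀ k < N, xs k < x → xs k ≤ x - h := by
      intro k hk hlt
      have hks : k ∈ s := Finset.mem_filter.2 ⟨Finset.mem_range.2 hk, hlt⟩
      have hsne : s.Nonempty := ⟨k, hks⟩
      have hd1 : d ≤ x - xs k := by
        rw [hddef, dif_pos hsne]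
        exact Finset.inf'_le _ hks
      have : h ≤ x - xs k := le_trans (min_le_right _ _) hd1
      linarith
    have heq : EmpGC.avgLt N xs x = EmpGC.avgLe N xs (x - h) :=
      EmpGC.avgLt_eq_avgLe_sub hhpos hgap
    have hF1 : EmpGC.cFm μ x - ε ≤ EmpGC.cF μ (x - h) := by
      have h1 : EmpGC.cF μ (x - ((n:ℝ)+1)⁻¹) ≤ EmpGC.cF μ (x - h) := by
        apply EmpGC.cF_mono μ
        have := min_le_left ((n:ℝ)+1)⁻¹ d
        rw [hhdef]
        linarith [min_le_left ((n:ℝ)+1)⁻¹ d]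
      linarith
    have hF2 : EmpGC.cF μ (x - h) ≤ EmpGC.cFm μ x := EmpGC.cF_le_cFm μ (by linarith)
    have habs := hKSabs N (x - h)
    rw [heq]
    rw [abs_le] at habs ⊢
    constructor
    · linarith [habs.1]
    · linarith [habs.2]
  -- step 4: Glivenko–Cantelli: KS → 0
  have hKS0 : Tendsto KS atTop (𝓝 0) := by
    rw [Metric.tendsto_atTop]
    intro ε hε
    obtain ⟨m₀, hm₀⟩ := exists_nat_one_div_lt (show (0:ℝ) < ε/4 by linarith)
    set m : ℕ := m₀ + 1 with hmdef
    have hm1 : 1 ≤ m := by omega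
    have hmpos : (0:ℝ) < m := by exact_mod_cast hm1
    have hminv : 1/(m:ℝ) < ε/4 := by
      rw [hmdef]
      push_cast
      exact_mod_cast hm₀
    set δ : ℝ := ε/4 with hδdef
    have hδpos : 0 < δ := by rw [hδdef]; linarith
    have hev : ∀ᶠ N in atTop, ∀ i ∈ Finset.Ico 1 m,
        |EmpGC.avgLe N xs (q m i) - EmpGC.cF μ (q m i)| ≤ δ
        ∧ |EmpGC.avgLt N xs (q m i) - EmpGC.cFm μ (q m i)| ≤ δ := by
      rw [eventually_all_finset]
      intro i hi
      have e1 : ∀ᶠ N in atTop, |EmpGC.avgLe N xs (q m i) - EmpGC.cF μ (q m i)| ≤ δ := by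
        have := (hω m i).1.eventually
          (Metric.closedBall_mem_nhds (EmpGC.cF μ (q m i)) hδpos)
        filter_upwards [this] with N hN
        have hN' : dist (EmpGC.avgLe N xs (q m i)) (EmpGC.cF μ (q m i)) ≤ δ := hN
        rwa [Real.dist_eq] at hN' 
      have e2 : ∀ᶠ N in atTop, |EmpGC.avgLt N xs (q m i) - EmpGC.cFm μ (q m i)| ≤ δ := by
        have := (hω m i).2.eventually
          (Metric.closedBall_mem_nhds (EmpGC.cFm μ (q m i)) hδpos)
        filter_upwards [this] with N hN
        have hN' : dist (EmpGC.avgLt N xs (q m i)) (EmpGC.cFm μ (q m i)) ≤ δ := hN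
        rwa [Real.dist_eq] at hN' 
      exact e1.and e2
    rw [eventually_atTop] at hev
    obtain ⟨N₀, hN₀⟩ := hev
    refine ⟨N₀, fun N hN => ?_⟩
    have hclose := hN₀ N hN
    have hbound : KS N ≤ 1/m + δ := by
      apply Real.iSup_le _ (by positivity)
      intro y
      refine EmpGC.det_bound (EmpGC.cF μ) (EmpGC.cFm μ) (EmpGC.avgLe N xs)
        (EmpGC.avgLt N xs) (fun i => q m i) m hm1 δ (le_of_lt hδpos)
        (fun z => EmpGC.cF_nonneg μ z) (fun z => EmpGC.cF_le_one μ z)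
        (fun z => EmpGC.avgLe_nonneg) (fun z => EmpGC.avgLe_le_one)
        (EmpGC.cF_mono μ) EmpGC.avgLe_mono
        (fun a b hab => EmpGC.cF_le_cFm μ hab) (fun a b hab => EmpGC.avgLe_le_avgLt hab)
        ?_ ?_ ?_ y
      · intro i h1i him
        have hc0 : (0:ℝ) < (i:ℝ)/m := by
          apply div_pos _ hmpos
          exact_mod_cast h1i
        have hc1 : (i:ℝ)/m < 1 := by
          rw [div_lt_one hmpos]
          exact_mod_cast him
        exact (EmpGC.quant_spec μ hc0 hc1).1
      · intro i h1i him
        have hc0 : (0:ℝ) < (i:ℝ)/m := by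
          apply div_pos _ hmpos
          exact_mod_cast h1i
        have hc1 : (i:ℝ)/m < 1 := by
          rw [div_lt_one hmpos]
          exact_mod_cast him
        exact (EmpGC.quant_spec μ hc0 hc1).2
      · intro i h1i him
        exact hclose i (Finset.mem_Ico.2 ⟨h1i, him⟩)
    rw [Real.dist_eq, sub_zero, abs_of_nonneg (hKSnn N)]
    calc KS N ≤ 1/m + δ := hbound
      _ < ε/4 + ε/4 := by rw [hδdef]; linarith
      _ < ε := by linarith
  -- step 5: the distributional transform deviation is controlled by KS
  have hD2 : ∀ N, (⨆ x : ℝ, ⨆ u : Icc (0:ℝ) 1,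
      |empDistTransform N xs x (u:ℝ) - distTransform P X₀ x (u:ℝ)|) ≤ KS N := by
    intro N
    apply Real.iSup_le _ (hKSnn N)
    intro x
    apply Real.iSup_le _ (hKSnn N)
    intro u
    obtain ⟨hu0, hu1⟩ := u.2
    rw [EmpGC.emp_eq, EmpGC.dist_eq P X₀ hX₀]
    have key : EmpGC.avgLt N xs x + (u:ℝ) * (EmpGC.avgLe N xs x - EmpGC.avgLt N xs x)
        - (EmpGC.cFm (P.map X₀) x + (u:ℝ) * (EmpGC.cF (P.map X₀) x - EmpGC.cFm (P.map X₀) x))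
        = (1 - (u:ℝ)) * (EmpGC.avgLt N xs x - EmpGC.cFm μ x)
          + (u:ℝ) * (EmpGC.avgLe N xs x - EmpGC.cF μ x) := by
      rw [← hμ]
      ring
    rw [key]
    calc |(1 - (u:ℝ)) * (EmpGC.avgLt N xs x - EmpGC.cFm μ x)
          + (u:ℝ) * (EmpGC.avgLe N xs x - EmpGC.cF μ x)|
        ≤ (1 - (u:ℝ)) * |EmpGC.avgLt N xs x - EmpGC.cFm μ x|
          + (u:ℝ) * |EmpGC.avgLe N xs x - EmpGC.cF μ x| := by
          refine (abs_add_le _ _).trans ?_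
          rw [abs_mul, abs_mul, abs_of_nonneg (by linarith : (0:ℝ) ≤ 1 - (u:ℝ)),
            abs_of_nonneg hu0]
      _ ≤ (1 - (u:ℝ)) * KS N + (u:ℝ) * KS N := by
          apply add_le_add
          · exact mul_le_mul_of_nonneg_left (hleft N x) (by linarith)
          · exact mul_le_mul_of_nonneg_left (hKSabs N x) hu0
      _ = KS N := by ring
  have hD1 : ∀ N : ℕ, 0 ≤ ⨆ x : ℝ, ⨆ u : Icc (0:ℝ) 1,
      |empDistTransform N xs x (u:ℝ) - distTransform P X₀ x (u:ℝ)| :=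
    fun N => Real.iSup_nonneg (fun x => Real.iSup_nonneg (fun u => abs_nonneg _))
  exact tendsto_of_tendsto_of_tendsto_of_le_of_le tendsto_const_nhds hKS0 hD1 hD2
end

section
/- Preservation of consistency: Let X = (X_1,…,X_n) with X_i ℝ^{d_i}-valued (components X_{i,k} univariate), let (X^{(k)},U^{(k)}), k ∈ ℕ, be i.i.d. copies of (X,U) where all U_{i,k} are i.i.d. uniform on [0,1] and independent of X. Suppose the estimators ᴺd : ([0,1]^{d_1+…+d_n})^N → ℝ, N ∈ ℕ, are uniformly continuous uniformly in N, i.e., for all ε > 0 there exists δ > 0 such that for all N and all points: if max_{1≤k≤N} |x^{(k)} − y^{(k)}| < δ then |ᴺd(x^{(1)},…,x^{(N)}) − ᴺd(y^{(1)},…,y^{(N)})| < ε. Then ᴺd applied to the componentwise empirical distributional transforms of the sample, ᴺd(ᴺT(X^{[N]},U^{[N]})), and ᴺd applied to the true componentwise distributional transforms, ᴺd(T_X(X^{[N]},U^{[N]})), satisfy ᴺd(ᴺT(X^{[N]},U^{[N]})) − ᴺd(T_X(X^{[N]},U^{[N]})) → 0 almost surely as N → ∞; hence the two sequences converge to the same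 limit in the same mode of convergence (almost surely, respectively in probability). -/
open MeasureTheory ProbabilityTheory Set Filter

section GCHelpers

variable {Ω : Type*} [MeasurableSpace Ω]

private lemma gc_sandwich (F G Fn Gn : ℝ → ℝ) (m : ℕ) (t : ℕ → ℝ) (e : ℝ)
    (hm : 2 ≤ m)
    (hFmono : Monotone F) (hFnmono : Monotone Fn)
    (hGmono : Monotone G) (hGnmono : Monotone Gn)
    (hGF : ∀ x, G x ≤ F x) (hGnFn : ∀ x, Gn x ≤ Fn x)
    (hcross : ∀ x y, x < y → F x ≤ G y) (hcrossn : ∀ x y, x < y → Fn x ≤ Gn y)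
    (hF0 : ∀ x, 0 ≤ F x) (hFn0 : ∀ x, 0 ≤ Fn x)
    (hG0 : ∀ x, 0 ≤ G x) (hGn0 : ∀ x, 0 ≤ Gn x)
    (hF1 : ∀ x, F x ≤ 1) (hFn1 : ∀ x, Fn x ≤ 1)
    (hG1 : ∀ x, G x ≤ 1) (hGn1 : ∀ x, Gn x ≤ 1)
    (hq1 : ∀ k, k < m - 1 → ((k:ℝ)+1)/m ≤ F (t k))
    (hq2 : ∀ k, k < m - 1 → G (t k) ≤ ((k:ℝ)+1)/m)
    (he : ∀ k, k < m - 1 → |Fn (t k) - F (t k)| ≤ e ∧ |Gn (t k) - G (t k)| ≤ e) :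
    ∀ x, |Fn x - F x| ≤ e + 1/m ∧ |Gn x - G x| ≤ e + 1/m := by
  have hm0 : (0:ℝ) < m := by positivity
  have h0m : (0:ℕ) < m - 1 := by omega
  have he0 : 0 ≤ e := le_trans (abs_nonneg _) (he 0 h0m).1
  intro x
  set s : Finset ℕ := (Finset.range (m-1)).filter (fun k => t k ≤ x) with hsdef
  by_cases hs : s.Nonempty
  · set k := s.max' hs with hkdef
    have hk1 : k ∈ s := s.max'_mem hs
    have hkm : k < m - 1 := Finset.mem_range.1 (Finset.mem_filter.1 hk1).1
    have hkx : t k ≤ x := (Finset.mem_filter.1 hk1).2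
    have hnext : ∀ k', k' < m - 1 → k < k' → x < t k' := by
      intro k' h1 h2
      by_contra h
      push_neg at h
      exact absurd (s.le_max' k' (Finset.mem_filter.2 ⟨Finset.mem_range.2 h1, h⟩))
        (by omega)
    have eFk := (he k hkm).1
    have eGk := (he k hkm).2
    rw [abs_sub_le_iff] at eFk eGk
    have q1k := hq1 k hkm
    by_cases hlast : k + 1 < m - 1
    · -- interior cell
      have hx2 : x < t (k+1) := hnext _ hlast (lt_add_one k)
      have q2k1 := hq2 (k+1) hlast
      push_cast at q2k1
      have gap : G (t (k+1)) - F (t k) ≤ 1/m := by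
        have : ((k:ℝ)+1+1)/m - ((k:ℝ)+1)/m = 1/m := by
          field_simp
          ring
        linarith
      have eG1 := (he (k+1) hlast).2
      rw [abs_sub_le_iff] at eG1
      have h1 : Fn x ≤ Gn (t (k+1)) := hcrossn _ _ hx2
      have h2 : Fn (t k) ≤ Fn x := hFnmono hkx
      have h3 : F x ≤ G (t (k+1)) := hcross _ _ hx2
      have h4 : F (t k) ≤ F x := hFmono hkx
      constructor
      · rw [abs_sub_le_iff]; constructor <;> linarith
      · rcases eq_or_lt_of_le hkx with heq | hlt
        · rw [← heq]
          exact le_trans (he k hkm).2 (by linarith [one_div_pos.2 hm0])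
        · have g1 : F (t k) ≤ G x := hcross _ _ hlt
          have g2 : Fn (t k) ≤ Gn x := hcrossn _ _ hlt
          have g3 : G x ≤ G (t (k+1)) := hGmono hx2.le
          have g4 : Gn x ≤ Gn (t (k+1)) := hGnmono hx2.le
          rw [abs_sub_le_iff]; constructor <;> linarith
    · -- last cell
      have hklast : (k:ℝ) + 1 = (m:ℝ) - 1 := by
        have : k + 1 = m - 1 := by omega
        have hcast : ((k+1 : ℕ) : ℝ) = ((m - 1 : ℕ) : ℝ) := by rw [this]
        push_cast [Nat.cast_sub (by omega : 1 ≤ m)] at hcast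
        linarith
      have q1k' : 1 - 1/m ≤ F (t k) := by
        rw [hklast] at q1k
        have : ((m:ℝ)-1)/m = 1 - 1/m := by field_simp
        linarith
      have h2 : Fn (t k) ≤ Fn x := hFnmono hkx
      have h4 : F (t k) ≤ F x := hFmono hkx
      constructor
      · have := hFn1 x; have := hF1 x
        rw [abs_sub_le_iff]
        constructor <;> linarith
      · rcases eq_or_lt_of_le hkx with heq | hlt
        · rw [← heq]
          exact le_trans (he k hkm).2 (by linarith [one_div_pos.2 hm0])
        · have g1 : F (t k) ≤ G x := hcross _ _ hlt
          have g2 : Fn (t k) ≤ Gn x := hcrossn _ _ hlt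
          have := hGn1 x; have := hG1 x
          rw [abs_sub_le_iff]; constructor <;> linarith
  · -- below all grid points
    have hx0 : x < t 0 := by
      by_contra h
      push_neg at h
      exact hs ⟨0, Finset.mem_filter.2 ⟨Finset.mem_range.2 h0m, h⟩⟩
    have q20 := hq2 0 h0m
    have eG0 := (he 0 h0m).2
    rw [abs_sub_le_iff] at eG0
    push_cast at q20
    have h1 : F x ≤ G (t 0) := hcross _ _ hx0
    have h2 : Fn x ≤ Gn (t 0) := hcrossn _ _ hx0
    have h3 := hF0 x; have h4 := hFn0 x
    have h5 := hG0 x; have h6 := hGn0 x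
    have h7 : G x ≤ F x := hGF x
    constructor
    · rw [abs_sub_le_iff]
      constructor <;> linarith
    · have h8 : Gn x ≤ Fn x := hGnFn x
      rw [abs_sub_le_iff]
      constructor <;> linarith

private lemma exists_quantile (P : Measure Ω) [IsProbabilityMeasure P]
    (Z : Ω → ℝ) (hZ : Measurable Z) (c : ℝ) (hc0 : 0 < c) (hc1 : c < 1) :
    ∃ t : ℝ, c ≤ (P {ω | Z ω ≤ t}).toReal ∧ (P {ω | Z ω < t}).toReal ≤ c := by
  set S : Set ℝ := {x | c ≤ (P {ω | Z ω ≤ x}).toReal} with hS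
  have hmeas : ∀ x : ℝ, MeasurableSet {ω | Z ω ≤ x} := fun x => hZ measurableSet_Iic
  have hmono : ∀ ⦃a b : ℝ⦄, a ≤ b → {ω | Z ω ≤ a} ⊆ {ω | Z ω ≤ b} :=
    fun a b hab ω h => le_trans h hab
  -- S nonempty
  have htop : Tendsto (fun n : ℕ => P {ω | Z ω ≤ (n:ℝ)}) atTop (nhds (P univ)) := by
    have hu : (⋃ n : ℕ, {ω | Z ω ≤ (n:ℝ)}) = univ := by
      ext ω; simp only [mem_iUnion, mem_setOf_eq, mem_univ, iff_true]
      obtain ⟨n, hn⟩ := exists_nat_gt (Z ω)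
      exact ⟨n, hn.le⟩
    rw [← hu]
    exact tendsto_measure_iUnion_atTop (fun a b hab => hmono (by exact_mod_cast hab))
  have hSne : S.Nonempty := by
    have hlt : ENNReal.ofReal c < P univ := by
      rw [measure_univ]; exact ENNReal.ofReal_lt_one.2 hc1
    obtain ⟨n, hn⟩ := (htop.eventually (eventually_gt_nhds hlt)).exists
    exact ⟨(n:ℝ), (ENNReal.ofReal_le_iff_le_toReal (measure_ne_top _ _)).1 hn.le⟩
  -- S bddBelow
  have hbot : Tendsto (fun n : ℕ => P {ω | Z ω ≤ -(n:ℝ)}) atTop (nhds 0) := by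
    have hi : (⋂ n : ℕ, {ω | Z ω ≤ -(n:ℝ)}) = ∅ := by
      ext ω; simp only [mem_iInter, mem_setOf_eq, mem_empty_iff_false, iff_false, not_forall]
      obtain ⟨n, hn⟩ := exists_nat_gt (-(Z ω))
      exact ⟨n, by push_neg; linarith⟩
    have := tendsto_measure_iInter_atTop (μ := P) (s := fun n : ℕ => {ω | Z ω ≤ -(n:ℝ)})
      (fun n => (hmeas _).nullMeasurableSet)
      (fun a b hab => hmono (by exact_mod_cast neg_le_neg (Nat.cast_le.2 hab)))
      ⟨0, measure_ne_top _ _⟩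
    rwa [hi, measure_empty] at this
  have hBdd : BddBelow S := by
    have hlt : (0:ENNReal) < ENNReal.ofReal c := ENNReal.ofReal_pos.2 hc0
    obtain ⟨n, hn⟩ := (hbot.eventually (eventually_lt_nhds hlt)).exists
    refine ⟨-(n:ℝ), fun x hx => ?_⟩
    by_contra h
    push_neg at h
    have : (P {ω | Z ω ≤ x}).toReal < c := by
      have h1 : P {ω | Z ω ≤ x} < ENNReal.ofReal c :=
        lt_of_le_of_lt (measure_mono (hmono h.le)) hn
      have := ENNReal.toReal_lt_toReal (measure_ne_top _ _) ENNReal.ofReal_ne_top |>.2 h1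
      rwa [ENNReal.toReal_ofReal hc0.le] at this
    exact absurd hx (by simpa [hS] using not_le.2 this)
  set t := sInf S with ht
  refine ⟨t, ?_, ?_⟩
  · -- c ≤ F t
    rw [← ENNReal.ofReal_le_iff_le_toReal (measure_ne_top _ _)]
    have hseq : Tendsto (fun n : ℕ => P {ω | Z ω ≤ t + 1/(n+1)}) atTop
        (nhds (P {ω | Z ω ≤ t})) := by
      have hi : (⋂ n : ℕ, {ω | Z ω ≤ t + 1/(n+1:ℝ)}) = {ω | Z ω ≤ t} := by
        ext ω
        simp only [mem_iInter, mem_setOf_eq]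
        constructor
        · intro h
          by_contra hc
          push_neg at hc
          obtain ⟨n, hn⟩ := exists_nat_one_div_lt (by linarith : (0:ℝ) < Z ω - t)
          exact absurd (h n) (by push_neg; linarith)
        · intro h n
          have : (0:ℝ) < 1/(n+1) := by positivity
          linarith
      rw [← hi]
      refine tendsto_measure_iInter_atTop (fun n => (hmeas _).nullMeasurableSet) ?_
        ⟨0, measure_ne_top _ _⟩
      intro a b hab
      apply hmono
      have : (1:ℝ)/(b+1) ≤ 1/(a+1) := by
        apply one_div_le_one_div_of_le (by positivity)
        exact_mod_cast by omega
      linarith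
    refine ge_of_tendsto hseq (Eventually.of_forall fun n => ?_)
    have : (0:ℝ) < 1/(n+1) := by positivity
    obtain ⟨x, hxS, hxlt⟩ := (csInf_lt_iff hBdd hSne).1 (by linarith : sInf S < t + 1/(n+1))
    calc ENNReal.ofReal c ≤ P {ω | Z ω ≤ x} :=
          (ENNReal.ofReal_le_iff_le_toReal (measure_ne_top _ _)).2 hxS
      _ ≤ _ := measure_mono (hmono hxlt.le)
  · -- G t ≤ c
    rw [← ENNReal.le_ofReal_iff_toReal_le (measure_ne_top _ _) hc0.le]
    have hseq : Tendsto (fun n : ℕ => P {ω | Z ω ≤ t - 1/(n+1)}) atTop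
        (nhds (P {ω | Z ω < t})) := by
      have hu : (⋃ n : ℕ, {ω | Z ω ≤ t - 1/(n+1:ℝ)}) = {ω | Z ω < t} := by
        ext ω
        simp only [mem_iUnion, mem_setOf_eq]
        constructor
        · rintro ⟨n, hn⟩
          have : (0:ℝ) < 1/(n+1) := by positivity
          linarith
        · intro h
          obtain ⟨n, hn⟩ := exists_nat_one_div_lt (by linarith : (0:ℝ) < t - Z ω)
          exact ⟨n, by linarith⟩
      rw [← hu]
      apply tendsto_measure_iUnion_atTop
      intro a b hab
      apply hmono
      have : (1:ℝ)/(b+1) ≤ 1/(a+1) := by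
        apply one_div_le_one_div_of_le (by positivity)
        exact_mod_cast by omega
      linarith
    refine le_of_tendsto hseq (Eventually.of_forall fun n => ?_)
    have hnot : t - 1/(n+1:ℝ) ∉ S := fun h => by
      have := csInf_le hBdd h
      have : (0:ℝ) < 1/(n+1) := by positivity
      linarith [csInf_le hBdd h]
    rw [hS, mem_setOf_eq, not_le] at hnot
    calc P {ω | Z ω ≤ t - 1/(n+1)}
        = ENNReal.ofReal ((P {ω | Z ω ≤ t - 1/(n+1)}).toReal) := by
          rw [ENNReal.ofReal_toReal (measure_ne_top _ _)]
      _ ≤ ENNReal.ofReal c := ENNReal.ofReal_le_ofReal hnot.le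

private lemma slln_indicator (P : Measure Ω) [IsProbabilityMeasure P]
    (Z : ℕ → Ω → ℝ) (hZm : ∀ l, Measurable (Z l))
    (hindep : Pairwise fun l l' => IndepFun (Z l) (Z l') P)
    (hid : ∀ l, IdentDistrib (Z l) (Z 0) P P) (s : Set ℝ) (hs : MeasurableSet s) :
    ∀ᵐ ω ∂P, Tendsto
      (fun N : ℕ => (∑ l ∈ Finset.range N, s.indicator (fun _ => (1:ℝ)) (Z l ω)) / N)
      atTop (nhds ((P {ω' | Z 0 ω' ∈ s}).toReal)) := by
  set g : ℝ → ℝ := s.indicator (fun _ => 1) with hg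
  have hgm : Measurable g := measurable_const.indicator hs
  have hY0 : (g ∘ Z 0) = Set.indicator (Z 0 ⁻¹' s) (fun _ => (1:ℝ)) := by
    ext ω; exact (Set.indicator_comp_right (Z 0) (g := fun _ => (1:ℝ))).symm
  have hint : Integrable (g ∘ Z 0) P := by
    rw [hY0]
    exact (integrable_const (1:ℝ)).indicator (hZm 0 hs)
  have hindep' : Pairwise (Function.onFun (IndepFun · · P) (fun l => g ∘ Z l)) :=
    fun l l' h => (hindep h).comp hgm hgm
  have hid' : ∀ l, IdentDistrib (g ∘ Z l) (g ∘ Z 0) P P := fun l => (hid l).comp hgm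
  have hexp : ∫ ω, (g ∘ Z 0) ω ∂P = (P {ω' | Z 0 ω' ∈ s}).toReal := by
    rw [show (fun ω => (g ∘ Z 0) ω) = Set.indicator (Z 0 ⁻¹' s) (fun _ => (1:ℝ)) from hY0]
    rw [integral_indicator_const (1:ℝ) (hZm 0 hs)]
    simp [Set.preimage, smul_eq_mul, measureReal_def]
  have := strong_law_ae_real (fun l => g ∘ Z l) hint hindep' hid'
  rw [hexp] at this
  filter_upwards [this] with ω hω
  exact hω

private lemma glivenko_cantelli (P : Measure Ω) [IsProbabilityMeasure P]
    (Z : ℕ → Ω → ℝ) (hZm : ∀ l, Measurable (Z l))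
    (hindep : Pairwise fun l l' => IndepFun (Z l) (Z l') P)
    (hid : ∀ l, IdentDistrib (Z l) (Z 0) P P) :
    ∀ᵐ ω ∂P, ∀ ε > (0:ℝ), ∀ᶠ N : ℕ in atTop, ∀ x : ℝ,
      |(N:ℝ)⁻¹ * (∑ l ∈ Finset.range N, if Z l ω ≤ x then (1:ℝ) else 0)
        - (P {ω' | Z 0 ω' ≤ x}).toReal| < ε ∧
      |(N:ℝ)⁻¹ * (∑ l ∈ Finset.range N, if Z l ω < x then (1:ℝ) else 0)
        - (P {ω' | Z 0 ω' < x}).toReal| < ε := by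
  set F : ℝ → ℝ := fun x => (P {ω' | Z 0 ω' ≤ x}).toReal with hF
  set G : ℝ → ℝ := fun x => (P {ω' | Z 0 ω' < x}).toReal with hG
  -- quantile grid
  have hquant : ∀ m k : ℕ, 2 ≤ m → k < m - 1 →
      0 < ((k:ℝ)+1)/m ∧ ((k:ℝ)+1)/m < 1 := by
    intro m k h1 h2
    have hm0 : (0:ℝ) < m := by positivity
    constructor
    · positivity
    · rw [div_lt_one hm0]
      have : k + 1 < m := by omega
      exact_mod_cast this
  set q : ℕ → ℕ → ℝ := fun m k =>
    if h : 2 ≤ m ∧ k < m - 1 then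
      (exists_quantile P (Z 0) (hZm 0) (((k:ℝ)+1)/m)
        (hquant m k h.1 h.2).1 (hquant m k h.1 h.2).2).choose
    else 0 with hq
  have hqspec : ∀ m k : ℕ, 2 ≤ m → k < m - 1 →
      ((k:ℝ)+1)/m ≤ F (q m k) ∧ G (q m k) ≤ ((k:ℝ)+1)/m := by
    intro m k h1 h2
    rw [hq]
    simp only [dif_pos (And.intro h1 h2)]
    exact (exists_quantile P (Z 0) (hZm 0) (((k:ℝ)+1)/m)
        (hquant m k h1 h2).1 (hquant m k h1 h2).2).choose_spec
  -- indicator rewriting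
  have hindIic : ∀ (t y : ℝ), (Iic t).indicator (fun _ => (1:ℝ)) y
      = if y ≤ t then 1 else 0 := by
    intro t y; by_cases h : y ≤ t <;> simp [h]
  have hindIio : ∀ (t y : ℝ), (Iio t).indicator (fun _ => (1:ℝ)) y
      = if y < t then 1 else 0 := by
    intro t y; by_cases h : y < t <;> simp [h]
  -- pointwise SLLN at all grid points
  have hae : ∀ m k : ℕ, ∀ᵐ ω ∂P,
      Tendsto (fun N : ℕ => (N:ℝ)⁻¹ * (∑ l ∈ Finset.range N,
        if Z l ω ≤ q m k then (1:ℝ) else 0)) atTop (nhds (F (q m k))) ∧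
      Tendsto (fun N : ℕ => (N:ℝ)⁻¹ * (∑ l ∈ Finset.range N,
        if Z l ω < q m k then (1:ℝ) else 0)) atTop (nhds (G (q m k))) := by
    intro m k
    have h1 := slln_indicator P Z hZm hindep hid (Iic (q m k)) measurableSet_Iic
    have h2 := slln_indicator P Z hZm hindep hid (Iio (q m k)) measurableSet_Iio
    filter_upwards [h1, h2] with ω hω1 hω2
    simp only [hindIic, hindIio, Set.mem_Iic, Set.mem_Iio, div_eq_inv_mul] at hω1 hω2
    exact ⟨hω1, hω2⟩
  have hall : ∀ᵐ ω ∂P, ∀ m k : ℕ,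
      Tendsto (fun N : ℕ => (N:ℝ)⁻¹ * (∑ l ∈ Finset.range N,
        if Z l ω ≤ q m k then (1:ℝ) else 0)) atTop (nhds (F (q m k))) ∧
      Tendsto (fun N : ℕ => (N:ℝ)⁻¹ * (∑ l ∈ Finset.range N,
        if Z l ω < q m k then (1:ℝ) else 0)) atTop (nhds (G (q m k))) :=
    ae_all_iff.2 fun m => ae_all_iff.2 fun k => hae m k
  -- true distribution function facts
  have hPle1 : ∀ s : Set Ω, (P s).toReal ≤ 1 := by
    intro s
    have := ENNReal.toReal_mono (by simp) (prob_le_one (μ := P) (s := s))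
    simpa using this
  have hFmono : Monotone F := fun a b hab =>
    ENNReal.toReal_mono (measure_ne_top _ _)
      (measure_mono fun ω h => le_trans h hab)
  have hGmono : Monotone G := fun a b hab =>
    ENNReal.toReal_mono (measure_ne_top _ _)
      (measure_mono fun ω h => lt_of_lt_of_le h hab)
  have hGF : ∀ x, G x ≤ F x := fun x =>
    ENNReal.toReal_mono (measure_ne_top _ _)
      (measure_mono fun ω (h : Z 0 ω < x) => le_of_lt h)
  have hcross : ∀ x y, x < y → F x ≤ G y := fun x y hxy =>
    ENNReal.toReal_mono (measure_ne_top _ _)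
      (measure_mono fun ω h => lt_of_le_of_lt h hxy)
  -- main argument
  filter_upwards [hall] with ω hω
  intro ε hε
  obtain ⟨n₀, hn₀⟩ := exists_nat_one_div_lt (show (0:ℝ) < ε/2 by linarith)
  set m : ℕ := n₀ + 2 with hm
  have hm2 : 2 ≤ m := by omega
  have hm0 : (0:ℝ) < m := by positivity
  have h1m : (1:ℝ)/m < ε/2 := by
    have : (1:ℝ)/m ≤ 1/(n₀+1) := by
      apply one_div_le_one_div_of_le (by positivity)
      push_cast [hm]; linarith
    linarith
  set e := ε/4 with he
  have he0 : (0:ℝ) < e := by rw [he]; linarith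
  have hev : ∀ᶠ N : ℕ in atTop, ∀ k ∈ Finset.range (m-1),
      |(N:ℝ)⁻¹ * (∑ l ∈ Finset.range N,
        if Z l ω ≤ q m k then (1:ℝ) else 0) - F (q m k)| ≤ e ∧
      |(N:ℝ)⁻¹ * (∑ l ∈ Finset.range N,
        if Z l ω < q m k then (1:ℝ) else 0) - G (q m k)| ≤ e := by
    rw [Filter.eventually_all_finset]
    intro k _
    obtain ⟨N₁, hN₁⟩ := Metric.tendsto_atTop.1 (hω m k).1 e he0
    obtain ⟨N₂, hN₂⟩ := Metric.tendsto_atTop.1 (hω m k).2 e he0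
    rw [eventually_atTop]
    refine ⟨max N₁ N₂, fun N hN => ⟨?_, ?_⟩⟩
    · have := hN₁ N (le_trans (le_max_left _ _) hN)
      rw [Real.dist_eq] at this; exact this.le
    · have := hN₂ N (le_trans (le_max_right _ _) hN)
      rw [Real.dist_eq] at this; exact this.le
  filter_upwards [hev] with N hN
  intro x
  -- empirical distribution function facts for this ω, N
  set Fn : ℝ → ℝ := fun x => (N:ℝ)⁻¹ * (∑ l ∈ Finset.range N,
    if Z l ω ≤ x then (1:ℝ) else 0) with hFn
  set Gn : ℝ → ℝ := fun x => (N:ℝ)⁻¹ * (∑ l ∈ Finset.range N,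
    if Z l ω < x then (1:ℝ) else 0) with hGn
  have hNinv : (0:ℝ) ≤ (N:ℝ)⁻¹ := by positivity
  have hterm : ∀ (c₁ c₂ : Prop) [Decidable c₁] [Decidable c₂], (c₁ → c₂) →
      (if c₁ then (1:ℝ) else 0) ≤ (if c₂ then 1 else 0) := by
    intro c₁ c₂ _ _ h
    by_cases h1 : c₁
    · rw [if_pos h1, if_pos (h h1)]
    · rw [if_neg h1]; split_ifs <;> norm_num
  have hFnmono : Monotone Fn := by
    intro a b hab
    exact mul_le_mul_of_nonneg_left
      (Finset.sum_le_sum fun l _ => hterm _ _ (fun h => le_trans h hab)) hNinv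
  have hGnmono : Monotone Gn := by
    intro a b hab
    exact mul_le_mul_of_nonneg_left
      (Finset.sum_le_sum fun l _ => hterm _ _ (fun h => lt_of_lt_of_le h hab)) hNinv
  have hGnFn : ∀ x, Gn x ≤ Fn x := fun x =>
    mul_le_mul_of_nonneg_left
      (Finset.sum_le_sum fun l _ => hterm _ _ le_of_lt) hNinv
  have hcrossn : ∀ x y, x < y → Fn x ≤ Gn y := fun x y hxy =>
    mul_le_mul_of_nonneg_left
      (Finset.sum_le_sum fun l _ => hterm _ _ (fun h => lt_of_le_of_lt h hxy)) hNinv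
  have hFn0 : ∀ x, 0 ≤ Fn x := fun x =>
    mul_nonneg hNinv (Finset.sum_nonneg fun l _ => by split_ifs <;> norm_num)
  have hGn0 : ∀ x, 0 ≤ Gn x := fun x =>
    mul_nonneg hNinv (Finset.sum_nonneg fun l _ => by split_ifs <;> norm_num)
  have hsum1 : ∀ (f : ℕ → ℝ), (∀ l, f l ≤ 1) →
      (N:ℝ)⁻¹ * (∑ l ∈ Finset.range N, f l) ≤ 1 := by
    intro f hf
    rcases Nat.eq_zero_or_pos N with h | h
    · simp [h]
    · have hsum : (∑ l ∈ Finset.range N, f l) ≤ N := by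
        calc (∑ l ∈ Finset.range N, f l) ≤ ∑ _l ∈ Finset.range N, (1:ℝ) :=
              Finset.sum_le_sum fun l _ => hf l
          _ = N := by simp
      have hN0 : (0:ℝ) < N := by exact_mod_cast h
      calc (N:ℝ)⁻¹ * (∑ l ∈ Finset.range N, f l) ≤ (N:ℝ)⁻¹ * N :=
            mul_le_mul_of_nonneg_left hsum hNinv
        _ = 1 := inv_mul_cancel₀ hN0.ne'
  have hFn1 : ∀ x, Fn x ≤ 1 := fun x => hsum1 _ (fun l => by split_ifs <;> norm_num)
  have hGn1 : ∀ x, Gn x ≤ 1 := fun x => hsum1 _ (fun l => by split_ifs <;> norm_num)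
  have hF0 : ∀ x, 0 ≤ F x := fun x => ENNReal.toReal_nonneg
  have hG0 : ∀ x, 0 ≤ G x := fun x => ENNReal.toReal_nonneg
  have hF1 : ∀ x, F x ≤ 1 := fun x => hPle1 _
  have hG1 : ∀ x, G x ≤ 1 := fun x => hPle1 _
  have hsand := gc_sandwich F G Fn Gn m (q m) e hm2 hFmono hFnmono hGmono hGnmono
    hGF hGnFn hcross hcrossn hF0 hFn0 hG0 hGn0 hF1 hFn1 hG1 hGn1
    (fun k hk => (hqspec m k hm2 hk).1) (fun k hk => (hqspec m k hm2 hk).2)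
    (fun k hk => hN k (Finset.mem_range.2 hk))
  obtain ⟨hFx, hGx⟩ := hsand x
  exact ⟨lt_of_le_of_lt hFx (by linarith), lt_of_le_of_lt hGx (by linarith)⟩

private lemma inv_mul_sum_le_one (N : ℕ) (f : ℕ → ℝ) (hf : ∀ l, f l ≤ 1) :
    (N:ℝ)⁻¹ * (∑ l ∈ Finset.range N, f l) ≤ 1 := by
  rcases Nat.eq_zero_or_pos N with h | h
  · simp [h]
  · have hN0 : (0:ℝ) < N := by exact_mod_cast h
    have hsum : (∑ l ∈ Finset.range N, f l) ≤ N := by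
      calc (∑ l ∈ Finset.range N, f l) ≤ ∑ _l ∈ Finset.range N, (1:ℝ) :=
            Finset.sum_le_sum fun l _ => hf l
        _ = N := by simp
    calc (N:ℝ)⁻¹ * (∑ l ∈ Finset.range N, f l) ≤ (N:ℝ)⁻¹ * N :=
          mul_le_mul_of_nonneg_left hsum (by positivity)
      _ = 1 := inv_mul_cancel₀ hN0.ne'

private lemma prob_toReal_le_one (P : Measure Ω) [IsProbabilityMeasure P] (s : Set Ω) :
    (P s).toReal ≤ 1 := by
  have := ENNReal.toReal_mono (by simp : (1:ENNReal) ≠ ⊤) (prob_le_one (μ := P) (s := s))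
  simpa using this

end GCHelpers

/-- The sample sequence transformed by the (componentwise) empirical distributional
transform: the `k`-th transformed sample has components
`ᴺT(x_{i,j}^{(k)}, u_{i,j}^{(k)}; x_{i,j}^{(1)},…,x_{i,j}^{(N)})`. -/
noncomputable def empSample {Ω : Type*} {n : ℕ} {d : Fin n → ℕ}
    (X U : ℕ → Ω → ((i : Fin n) → Fin (d i) → ℝ)) (ω : Ω) (N : ℕ)
    (k : Fin N) (i : Fin n) (j : Fin (d i)) : ℝ :=
  (N : ℝ)⁻¹ * ∑ l ∈ Finset.range N,
    ((if X l ω i j < X (k : ℕ) ω i j then (1:ℝ) else 0)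
      + U (k : ℕ) ω i j * (if X l ω i j = X (k : ℕ) ω i j then (1:ℝ) else 0))

/-- The sample sequence transformed by the true (componentwise) distributional
transforms `T_{X_{i,j}}(x_{i,j}^{(k)}, u_{i,j}^{(k)})`, where `X 0` is a copy of the
underlying random vector. -/
noncomputable def trueSample {Ω : Type*} [MeasurableSpace Ω] (P : Measure Ω)
    {n : ℕ} {d : Fin n → ℕ}
    (X U : ℕ → Ω → ((i : Fin n) → Fin (d i) → ℝ)) (ω : Ω) (N : ℕ)
    (k : Fin N) (i : Fin n) (j : Fin (d i)) : ℝ :=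
  (P {ω' | X 0 ω' i j < X (k : ℕ) ω i j}).toReal
    + U (k : ℕ) ω i j * (P {ω' | X 0 ω' i j = X (k : ℕ) ω i j}).toReal

/-- Preservation of consistency: if the estimators `ᴺd` are uniformly
continuous on `([0,1]^{d_1+…+d_n})^N` uniformly in `N`, then for i.i.d. copies
`(X⁽ᵏ⁾,U⁽ᵏ⁾)` of `(X,U)` (with all `U_{i,j}` i.i.d. uniform on `[0,1]` independent
of `X`), `ᴺd(ᴺT(X^{[N]},U^{[N]})) − ᴺd(T_X(X^{[N]},U^{[N]})) → 0` almost surely. -/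
theorem preservation_of_consistency {Ω : Type*} [MeasurableSpace Ω]
    (P : Measure Ω) [IsProbabilityMeasure P] {n : ℕ} {d : Fin n → ℕ}
    (X U : ℕ → Ω → ((i : Fin n) → Fin (d i) → ℝ))
    (hXm : ∀ k, Measurable (X k)) (hUm : ∀ k, Measurable (U k))
    (hiid : iIndepFun (fun k ω => (X k ω, U k ω)) P)
    (hident : ∀ k, IdentDistrib (fun ω => (X k ω, U k ω)) (fun ω => (X 0 ω, U 0 ω)) P P)
    (hUunif : ∀ (i : Fin n) (j : Fin (d i)),
      Measure.map (fun ω => U 0 ω i j) P = volume.restrict (Icc (0:ℝ) 1))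
    (hUcomp : iIndepFun
      (fun (p : Σ i : Fin n, Fin (d i)) ω => U 0 ω p.1 p.2) P)
    (hXU : IndepFun (X 0) (U 0) P)
    (D : (N : ℕ) → (Fin N → ((i : Fin n) → Fin (d i) → ℝ)) → ℝ)
    (hD : ∀ ε > (0:ℝ), ∃ δ > (0:ℝ), ∀ (N : ℕ)
        (x y : Fin N → ((i : Fin n) → Fin (d i) → ℝ)),
        (∀ k i j, x k i j ∈ Icc (0:ℝ) 1) → (∀ k i j, y k i j ∈ Icc (0:ℝ) 1) →
        (∀ k, dist (x k) (y k) < δ) → |D N x - D N y| < ε) :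
    ∀ᵐ ω ∂P, Tendsto
      (fun N => D N (empSample X U ω N) - D N (trueSample P X U ω N))
      atTop (nhds 0) := by
  classical
  have hXmij : ∀ l (i : Fin n) (j : Fin (d i)), Measurable (fun ω => X l ω i j) :=
    fun l i j => (measurable_pi_apply j).comp ((measurable_pi_apply i).comp (hXm l))
  -- Glivenko-Cantelli for each coordinate
  have hGC : ∀ (i : Fin n) (j : Fin (d i)), ∀ᵐ ω ∂P, ∀ ε > (0:ℝ),
      ∀ᶠ N : ℕ in atTop, ∀ x : ℝ,
      |(N:ℝ)⁻¹ * (∑ l ∈ Finset.range N, if X l ω i j ≤ x then (1:ℝ) else 0)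
        - (P {ω' | X 0 ω' i j ≤ x}).toReal| < ε ∧
      |(N:ℝ)⁻¹ * (∑ l ∈ Finset.range N, if X l ω i j < x then (1:ℝ) else 0)
        - (P {ω' | X 0 ω' i j < x}).toReal| < ε := by
    intro i j
    have hφ : Measurable (fun p : (((i : Fin n) → Fin (d i) → ℝ)
        × ((i : Fin n) → Fin (d i) → ℝ)) => p.1 i j) :=
      (measurable_pi_apply j).comp ((measurable_pi_apply i).comp measurable_fst)
    exact glivenko_cantelli P (fun l ω => X l ω i j) (fun l => hXmij l i j)
      (fun l l' h => (hiid.indepFun h).comp hφ hφ)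
      (fun l => (hident l).comp hφ)
  have hGCall := ae_all_iff.2 fun i : Fin n => ae_all_iff.2 fun j : Fin (d i) => hGC i j
  -- U in [0,1] a.s.
  have hU0 : ∀ (i : Fin n) (j : Fin (d i)), ∀ᵐ ω ∂P, U 0 ω i j ∈ Icc (0:ℝ) 1 := by
    intro i j
    have hmeas : Measurable (fun ω => U 0 ω i j) :=
      (measurable_pi_apply j).comp ((measurable_pi_apply i).comp (hUm 0))
    rw [ae_iff]
    have hset : {ω | ¬ U 0 ω i j ∈ Icc (0:ℝ) 1}
        = (fun ω => U 0 ω i j) ⁻¹' (Icc (0:ℝ) 1)ᶜ := rfl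
    rw [hset, ← Measure.map_apply hmeas measurableSet_Icc.compl, hUunif i j,
      Measure.restrict_apply measurableSet_Icc.compl]
    simp
  have hUk : ∀ k (i : Fin n) (j : Fin (d i)), ∀ᵐ ω ∂P, U k ω i j ∈ Icc (0:ℝ) 1 := by
    intro k i j
    have hψ : Measurable (fun p : (((i : Fin n) → Fin (d i) → ℝ)
        × ((i : Fin n) → Fin (d i) → ℝ)) => p.2 i j) :=
      (measurable_pi_apply j).comp ((measurable_pi_apply i).comp measurable_snd)
    have hidk : IdentDistrib (fun ω => U k ω i j) (fun ω => U 0 ω i j) P P :=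
      (hident k).comp hψ
    exact hidk.symm.ae_snd (p := fun x => x ∈ Icc (0:ℝ) 1)
      (show MeasurableSet {x : ℝ | x ∈ Icc (0:ℝ) 1} from measurableSet_Icc) (hU0 i j)
  have hUall := ae_all_iff.2 fun k : ℕ => ae_all_iff.2 fun i : Fin n =>
    ae_all_iff.2 fun j : Fin (d i) => hUk k i j
  filter_upwards [hGCall, hUall] with ω hGCω hUω
  rw [NormedAddCommGroup.tendsto_nhds_zero]
  intro ε hε
  obtain ⟨δ, hδ0, hDδ⟩ := hD ε hε
  have hδ4 : (0:ℝ) < δ/4 := by linarith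
  have hev : ∀ᶠ N : ℕ in atTop, ∀ (i : Fin n) (j : Fin (d i)), ∀ x : ℝ,
      |(N:ℝ)⁻¹ * (∑ l ∈ Finset.range N, if X l ω i j ≤ x then (1:ℝ) else 0)
        - (P {ω' | X 0 ω' i j ≤ x}).toReal| < δ/4 ∧
      |(N:ℝ)⁻¹ * (∑ l ∈ Finset.range N, if X l ω i j < x then (1:ℝ) else 0)
        - (P {ω' | X 0 ω' i j < x}).toReal| < δ/4 :=
    eventually_all.2 fun i => eventually_all.2 fun j => hGCω i j (δ/4) hδ4
  filter_upwards [hev] with N hN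
  rw [Real.norm_eq_abs]
  -- decompositions
  have hPsplit : ∀ (i : Fin n) (j : Fin (d i)) (v : ℝ),
      (P {ω' | X 0 ω' i j = v}).toReal
        = (P {ω' | X 0 ω' i j ≤ v}).toReal - (P {ω' | X 0 ω' i j < v}).toReal := by
    intro i j v
    have hdisj : Disjoint {ω' | X 0 ω' i j < v} {ω' | X 0 ω' i j = v} := by
      rw [Set.disjoint_left]
      intro a ha hb
      exact absurd (Set.mem_setOf_eq ▸ hb) (ne_of_lt ha)
    have hmeas : MeasurableSet {ω' | X 0 ω' i j = v} :=
      hXmij 0 i j (measurableSet_singleton v)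
    have hunion : {ω' | X 0 ω' i j < v} ∪ {ω' | X 0 ω' i j = v}
        = {ω' | X 0 ω' i j ≤ v} := by
      ext a; simp [Set.mem_union, Set.mem_setOf_eq, le_iff_lt_or_eq]
    have hmu := measure_union (μ := P) hdisj hmeas
    rw [hunion] at hmu
    rw [hmu, ENNReal.toReal_add (measure_ne_top _ _) (measure_ne_top _ _)]
    ring
  apply hDδ N _ _ ?_ ?_ ?_
  · -- empSample in [0,1]
    intro k i j
    have hu := hUω (k:ℕ) i j
    unfold empSample
    constructor
    · apply mul_nonneg (by positivity)
      apply Finset.sum_nonneg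
      intro l _
      apply add_nonneg
      · split_ifs <;> norm_num
      · exact mul_nonneg hu.1 (by split_ifs <;> norm_num)
    · apply inv_mul_sum_le_one
      intro l
      rcases lt_trichotomy (X l ω i j) (X (k:ℕ) ω i j) with h | h | h
      · simp [h, ne_of_lt h]
      · simp only [h, lt_irrefl, if_false, if_true, zero_add, mul_one]
        exact hu.2
      · simp [asymm h, ne_of_gt h]
  · -- trueSample in [0,1]
    intro k i j
    have hu := hUω (k:ℕ) i j
    unfold trueSample
    constructor
    · exact add_nonneg ENNReal.toReal_nonneg
        (mul_nonneg hu.1 ENNReal.toReal_nonneg)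
    · have h1 : U (k:ℕ) ω i j * (P {ω' | X 0 ω' i j = X (k:ℕ) ω i j}).toReal
          ≤ (P {ω' | X 0 ω' i j = X (k:ℕ) ω i j}).toReal :=
        mul_le_of_le_one_left ENNReal.toReal_nonneg hu.2
      have h2 := hPsplit i j (X (k:ℕ) ω i j)
      have h3 := prob_toReal_le_one P {ω' | X 0 ω' i j ≤ X (k:ℕ) ω i j}
      linarith
  · -- distances small
    intro k
    rw [dist_pi_lt_iff hδ0]
    intro i
    rw [dist_pi_lt_iff hδ0]
    intro j
    rw [Real.dist_eq]
    obtain ⟨h1, h2⟩ := hN i j (X (k:ℕ) ω i j)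
    have hu := hUω (k:ℕ) i j
    set Fn := (N:ℝ)⁻¹ * (∑ l ∈ Finset.range N,
      if X l ω i j ≤ X (k:ℕ) ω i j then (1:ℝ) else 0) with hFn
    set Gn := (N:ℝ)⁻¹ * (∑ l ∈ Finset.range N,
      if X l ω i j < X (k:ℕ) ω i j then (1:ℝ) else 0) with hGn
    set Fv := (P {ω' | X 0 ω' i j ≤ X (k:ℕ) ω i j}).toReal with hFv
    set Gv := (P {ω' | X 0 ω' i j < X (k:ℕ) ω i j}).toReal with hGv
    set u := U (k:ℕ) ω i j with huu
    have hemp : empSample X U ω N k i j = Gn + u * (Fn - Gn) := by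
      unfold empSample
      rw [Finset.sum_add_distrib, ← Finset.mul_sum]
      have hsplit : (∑ l ∈ Finset.range N,
            if X l ω i j = X (k:ℕ) ω i j then (1:ℝ) else 0)
          = (∑ l ∈ Finset.range N, if X l ω i j ≤ X (k:ℕ) ω i j then (1:ℝ) else 0)
            - (∑ l ∈ Finset.range N,
              if X l ω i j < X (k:ℕ) ω i j then (1:ℝ) else 0) := by
        rw [← Finset.sum_sub_distrib]
        apply Finset.sum_congr rfl
        intro l _
        rcases lt_trichotomy (X l ω i j) (X (k:ℕ) ω i j) with h | h | h
        · simp [h, ne_of_lt h, le_of_lt h]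
        · simp [h, lt_irrefl]
        · simp [asymm h, ne_of_gt h, not_le.2 h]
      rw [hsplit, hFn, hGn]
      ring
    have htrue : trueSample P X U ω N k i j = Gv + u * (Fv - Gv) := by
      unfold trueSample
      rw [hPsplit i j (X (k:ℕ) ω i j)]
    rw [hemp, htrue]
    have harr : Gn + u * (Fn - Gn) - (Gv + u * (Fv - Gv))
        = (Gn - Gv) + u * ((Fn - Fv) - (Gn - Gv)) := by ring
    rw [harr]
    have habs : |u * ((Fn - Fv) - (Gn - Gv))| ≤ |(Fn - Fv) - (Gn - Gv)| := by
      rw [abs_mul]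
      exact mul_le_of_le_one_left (abs_nonneg _) (abs_le.2 ⟨by linarith [hu.1], hu.2⟩)
    calc |(Gn - Gv) + u * ((Fn - Fv) - (Gn - Gv))|
        ≤ |Gn - Gv| + |u * ((Fn - Fv) - (Gn - Gv))| := abs_add_le _ _
      _ ≤ |Gn - Gv| + |(Fn - Fv) - (Gn - Gv)| := by linarith
      _ ≤ |Gn - Gv| + (|Fn - Fv| + |Gn - Gv|) := by linarith [abs_sub (Fn - Fv) (Gn - Gv)]
      _ < δ := by linarith
end

section
/- Uniform equicontinuity of sample distance multivariance on transformed samples: Let ψ_i(x) := ∫ (1 − cos(x·t)) ρ_i(dt) for symmetric σ-finite measures ρ_i on ℝ^{d_i}∖{0} with ∫ min(1,|t_i|²) ρ_i(dt_i) < ∞ (so each ψ_i is continuous, hence uniformly continuous on [−1,1]^{d_i}). Then the family of sample distance multivariances ᴺM, N ∈ ℕ, restricted to samples with values in [0,1]^{d_1+…+d_n}, is uniformly continuous uniformly in N: for every ε > 0 there exists δ > 0 such that for all N ∈ ℕ and all samples x^{(1)},…,x^{(N)}, y^{(1)},…,y^{(N)} ∈ [0,1]^{d_1+…+d_n}, max_{1≤k≤N}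 |x^{(k)} − y^{(k)}| < δ implies |ᴺM(x^{(1)},…,x^{(N)}) − ᴺM(y^{(1)},…,y^{(N)})| < ε. -/
open MeasureTheory ProbabilityTheory Set Filter
open Topology
/-- Squared sample distance multivariance of the subfamily with indices in `I`:
`ᴺM² = (1/N²) ∑_{j,k} ∏_{i∈I} ᴺΨ_i(j,k)` with
`ᴺΨ_i(j,k) = −ψ_i(x_i^{(j)} − x_i^{(k)}) − (1/N²) ∑_{l,m} ψ_i(x_i^{(l)} − x_i^{(m)})
+ (1/N) ∑_l ψ_i(x_i^{(l)} − x_i^{(k)}) + (1/N) ∑_m ψ_i(x_i^{(j)} − x_i^{(m)})`. -/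
noncomputable def sampleMultivariance2 {n : ℕ} {d : Fin n → ℕ}
    (ψ : (i : Fin n) → (Fin (d i) → ℝ) → ℝ) (I : Finset (Fin n))
    {N : ℕ} (x : Fin N → ((i : Fin n) → Fin (d i) → ℝ)) : ℝ :=
  ((N : ℝ) ^ 2)⁻¹ * ∑ j : Fin N, ∑ k : Fin N, ∏ i ∈ I,
    (-(ψ i (x j i - x k i))
      - ((N : ℝ) ^ 2)⁻¹ * ∑ l : Fin N, ∑ m : Fin N, ψ i (x l i - x m i)
      + (N : ℝ)⁻¹ * ∑ l : Fin N, ψ i (x l i - x k i)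
      + (N : ℝ)⁻¹ * ∑ m : Fin N, ψ i (x j i - x m i))


lemma my_sqrt_add (x y : ℝ) (hx : 0 ≤ x) (hy : 0 ≤ y) :
    Real.sqrt (x + y) ≤ Real.sqrt x + Real.sqrt y := by
  have h1 := Real.sqrt_nonneg x
  have h2 := Real.sqrt_nonneg y
  have hs : x + y ≤ (Real.sqrt x + Real.sqrt y) ^ 2 := by
    have ex := Real.sq_sqrt hx
    have ey := Real.sq_sqrt hy
    nlinarith [mul_nonneg h1 h2]
  calc Real.sqrt (x + y) ≤ Real.sqrt ((Real.sqrt x + Real.sqrt y) ^ 2) := Real.sqrt_le_sqrt hs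
    _ = Real.sqrt x + Real.sqrt y := Real.sqrt_sq (by positivity)

lemma my_min_mul_min {x y : ℝ} (hx : 0 ≤ x) (hy : 0 ≤ y) :
    min 1 x * min 1 y ≤ min 1 (x * y) := by
  rcases le_total x 1 with h1 | h1 <;> rcases le_total y 1 with h2 | h2
  · rw [min_eq_right h1, min_eq_right h2, min_eq_right (by nlinarith)]
  · rw [min_eq_right h1, min_eq_left h2, mul_one]
    exact le_min h1 (by nlinarith)
  · rw [min_eq_left h1, min_eq_right h2, one_mul]
    exact le_min h2 (by nlinarith)
  · rw [min_eq_left h1, min_eq_left h2, min_eq_left (by nlinarith), one_mul]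

lemma my_cos_bound {a b P Q : ℝ} (hP : |a + b| / 2 ≤ P) (hQ : |a - b| / 2 ≤ Q) :
    |Real.cos a - Real.cos b| ≤ 2 * min 1 (P * Q) := by
  have hP0 : 0 ≤ P := le_trans (by positivity) hP
  have hQ0 : 0 ≤ Q := le_trans (by positivity) hQ
  rw [Real.cos_sub_cos]
  have e1 : |(a + b) / 2| = |a + b| / 2 := by rw [abs_div, abs_two]
  have e2 : |(a - b) / 2| = |a - b| / 2 := by rw [abs_div, abs_two]
  have h1 : |Real.sin ((a + b) / 2)| ≤ min 1 P :=
    le_min (Real.abs_sin_le_one _) ((Real.abs_sin_le_abs).trans (by rw [e1]; exact hP))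
  have h2 : |Real.sin ((a - b) / 2)| ≤ min 1 Q :=
    le_min (Real.abs_sin_le_one _) ((Real.abs_sin_le_abs).trans (by rw [e2]; exact hQ))
  have hmm := my_min_mul_min hP0 hQ0
  have habs : |(-2 : ℝ) * Real.sin ((a + b) / 2) * Real.sin ((a - b) / 2)|
      = 2 * (|Real.sin ((a + b) / 2)| * |Real.sin ((a - b) / 2)|) := by
    rw [abs_mul, abs_mul]; norm_num [mul_assoc]
  rw [habs]
  have : |Real.sin ((a + b) / 2)| * |Real.sin ((a - b) / 2)| ≤ min 1 P * min 1 Q := by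
    apply mul_le_mul h1 h2 (abs_nonneg _) (le_trans (abs_nonneg _) h1)
  linarith

lemma my_sqrt_abs_sub (a b : ℝ) : |Real.sqrt a - Real.sqrt b| ≤ Real.sqrt |a - b| := by
  wlog h : b ≤ a generalizing a b
  · rw [abs_sub_comm, abs_sub_comm a b]; exact this b a (le_of_not_ge h)
  rw [abs_of_nonneg (sub_nonneg.2 (Real.sqrt_le_sqrt h)), abs_of_nonneg (sub_nonneg.2 h),
    sub_le_iff_le_add]
  rcases le_or_gt 0 b with hb | hb
  · calc Real.sqrt a = Real.sqrt ((a - b) + b) := by ring_nf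
      _ ≤ Real.sqrt (a - b) + Real.sqrt b := my_sqrt_add _ _ (sub_nonneg.2 h) hb
  · rw [Real.sqrt_eq_zero_of_nonpos hb.le, add_zero]
    exact Real.sqrt_le_sqrt (by linarith)

lemma my_min_nonneg {c x : ℝ} (hc : 0 ≤ c) (hx : 0 ≤ x) : 0 ≤ min 1 (c * x) :=
  le_min zero_le_one (mul_nonneg hc hx)

lemma my_min_coeff {c x : ℝ} (hc : 0 ≤ c) (hx : 0 ≤ x) :
    min 1 (c * x) ≤ max 1 c * min 1 x := by
  have hm : c ≤ max 1 c := le_max_right _ _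
  have hm1 : (1:ℝ) ≤ max 1 c := le_max_left _ _
  rcases le_total x 1 with h1 | h1
  · rw [min_eq_right h1]
    rcases le_total (c * x) 1 with h2 | h2
    · rw [min_eq_right h2]; nlinarith
    · rw [min_eq_left h2]; nlinarith
  · rw [min_eq_left h1, mul_one]
    exact le_trans (min_le_left _ _) hm1

lemma my_cont_min {D : ℕ} (c : ℝ) :
    Continuous (fun t : Fin D → ℝ => min 1 (c * ‖t‖ ^ 2)) :=
  continuous_const.min (continuous_const.mul (continuous_norm.pow 2))

lemma my_integrable_min {D : ℕ} (μ : Measure (Fin D → ℝ))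
    (hmom : ∫⁻ t, ENNReal.ofReal (min 1 (‖t‖ ^ 2)) ∂μ < ⊤)
    (c : ℝ) (hc : 0 ≤ c) :
    Integrable (fun t : Fin D → ℝ => min 1 (c * ‖t‖ ^ 2)) μ := by
  have base : Integrable (fun t : Fin D → ℝ => min 1 (‖t‖ ^ 2)) μ := by
    refine ⟨Continuous.aestronglyMeasurable ?_, ?_⟩
    · simpa using my_cont_min (D := D) 1
    rw [hasFiniteIntegral_iff_ofReal (ae_of_all _ fun t => by positivity)]
    exact hmom
  refine (base.const_mul (max 1 c)).mono ((my_cont_min c).aestronglyMeasurable)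
    (ae_of_all _ fun t => ?_)
  rw [Real.norm_eq_abs, Real.norm_eq_abs, abs_of_nonneg (my_min_nonneg hc (by positivity)),
    abs_of_nonneg (by positivity : (0:ℝ) ≤ max 1 c * min 1 (‖t‖ ^ 2))]
  exact my_min_coeff hc (by positivity)

lemma my_tendsto_min {D : ℕ} (μ : Measure (Fin D → ℝ))
    (hmom : ∫⁻ t, ENNReal.ofReal (min 1 (‖t‖ ^ 2)) ∂μ < ⊤)
    (c : ℝ) (hc : 0 ≤ c) :
    Tendsto (fun δ : ℝ => ∫ t, min 1 (c * δ * ‖t‖ ^ 2) ∂μ) (𝓝[Ioc (0:ℝ) 1] 0) (𝓝 0) := by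
  have key : Tendsto (fun δ : ℝ => ∫ t, min 1 (c * δ * ‖t‖ ^ 2) ∂μ) (𝓝[Ioc (0:ℝ) 1] 0)
      (𝓝 (∫ t : Fin D → ℝ, (0:ℝ) ∂μ)) := by
    refine tendsto_integral_filter_of_dominated_convergence
      (fun t => min 1 (c * ‖t‖ ^ 2)) ?_ ?_ (my_integrable_min μ hmom c hc) ?_
    · exact Eventually.of_forall fun δ => (my_cont_min (c * δ)).aestronglyMeasurable
    · filter_upwards [self_mem_nhdsWithin] with δ hδ
      refine ae_of_all _ fun t => ?_
      rw [Real.norm_eq_abs, abs_of_nonneg (my_min_nonneg (mul_nonneg hc hδ.1.le) (by positivity))]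
      exact min_le_min le_rfl (by nlinarith [mul_nonneg (mul_nonneg hc (sq_nonneg ‖t‖)) (sub_nonneg.2 hδ.2)])
    · refine ae_of_all _ fun t => ?_
      have hcont : Continuous (fun δ : ℝ => min 1 (c * δ * ‖t‖ ^ 2)) :=
        continuous_const.min ((continuous_const.mul continuous_id).mul continuous_const)
      have h2 := hcont.tendsto 0
      have e : min 1 (c * 0 * ‖t‖ ^ 2) = 0 := by simp
      rw [e] at h2
      exact h2.mono_left nhdsWithin_le_nhds
  simpa using key

lemma my_sum_bound {D : ℕ} (w t : Fin D → ℝ) (M : ℝ) (hM : 0 ≤ M) (hw : ∀ j, |w j| ≤ M) :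
    |∑ j, w j * t j| ≤ (D : ℝ) * M * ‖t‖ := by
  calc |∑ j, w j * t j| ≤ ∑ j, |w j * t j| := Finset.abs_sum_le_sum_abs _ _
    _ ≤ ∑ _j : Fin D, M * ‖t‖ := Finset.sum_le_sum fun j _ => by
        rw [abs_mul]
        exact mul_le_mul (hw j) ((Real.norm_eq_abs (t j)) ▸ norm_le_pi_norm t j)
          (abs_nonneg _) hM
    _ = (D : ℝ) * M * ‖t‖ := by
        rw [Finset.sum_const, Finset.card_univ, Fintype.card_fin, nsmul_eq_mul]; ring


lemma my_psi_diff {D : ℕ} (μ : Measure (Fin D → ℝ))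
    (hmom : ∫⁻ t, ENNReal.ofReal (min 1 (‖t‖ ^ 2)) ∂μ < ⊤)
    (u v : Fin D → ℝ) (δ c : ℝ) (hδ : 0 ≤ δ)
    (hu : ∀ j, |u j| ≤ 1) (hv : ∀ j, |v j| ≤ 1) (huv : ∀ j, |u j - v j| ≤ δ)
    (hc : (D:ℝ)^2 * δ ≤ c) :
    |(∫ t, (1 - Real.cos (∑ j, u j * t j)) ∂μ) - ∫ t, (1 - Real.cos (∑ j, v j * t j)) ∂μ|
      ≤ 2 * ∫ t, min 1 (c * ‖t‖ ^ 2) ∂μ := by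
  have hc0 : 0 ≤ c := le_trans (by positivity) hc
  have hint : ∀ w : Fin D → ℝ, (∀ j, |w j| ≤ 1) →
      Integrable (fun t => 1 - Real.cos (∑ j, w j * t j)) μ := by
    intro w hw
    have hcont : Continuous fun t : Fin D → ℝ => 1 - Real.cos (∑ j, w j * t j) :=
      continuous_const.sub (Real.continuous_cos.comp
        (continuous_finset_sum _ fun j _ => continuous_const.mul (continuous_apply j)))
    refine ((my_integrable_min μ hmom ((D:ℝ)^2) (by positivity)).const_mul 2).mono
      hcont.aestronglyMeasurable (ae_of_all _ fun t => ?_)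
    have ha : |∑ j, w j * t j| ≤ (D:ℝ) * 1 * ‖t‖ := my_sum_bound w t 1 zero_le_one hw
    have hb : |Real.cos 0 - Real.cos (∑ j, w j * t j)|
        ≤ 2 * min 1 ((D:ℝ) * ‖t‖ * ((D:ℝ) * ‖t‖)) := by
      refine my_cos_bound ?_ ?_
      · calc |0 + ∑ j, w j * t j| / 2 ≤ |∑ j, w j * t j| := by
              rw [zero_add]; linarith [abs_nonneg (∑ j, w j * t j)]
          _ ≤ (D:ℝ) * ‖t‖ := by linarith
      · calc |0 - ∑ j, w j * t j| / 2 ≤ |∑ j, w j * t j| := by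
              rw [zero_sub, abs_neg]; linarith [abs_nonneg (∑ j, w j * t j)]
          _ ≤ (D:ℝ) * ‖t‖ := by linarith
    rw [Real.cos_zero] at hb
    have he : (D:ℝ) * ‖t‖ * ((D:ℝ) * ‖t‖) = (D:ℝ)^2 * ‖t‖^2 := by ring
    rw [he] at hb
    rw [Real.norm_eq_abs, Real.norm_eq_abs]
    exact hb.trans (le_abs_self _)
  have hIu := hint u hu
  have hIv := hint v hv
  rw [← integral_sub hIu hIv, ← integral_const_mul (2:ℝ) (fun t => min 1 (c * ‖t‖ ^ 2))]
  rw [← Real.norm_eq_abs]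
  refine (norm_integral_le_integral_norm _).trans ?_
  refine integral_mono (hIu.sub hIv).norm
    ((my_integrable_min μ hmom c hc0).const_mul 2) fun t => ?_
  rw [Real.norm_eq_abs]
  have he : (1 - Real.cos (∑ j, u j * t j)) - (1 - Real.cos (∑ j, v j * t j))
      = Real.cos (∑ j, v j * t j) - Real.cos (∑ j, u j * t j) := by ring
  rw [he]
  have hsub : (∑ j, v j * t j) - (∑ j, u j * t j) = ∑ j, (v j - u j) * t j := by
    rw [← Finset.sum_sub_distrib]; congr 1; funext j; ring
  have hQ : |(∑ j, v j * t j) - (∑ j, u j * t j)| ≤ (D:ℝ) * δ * ‖t‖ := by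
    rw [hsub]
    exact my_sum_bound _ t δ hδ fun j => by rw [abs_sub_comm]; exact huv j
  have hcb : |Real.cos (∑ j, v j * t j) - Real.cos (∑ j, u j * t j)|
      ≤ 2 * min 1 (((D:ℝ) * ‖t‖) * ((D:ℝ) * δ * ‖t‖)) := by
    refine my_cos_bound ?_ ?_
    · have h1 : |∑ j, v j * t j| ≤ (D:ℝ) * 1 * ‖t‖ := my_sum_bound v t 1 zero_le_one hv
      have h2 : |∑ j, u j * t j| ≤ (D:ℝ) * 1 * ‖t‖ := my_sum_bound u t 1 zero_le_one hu
      calc |(∑ j, v j * t j) + ∑ j, u j * t j| / 2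
          ≤ (|∑ j, v j * t j| + |∑ j, u j * t j|) / 2 := by
            have := abs_add_le (∑ j, v j * t j) (∑ j, u j * t j); linarith
        _ ≤ (D:ℝ) * ‖t‖ := by linarith
    · calc |(∑ j, v j * t j) - ∑ j, u j * t j| / 2 ≤ |(∑ j, v j * t j) - ∑ j, u j * t j| := by
            linarith [abs_nonneg ((∑ j, v j * t j) - ∑ j, u j * t j)]
        _ ≤ (D:ℝ) * δ * ‖t‖ := hQ
  refine hcb.trans ?_
  have : ((D:ℝ) * ‖t‖) * ((D:ℝ) * δ * ‖t‖) ≤ c * ‖t‖ ^ 2 := by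
    have h0 : (0:ℝ) ≤ ‖t‖ ^ 2 := by positivity
    nlinarith [mul_nonneg (sub_nonneg.2 hc) h0]
  have := min_le_min (le_refl (1:ℝ)) this
  linarith

lemma my_psi_bound {D : ℕ} (μ : Measure (Fin D → ℝ))
    (hmom : ∫⁻ t, ENNReal.ofReal (min 1 (‖t‖ ^ 2)) ∂μ < ⊤)
    (u : Fin D → ℝ) (hu : ∀ j, |u j| ≤ 1) :
    |∫ t, (1 - Real.cos (∑ j, u j * t j)) ∂μ| ≤ 2 * ∫ t, min 1 ((D:ℝ)^2 * ‖t‖ ^ 2) ∂μ := by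
  have h := my_psi_diff μ hmom u 0 1 ((D:ℝ)^2) zero_le_one hu (by simp)
    (by simpa using hu) (le_of_eq (mul_one _))
  simpa using h

lemma my_abs4 (a b c e : ℝ) : |(-a - b + c + e)| ≤ |a| + |b| + |c| + |e| := by
  have h1 := abs_add_le (-a - b + c) e
  have h2 := abs_add_le (-a - b) c
  have h3 : |(-a - b)| = |a + b| := by rw [show -a - b = -(a+b) by ring, abs_neg]
  have h4 := abs_add_le a b
  linarith

lemma my_prod_diff {α : Type*} [DecidableEq α] (I : Finset α) (f g : α → ℝ) (B : ℝ)
    (hB : 1 ≤ B) (hf : ∀ i ∈ I, |f i| ≤ B) (hg : ∀ i ∈ I, |g i| ≤ B) :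
    |∏ i ∈ I, f i - ∏ i ∈ I, g i| ≤ (∑ i ∈ I, |f i - g i|) * B ^ I.card := by
  have hB0 : (0:ℝ) ≤ B := zero_le_one.trans hB
  induction I using Finset.induction_on with
  | empty => simp
  | @insert a s ha ih =>
    have ihs := ih (fun i hi => hf i (Finset.mem_insert_of_mem hi))
      (fun i hi => hg i (Finset.mem_insert_of_mem hi))
    rw [Finset.prod_insert ha, Finset.prod_insert ha, Finset.sum_insert ha,
      Finset.card_insert_of_notMem ha]
    have hfa : |f a| ≤ B := hf a (Finset.mem_insert_self _ _)
    have hPg : |∏ i ∈ s, g i| ≤ B ^ s.card := by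
      rw [Finset.abs_prod]
      calc ∏ i ∈ s, |g i| ≤ ∏ _i ∈ s, B :=
            Finset.prod_le_prod (fun i _ => abs_nonneg _)
              (fun i hi => hg i (Finset.mem_insert_of_mem hi))
        _ = B ^ s.card := Finset.prod_const B
    have key : f a * ∏ i ∈ s, f i - g a * ∏ i ∈ s, g i
        = f a * (∏ i ∈ s, f i - ∏ i ∈ s, g i) + (f a - g a) * ∏ i ∈ s, g i := by ring
    have h1 : B ^ s.card ≤ B ^ (s.card + 1) := pow_le_pow_right₀ hB (Nat.le_succ _)
    have step1 : |f a * ∏ i ∈ s, f i - g a * ∏ i ∈ s, g i|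
        ≤ |f a| * |∏ i ∈ s, f i - ∏ i ∈ s, g i| + |f a - g a| * |∏ i ∈ s, g i| := by
      rw [key]
      refine (abs_add_le _ _).trans ?_
      rw [abs_mul, abs_mul]
    have t1 : |f a| * |∏ i ∈ s, f i - ∏ i ∈ s, g i|
        ≤ B * ((∑ i ∈ s, |f i - g i|) * B ^ s.card) :=
      mul_le_mul hfa ihs (abs_nonneg _) hB0
    have t2 : |f a - g a| * |∏ i ∈ s, g i| ≤ |f a - g a| * B ^ (s.card + 1) :=
      mul_le_mul_of_nonneg_left (hPg.trans h1) (abs_nonneg _)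
    have e1 : B * ((∑ i ∈ s, |f i - g i|) * B ^ s.card)
        = (∑ i ∈ s, |f i - g i|) * B ^ (s.card + 1) := by rw [pow_succ]; ring
    calc |f a * ∏ i ∈ s, f i - g a * ∏ i ∈ s, g i|
        ≤ B * ((∑ i ∈ s, |f i - g i|) * B ^ s.card) + |f a - g a| * B ^ (s.card + 1) := by
          linarith
      _ = (|f a - g a| + ∑ i ∈ s, |f i - g i|) * B ^ (s.card + 1) := by rw [e1]; ring

/-- Uniform equicontinuity of sample distance multivariance on
transformed samples: with `ψ_i(x) = ∫ (1 − cos(x·t)) ρ_i(dt)` for symmetric σ-finite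
measures `ρ_i` on `ℝ^{d_i}∖{0}` with `∫ min(1,|t|²) ρ_i(dt) < ∞`, the family of sample
distance multivariances `ᴺM`, `N ∈ ℕ`, restricted to samples with values in
`[0,1]^{d_1+…+d_n}`, is uniformly continuous uniformly in `N`. -/
theorem sampleMultivariance_uniformly_equicontinuous {n : ℕ} {d : Fin n → ℕ}
    (ρ : (i : Fin n) → Measure (Fin (d i) → ℝ)) [∀ i, SigmaFinite (ρ i)]
    (hsym : ∀ i, Measure.map (fun t => -t) (ρ i) = ρ i)
    (hzero : ∀ i, ρ i {0} = 0)
    (hmom : ∀ i, ∫⁻ t, ENNReal.ofReal (min 1 (‖t‖ ^ 2)) ∂(ρ i) < ⊤)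
    (ψ : (i : Fin n) → (Fin (d i) → ℝ) → ℝ)
    (hψ : ∀ i x, ψ i x = ∫ t, (1 - Real.cos (∑ j, x j * t j)) ∂(ρ i)) :
    ∀ ε > (0:ℝ), ∃ δ > (0:ℝ), ∀ (N : ℕ)
      (x y : Fin N → ((i : Fin n) → Fin (d i) → ℝ)),
      (∀ k i j, x k i j ∈ Icc (0:ℝ) 1) → (∀ k i j, y k i j ∈ Icc (0:ℝ) 1) →
      (∀ k, dist (x k) (y k) < δ) →
      |Real.sqrt (sampleMultivariance2 ψ Finset.univ x)
        - Real.sqrt (sampleMultivariance2 ψ Finset.univ y)| < ε := by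
  intro ε hε
  -- the uniform bound constants
  set B' : Fin n → ℝ := fun i => 2 * ∫ t, min 1 ((d i : ℝ)^2 * ‖t‖ ^ 2) ∂(ρ i) with hB'def
  have hB'0 : ∀ i, 0 ≤ B' i := fun i => by
    have : 0 ≤ ∫ t, min 1 ((d i : ℝ)^2 * ‖t‖ ^ 2) ∂(ρ i) :=
      integral_nonneg fun t => my_min_nonneg (by positivity) (by positivity)
    simp only [hB'def]; linarith
  set B : ℝ := 1 + ∑ i, 4 * B' i with hBdef
  have hB1 : 1 ≤ B := by
    have : 0 ≤ ∑ i, 4 * B' i := Finset.sum_nonneg fun i _ => by linarith [hB'0 i]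
    simp only [hBdef]; linarith
  have hB'le : ∀ i, 4 * B' i ≤ B := fun i => by
    have h1 : 4 * B' i ≤ ∑ j, 4 * B' j :=
      Finset.single_le_sum (f := fun j => 4 * B' j)
        (fun j _ => by show (0:ℝ) ≤ 4 * B' j; linarith [hB'0 j]) (Finset.mem_univ i)
    simp only [hBdef]; linarith
  -- the modulus of continuity
  set w : Fin n → ℝ → ℝ :=
    fun i δ => 2 * ∫ t, min 1 (2 * (d i : ℝ)^2 * δ * ‖t‖ ^ 2) ∂(ρ i) with hwdef
  set g : ℝ → ℝ := fun δ => (∑ i, 4 * w i δ) * B ^ n with hgdef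
  have hg : Tendsto g (𝓝[Ioc (0:ℝ) 1] 0) (𝓝 0) := by
    have hw : ∀ i : Fin n, Tendsto (fun δ => w i δ) (𝓝[Ioc (0:ℝ) 1] 0) (𝓝 0) := by
      intro i
      have h := (my_tendsto_min (ρ i) (hmom i) (2 * (d i : ℝ)^2) (by positivity)).const_mul 2
      simpa [hwdef] using h
    have hsum : Tendsto (fun δ => ∑ i, 4 * w i δ) (𝓝[Ioc (0:ℝ) 1] 0)
        (𝓝 (∑ _i : Fin n, (0:ℝ))) :=
      tendsto_finset_sum _ fun i _ => by simpa using (hw i).const_mul 4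
    simp only [Finset.sum_const, smul_zero] at hsum
    simpa [hgdef] using hsum.mul_const (B ^ n)
  have hev : ∀ᶠ δ in 𝓝[Ioc (0:ℝ) 1] 0, g δ < ε ^ 2 :=
    hg.eventually_lt_const (by positivity)
  rw [eventually_iff, Metric.mem_nhdsWithin_iff] at hev
  obtain ⟨r, hr, hball⟩ := hev
  set δ0 : ℝ := min (r / 2) 1 with hδ0def
  have hδ0pos : 0 < δ0 := lt_min (by linarith) one_pos
  have hδ0mem : δ0 ∈ Metric.ball (0:ℝ) r ∩ Ioc (0:ℝ) 1 := by
    constructor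
    · rw [Metric.mem_ball, Real.dist_eq, sub_zero, abs_of_pos hδ0pos]
      exact lt_of_le_of_lt (min_le_left _ _) (by linarith)
    · exact ⟨hδ0pos, min_le_right _ _⟩
  have hgδ0 : g δ0 < ε ^ 2 := hball hδ0mem
  refine ⟨δ0, hδ0pos, ?_⟩
  intro N x y hx hy hxy
  rcases Nat.eq_zero_or_pos N with hN | hN
  · subst hN
    simp only [sampleMultivariance2]
    simpa using hε
  have hNne : (N:ℝ) ≠ 0 := Nat.cast_ne_zero.2 (Nat.pos_iff_ne_zero.1 hN)
  -- averaging lemmas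
  have havg : ∀ (h : Fin N → ℝ) (C : ℝ), (∀ l, |h l| ≤ C) →
      |(N:ℝ)⁻¹ * ∑ l, h l| ≤ C := by
    intro h C hC
    have h1 : |∑ l, h l| ≤ (N:ℝ) * C := by
      refine (Finset.abs_sum_le_sum_abs _ _).trans ?_
      calc ∑ l, |h l| ≤ ∑ _l : Fin N, C := Finset.sum_le_sum fun l _ => hC l
        _ = (N:ℝ) * C := by
            rw [Finset.sum_const, Finset.card_univ, Fintype.card_fin, nsmul_eq_mul]
    rw [abs_mul, abs_inv, abs_of_nonneg (Nat.cast_nonneg N : (0:ℝ) ≤ (N:ℝ))]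
    calc (N:ℝ)⁻¹ * |∑ l, h l| ≤ (N:ℝ)⁻¹ * ((N:ℝ) * C) :=
          mul_le_mul_of_nonneg_left h1 (by positivity)
      _ = C := by field_simp
  have havg2 : ∀ (h : Fin N → Fin N → ℝ) (C : ℝ), (∀ l m, |h l m| ≤ C) →
      |((N:ℝ)^2)⁻¹ * ∑ l, ∑ m, h l m| ≤ C := by
    intro h C hC
    have h1 : |∑ l, ∑ m, h l m| ≤ (N:ℝ)^2 * C := by
      refine (Finset.abs_sum_le_sum_abs _ _).trans ?_
      have hinner : ∀ l, |∑ m, h l m| ≤ (N:ℝ) * C := by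
        intro l
        refine (Finset.abs_sum_le_sum_abs _ _).trans ?_
        calc ∑ m, |h l m| ≤ ∑ _m : Fin N, C := Finset.sum_le_sum fun m _ => hC l m
          _ = (N:ℝ) * C := by
              rw [Finset.sum_const, Finset.card_univ, Fintype.card_fin, nsmul_eq_mul]
      calc ∑ l, |∑ m, h l m| ≤ ∑ _l : Fin N, (N:ℝ) * C :=
            Finset.sum_le_sum fun l _ => hinner l
        _ = (N:ℝ)^2 * C := by
            rw [Finset.sum_const, Finset.card_univ, Fintype.card_fin, nsmul_eq_mul]; ring
    rw [abs_mul, abs_inv, abs_of_nonneg (by positivity : (0:ℝ) ≤ (N:ℝ)^2)]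
    calc ((N:ℝ)^2)⁻¹ * |∑ l, ∑ m, h l m| ≤ ((N:ℝ)^2)⁻¹ * ((N:ℝ)^2 * C) :=
          mul_le_mul_of_nonneg_left h1 (by positivity)
      _ = C := by field_simp
  -- coordinate bounds
  have habs : ∀ (z : Fin N → ((i : Fin n) → Fin (d i) → ℝ)),
      (∀ k i j, z k i j ∈ Icc (0:ℝ) 1) → ∀ l m i (j : Fin (d i)),
      |(z l i - z m i) j| ≤ 1 := by
    intro z hz l m i j
    have h1 := hz l i j
    have h2 := hz m i j
    rw [Pi.sub_apply]
    rw [abs_le]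
    exact ⟨by linarith [h1.1, h2.2], by linarith [h1.2, h2.1]⟩
  have hcoord : ∀ k i (j : Fin (d i)), |x k i j - y k i j| ≤ δ0 := by
    intro k i j
    have h1 : dist (x k i j) (y k i j) ≤ dist (x k i) (y k i) := dist_le_pi_dist _ _ j
    have h2 : dist (x k i) (y k i) ≤ dist (x k) (y k) := dist_le_pi_dist _ _ i
    rw [Real.dist_eq] at h1
    exact h1.trans (h2.trans (hxy k).le)
  have hdiff : ∀ l m i (j : Fin (d i)),
      |(x l i - x m i) j - (y l i - y m i) j| ≤ 2 * δ0 := by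
    intro l m i j
    have h1 := hcoord l i j
    have h2 := hcoord m i j
    rw [Pi.sub_apply, Pi.sub_apply]
    have e : x l i j - x m i j - (y l i j - y m i j)
        = (x l i j - y l i j) - (x m i j - y m i j) := by ring
    rw [e]
    calc |(x l i j - y l i j) - (x m i j - y m i j)|
        ≤ |x l i j - y l i j| + |x m i j - y m i j| := abs_sub _ _
      _ ≤ 2 * δ0 := by linarith
  -- ψ bounds
  have hψb : ∀ (z : Fin N → ((i : Fin n) → Fin (d i) → ℝ)),
      (∀ k i j, z k i j ∈ Icc (0:ℝ) 1) → ∀ l m i, |ψ i (z l i - z m i)| ≤ B' i := by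
    intro z hz l m i
    rw [hψ i _]
    exact my_psi_bound (ρ i) (hmom i) _ (habs z hz l m i)
  have hψd : ∀ l m i, |ψ i (x l i - x m i) - ψ i (y l i - y m i)| ≤ w i δ0 := by
    intro l m i
    rw [hψ i _, hψ i _]
    exact my_psi_diff (ρ i) (hmom i) _ _ (2 * δ0) (2 * (d i : ℝ)^2 * δ0) (by positivity)
      (habs x hx l m i) (habs y hy l m i) (hdiff l m i) (le_of_eq (by ring))
  -- the centered kernel entries
  set Fx : Fin N → Fin N → Fin n → ℝ := fun j k i =>
    -(ψ i (x j i - x k i))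
      - ((N:ℝ)^2)⁻¹ * ∑ l, ∑ m, ψ i (x l i - x m i)
      + (N:ℝ)⁻¹ * ∑ l, ψ i (x l i - x k i)
      + (N:ℝ)⁻¹ * ∑ m, ψ i (x j i - x m i) with hFxdef
  set Fy : Fin N → Fin N → Fin n → ℝ := fun j k i =>
    -(ψ i (y j i - y k i))
      - ((N:ℝ)^2)⁻¹ * ∑ l, ∑ m, ψ i (y l i - y m i)
      + (N:ℝ)⁻¹ * ∑ l, ψ i (y l i - y k i)
      + (N:ℝ)⁻¹ * ∑ m, ψ i (y j i - y m i) with hFydef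
  have hFbound : ∀ (z : Fin N → ((i : Fin n) → Fin (d i) → ℝ))
      (_hz : ∀ k i j, z k i j ∈ Icc (0:ℝ) 1) (j k : Fin N) (i : Fin n),
      |(-(ψ i (z j i - z k i))
        - ((N:ℝ)^2)⁻¹ * ∑ l, ∑ m, ψ i (z l i - z m i)
        + (N:ℝ)⁻¹ * ∑ l, ψ i (z l i - z k i)
        + (N:ℝ)⁻¹ * ∑ m, ψ i (z j i - z m i))| ≤ B := by
    intro z hz j k i
    have h1 : |ψ i (z j i - z k i)| ≤ B' i := hψb z hz j k i
    have h2 : |((N:ℝ)^2)⁻¹ * ∑ l, ∑ m, ψ i (z l i - z m i)| ≤ B' i :=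
      havg2 _ _ (fun l m => hψb z hz l m i)
    have h3 : |(N:ℝ)⁻¹ * ∑ l, ψ i (z l i - z k i)| ≤ B' i :=
      havg _ _ (fun l => hψb z hz l k i)
    have h4 : |(N:ℝ)⁻¹ * ∑ m, ψ i (z j i - z m i)| ≤ B' i :=
      havg _ _ (fun m => hψb z hz j m i)
    have h5 := my_abs4 (ψ i (z j i - z k i))
      (((N:ℝ)^2)⁻¹ * ∑ l, ∑ m, ψ i (z l i - z m i))
      ((N:ℝ)⁻¹ * ∑ l, ψ i (z l i - z k i))
      ((N:ℝ)⁻¹ * ∑ m, ψ i (z j i - z m i))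
    have h6 := hB'le i
    linarith
  have hFdiff : ∀ (j k : Fin N) (i : Fin n), |Fx j k i - Fy j k i| ≤ 4 * w i δ0 := by
    intro j k i
    have h1 : |ψ i (x j i - x k i) - ψ i (y j i - y k i)| ≤ w i δ0 := hψd j k i
    have h2 : |((N:ℝ)^2)⁻¹ * ∑ l, ∑ m, ψ i (x l i - x m i)
        - ((N:ℝ)^2)⁻¹ * ∑ l, ∑ m, ψ i (y l i - y m i)| ≤ w i δ0 := by
      rw [← mul_sub]
      simp only [← Finset.sum_sub_distrib]
      exact havg2 _ _ (fun l m => hψd l m i)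
    have h3 : |(N:ℝ)⁻¹ * ∑ l, ψ i (x l i - x k i)
        - (N:ℝ)⁻¹ * ∑ l, ψ i (y l i - y k i)| ≤ w i δ0 := by
      rw [← mul_sub]
      simp only [← Finset.sum_sub_distrib]
      exact havg _ _ (fun l => hψd l k i)
    have h4 : |(N:ℝ)⁻¹ * ∑ m, ψ i (x j i - x m i)
        - (N:ℝ)⁻¹ * ∑ m, ψ i (y j i - y m i)| ≤ w i δ0 := by
      rw [← mul_sub]
      simp only [← Finset.sum_sub_distrib]
      exact havg _ _ (fun m => hψd j m i)
    have e : Fx j k i - Fy j k i =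
        -(ψ i (x j i - x k i) - ψ i (y j i - y k i))
        - (((N:ℝ)^2)⁻¹ * ∑ l, ∑ m, ψ i (x l i - x m i)
            - ((N:ℝ)^2)⁻¹ * ∑ l, ∑ m, ψ i (y l i - y m i))
        + ((N:ℝ)⁻¹ * ∑ l, ψ i (x l i - x k i)
            - (N:ℝ)⁻¹ * ∑ l, ψ i (y l i - y k i))
        + ((N:ℝ)⁻¹ * ∑ m, ψ i (x j i - x m i)
            - (N:ℝ)⁻¹ * ∑ m, ψ i (y j i - y m i)) := by
      simp only [hFxdef, hFydef]; ring
    rw [e]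
    have h5 := my_abs4 (ψ i (x j i - x k i) - ψ i (y j i - y k i))
      (((N:ℝ)^2)⁻¹ * ∑ l, ∑ m, ψ i (x l i - x m i)
          - ((N:ℝ)^2)⁻¹ * ∑ l, ∑ m, ψ i (y l i - y m i))
      ((N:ℝ)⁻¹ * ∑ l, ψ i (x l i - x k i) - (N:ℝ)⁻¹ * ∑ l, ψ i (y l i - y k i))
      ((N:ℝ)⁻¹ * ∑ m, ψ i (x j i - x m i) - (N:ℝ)⁻¹ * ∑ m, ψ i (y j i - y m i))
    linarith
  have hB0 : (0:ℝ) ≤ B := zero_le_one.trans hB1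
  have hprod : ∀ j k : Fin N, |∏ i, Fx j k i - ∏ i, Fy j k i| ≤ g δ0 := by
    intro j k
    have h := my_prod_diff Finset.univ (Fx j k) (Fy j k) B hB1
      (fun i _ => hFbound x hx j k i) (fun i _ => hFbound y hy j k i)
    rw [Finset.card_univ, Fintype.card_fin] at h
    refine h.trans ?_
    rw [hgdef]
    refine mul_le_mul_of_nonneg_right ?_ (pow_nonneg hB0 n)
    exact Finset.sum_le_sum fun i _ => hFdiff j k i
  have hM : |sampleMultivariance2 ψ Finset.univ x
      - sampleMultivariance2 ψ Finset.univ y| ≤ g δ0 := by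
    have ex : sampleMultivariance2 ψ Finset.univ x
        = ((N:ℝ)^2)⁻¹ * ∑ j, ∑ k, ∏ i, Fx j k i := rfl
    have ey : sampleMultivariance2 ψ Finset.univ y
        = ((N:ℝ)^2)⁻¹ * ∑ j, ∑ k, ∏ i, Fy j k i := rfl
    rw [ex, ey, ← mul_sub]
    simp only [← Finset.sum_sub_distrib]
    exact havg2 _ _ hprod
  calc |Real.sqrt (sampleMultivariance2 ψ Finset.univ x)
      - Real.sqrt (sampleMultivariance2 ψ Finset.univ y)|
      ≤ Real.sqrt |sampleMultivariance2 ψ Finset.univ x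
          - sampleMultivariance2 ψ Finset.univ y| := my_sqrt_abs_sub _ _
    _ ≤ Real.sqrt (g δ0) := Real.sqrt_le_sqrt hM
    _ < ε := (Real.sqrt_lt' hε).2 hgδ0
end
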